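/- arXiv:math/0501099 — 8 statements merged into one kernel-verified Lean document; each statement's English description precedes it below -/
import Mathlib

section
/- Let (W,S) be a finite Coxeter system with set of reflections T and A ⊆ T. Then: (a) A itself is A-admissible; (b) a subset I ⊆ A is A-admissible if and only if A \ I is A-admissible; (c) {w ∈ W : D_A(w) = A} = {w₀} if and only if S ⊆ A, where w₀ is the longest element. -/
set_option linter.unusedSectionVars false

namespace CoxAdmissible

open CoxeterSystem

variable {B W : Type*} [Group W] {M : CoxeterMatrix B} (cs : CoxeterSystem M W)

open scoped Classical in
noncomputable def chi (t u : W) : ℤˣ := if t = u then -1 else 1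

lemma chi_mul_self (t u : W) : chi t u * chi t u = 1 := by
  unfold chi; split <;> simp

lemma chi_congr {t u t' u' : W} (h : (t = u) ↔ (t' = u')) : chi t u = chi t' u' := by
  unfold chi
  by_cases hc : t' = u'
  · rw [if_pos (h.mpr hc), if_pos hc]
  · rw [if_neg (fun hh => hc (h.mp hh)), if_neg hc]

lemma chi_eq_one_of_ne {t u : W} (h : t ≠ u) : chi t u = 1 := by
  unfold chi; rw [if_neg h]

lemma conj_eq_iff {a b : W} (hab : a * b = 1) (hba : b * a = 1) (t x : W) :
    a * t * b = x ↔ t = b * x * a := by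
  have key : ∀ z : W, b * (a * z * b) * a = z := by
    intro z
    calc b * (a * z * b) * a = (b * a) * z * (b * a) := by simp only [mul_assoc]
    _ = z := by rw [hba]; simp
  constructor
  · rintro rfl; exact (key t).symm
  · rintro rfl
    calc a * (b * x * a) * b = (a * b) * x * (a * b) := by simp only [mul_assoc]
    _ = x := by rw [hab]; simp

noncomputable def fAux (i : B) : W × ℤˣ → W × ℤˣ :=
  fun x => (cs.simple i * x.1 * cs.simple i, chi x.1 (cs.simple i) * x.2)

lemma fAux_invol (i : B) : Function.Involutive (fAux cs i) := by
  rintro ⟨t, ε⟩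
  show (cs.simple i * (cs.simple i * t * cs.simple i) * cs.simple i,
      chi (cs.simple i * t * cs.simple i) (cs.simple i) * (chi t (cs.simple i) * ε)) = (t, ε)
  have hss := cs.simple_mul_simple_self i
  have h1 : cs.simple i * (cs.simple i * t * cs.simple i) * cs.simple i = t := by
    calc cs.simple i * (cs.simple i * t * cs.simple i) * cs.simple i
        = (cs.simple i * cs.simple i) * t * (cs.simple i * cs.simple i) := by
          simp only [mul_assoc]
    _ = t := by rw [hss]; simp
  have h2 : chi (cs.simple i * t * cs.simple i) (cs.simple i) = chi t (cs.simple i) := by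
    apply chi_congr
    rw [conj_eq_iff hss hss]
    constructor
    · rintro rfl
      calc cs.simple i * cs.simple i * cs.simple i
          = (cs.simple i * cs.simple i) * cs.simple i := rfl
      _ = cs.simple i := by rw [hss]; simp
    · rintro rfl
      rw [hss]; simp
  rw [h1, h2, ← mul_assoc, chi_mul_self, one_mul]

noncomputable def fPerm (i : B) : Equiv.Perm (W × ℤˣ) :=
  Function.Involutive.toPerm _ (fAux_invol cs i)

lemma fPerm_apply (i : B) (x : W × ℤˣ) :
    fPerm cs i x = (cs.simple i * x.1 * cs.simple i, chi x.1 (cs.simple i) * x.2) := rfl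

lemma prod_pair_eq {G : Type*} [CommMonoid G] (v : ℕ → G) (m : ℕ) :
    ∏ l ∈ Finset.range m, (v (2*l+1) * v (2*l)) = ∏ d ∈ Finset.range (2*m), v d := by
  induction m with
  | zero => simp
  | succ m ih =>
    rw [Finset.prod_range_succ, ih, show 2*(m+1) = (2*m+1)+1 by ring,
      Finset.prod_range_succ, Finset.prod_range_succ,
      mul_comm (v (2*m+1)) (v (2*m)), ← mul_assoc]

lemma fPerm_liftable : M.IsLiftable (fun i => fPerm cs i) := by
  intro i j
  dsimp only
  have hssi := cs.simple_mul_simple_self i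
  have hssj := cs.simple_mul_simple_self j
  have hp : (cs.simple i * cs.simple j) ^ M i j = 1 := cs.simple_mul_simple_pow i j
  set p : W := cs.simple i * cs.simple j with hpdef
  set m : ℕ := M i j with hmdef
  have hpinv : p⁻¹ = cs.simple j * cs.simple i := by
    rw [hpdef, mul_inv_rev, cs.inv_simple, cs.inv_simple]
  have hqm : (p⁻¹) ^ m = 1 := by rw [inv_pow, hp, inv_one]
  have hcancel : ∀ l : ℕ, p ^ l * (p⁻¹) ^ l = 1 := by
    intro l; rw [inv_pow, mul_inv_cancel]
  have hcancel' : ∀ l : ℕ, (p⁻¹) ^ l * p ^ l = 1 := by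
    intro l; rw [inv_pow, inv_mul_cancel]
  -- commuting s j past powers of p
  have hcomm : ∀ l : ℕ, cs.simple j * p ^ l = (p⁻¹) ^ l * cs.simple j := by
    intro l
    induction l with
    | zero => simp
    | succ l ih =>
      have hstep : cs.simple j * p = p⁻¹ * cs.simple j := by
        rw [hpinv, hpdef, mul_assoc]
      calc cs.simple j * p ^ (l+1) = (cs.simple j * p ^ l) * p := by
            rw [pow_succ, mul_assoc]
      _ = (p⁻¹) ^ l * (cs.simple j * p) := by rw [ih, mul_assoc]
      _ = (p⁻¹) ^ l * (p⁻¹ * cs.simple j) := by rw [hstep]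
      _ = (p⁻¹) ^ (l+1) * cs.simple j := by rw [pow_succ, mul_assoc]
  -- single step of g = fPerm i * fPerm j
  have hg : ∀ x : W × ℤˣ, (fPerm cs i * fPerm cs j) x =
      (p * x.1 * p⁻¹, (chi (cs.simple j * x.1 * cs.simple j) (cs.simple i) *
        chi x.1 (cs.simple j)) * x.2) := by
    rintro ⟨t, ε⟩
    rw [Equiv.Perm.mul_apply, fPerm_apply, fPerm_apply]
    dsimp only
    congr 1
    · rw [hpdef, hpinv]; simp only [mul_assoc]
    · rw [← mul_assoc]
  -- iterate
  have hgk : ∀ (k : ℕ) (x : W × ℤˣ), ((fPerm cs i * fPerm cs j) ^ k) x =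
      (p ^ k * x.1 * (p⁻¹) ^ k,
        (∏ l ∈ Finset.range k, (chi (cs.simple j * (p ^ l * x.1 * (p⁻¹) ^ l) * cs.simple j)
          (cs.simple i) * chi (p ^ l * x.1 * (p⁻¹) ^ l) (cs.simple j))) * x.2) := by
    intro k
    induction k with
    | zero => rintro ⟨t, ε⟩; simp
    | succ k ih =>
      rintro ⟨t, ε⟩
      rw [pow_succ', Equiv.Perm.mul_apply, ih ⟨t, ε⟩, hg]
      dsimp only
      congr 1
      · calc p * (p ^ k * t * (p⁻¹) ^ k) * p⁻¹
            = (p * p ^ k) * t * ((p⁻¹) ^ k * p⁻¹) := by simp only [mul_assoc]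
        _ = p ^ (k+1) * t * (p⁻¹) ^ (k+1) := by rw [← pow_succ', ← pow_succ]
      · rw [Finset.prod_range_succ]
        generalize (∏ l ∈ Finset.range k, (chi (cs.simple j * (p ^ l * t * (p⁻¹) ^ l) *
            cs.simple j) (cs.simple i) * chi (p ^ l * t * (p⁻¹) ^ l) (cs.simple j))) = P
        generalize (chi (cs.simple j * (p ^ k * t * (p⁻¹) ^ k) * cs.simple j) (cs.simple i) *
            chi (p ^ k * t * (p⁻¹) ^ k) (cs.simple j)) = c
        rw [mul_comm P c, mul_assoc]
  -- conclude
  apply Equiv.ext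
  rintro ⟨t, ε⟩
  rw [hgk m ⟨t, ε⟩, Equiv.Perm.one_apply]
  rw [hp, hqm]
  simp only [one_mul, mul_one]
  congr 1
  -- remains: the product is 1
  have hfac : ∀ l : ℕ, chi (cs.simple j * (p ^ l * t * (p⁻¹) ^ l) * cs.simple j) (cs.simple i) *
      chi (p ^ l * t * (p⁻¹) ^ l) (cs.simple j) =
      chi t ((p⁻¹) ^ (2*l+1) * cs.simple j) * chi t ((p⁻¹) ^ (2*l) * cs.simple j) := by
    intro l
    congr 1
    · apply chi_congr
      rw [conj_eq_iff hssj hssj, conj_eq_iff (hcancel l) (hcancel' l)]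
      have : (p⁻¹) ^ l * (cs.simple j * (cs.simple i * cs.simple j)) * p ^ l
          = (p⁻¹) ^ (2*l+1) * cs.simple j := by
        calc (p⁻¹) ^ l * (cs.simple j * (cs.simple i * cs.simple j)) * p ^ l
            = (p⁻¹) ^ l * ((cs.simple j * cs.simple i) * (cs.simple j * p ^ l)) := by
              simp only [mul_assoc]
        _ = (p⁻¹) ^ l * (p⁻¹ * ((p⁻¹) ^ l * cs.simple j)) := by rw [hcomm l, hpinv]
        _ = ((p⁻¹) ^ l * p⁻¹ * (p⁻¹) ^ l) * cs.simple j := by simp only [mul_assoc]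
        _ = (p⁻¹) ^ (2*l+1) * cs.simple j := by
              rw [← pow_succ, ← pow_add]
              congr 2
              omega
      rw [← this]
      constructor
      · intro h; rw [h]; simp only [mul_assoc]
      · intro h; rw [h]; simp only [mul_assoc]
    · apply chi_congr
      rw [conj_eq_iff (hcancel l) (hcancel' l)]
      have : (p⁻¹) ^ l * cs.simple j * p ^ l = (p⁻¹) ^ (2*l) * cs.simple j := by
        calc (p⁻¹) ^ l * cs.simple j * p ^ l = (p⁻¹) ^ l * (cs.simple j * p ^ l) := by
              rw [mul_assoc]
        _ = (p⁻¹) ^ l * ((p⁻¹) ^ l * cs.simple j) := by rw [hcomm l]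
        _ = ((p⁻¹) ^ l * (p⁻¹) ^ l) * cs.simple j := by rw [mul_assoc]
        _ = (p⁻¹) ^ (2*l) * cs.simple j := by rw [← pow_add]; congr 2; omega
      rw [this]
  calc (∏ l ∈ Finset.range m, (chi (cs.simple j * (p ^ l * t * (p⁻¹) ^ l) * cs.simple j)
          (cs.simple i) * chi (p ^ l * t * (p⁻¹) ^ l) (cs.simple j))) * ε
      = (∏ l ∈ Finset.range m, (chi t ((p⁻¹) ^ (2*l+1) * cs.simple j) *
          chi t ((p⁻¹) ^ (2*l) * cs.simple j))) * ε := by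
        rw [Finset.prod_congr rfl (fun l _ => hfac l)]
  _ = (∏ d ∈ Finset.range (2*m), chi t ((p⁻¹) ^ d * cs.simple j)) * ε := by
        rw [prod_pair_eq (fun d => chi t ((p⁻¹) ^ d * cs.simple j)) m]
  _ = ((∏ d ∈ Finset.range m, chi t ((p⁻¹) ^ d * cs.simple j)) *
        ∏ d ∈ Finset.range m, chi t ((p⁻¹) ^ (m + d) * cs.simple j)) * ε := by
        rw [two_mul, Finset.prod_range_add]
  _ = ((∏ d ∈ Finset.range m, chi t ((p⁻¹) ^ d * cs.simple j)) *
        ∏ d ∈ Finset.range m, chi t ((p⁻¹) ^ d * cs.simple j)) * ε := by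
        congr 2
        refine Finset.prod_congr rfl (fun d _ => ?_)
        congr 2
        rw [pow_add, hqm, one_mul]
  _ = ε := by
        rw [← Finset.prod_mul_distrib]
        rw [Finset.prod_congr rfl (fun d _ => chi_mul_self t ((p⁻¹) ^ d * cs.simple j))]
        simp
  
noncomputable def phi : W →* Equiv.Perm (W × ℤˣ) :=
  cs.lift ⟨fun i => fPerm cs i, fPerm_liftable cs⟩

lemma phi_simple (i : B) : phi cs (cs.simple i) = fPerm cs i :=
  cs.lift_apply_simple (fPerm_liftable cs) i

noncomputable def eta (w t : W) : ℤˣ := (phi cs w (t, 1)).2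

lemma phi_apply (w : W) : ∀ (t : W) (ε : ℤˣ),
    phi cs w (t, ε) = (w * t * w⁻¹, eta cs w t * ε) := by
  induction w using cs.simple_induction_left with
  | one =>
    intro t ε
    simp [eta, map_one]
  | mul_simple_left w' i ih =>
    intro t ε
    have hs : ∀ δ : ℤˣ, phi cs (cs.simple i * w') (t, δ) =
        (cs.simple i * (w' * t * w'⁻¹) * cs.simple i,
          chi (w' * t * w'⁻¹) (cs.simple i) * (eta cs w' t * δ)) := by
      intro δ
      rw [map_mul, Equiv.Perm.mul_apply, phi_simple, ih t δ, fPerm_apply]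
    rw [hs ε]
    have heta : eta cs (cs.simple i * w') t =
        chi (w' * t * w'⁻¹) (cs.simple i) * (eta cs w' t * 1) := by
      rw [eta, hs 1]
    rw [heta]
    congr 1
    · rw [mul_inv_rev, cs.inv_simple]
      simp only [mul_assoc]
    · simp only [mul_one, mul_assoc]

lemma eta_mul (u v t : W) : eta cs (u * v) t = eta cs v t * eta cs u (v * t * v⁻¹) := by
  have h : phi cs (u * v) (t, 1) = phi cs u (phi cs v (t, 1)) := by
    rw [map_mul, Equiv.Perm.mul_apply]
  rw [phi_apply cs (u * v) t 1, phi_apply cs v t 1, phi_apply cs u (v * t * v⁻¹) (eta cs v t * 1)] at h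
  have h2 := congrArg Prod.snd h
  simp only [mul_one] at h2
  rw [h2, mul_comm]

lemma eta_simple (i : B) (t : W) : eta cs (cs.simple i) t = chi t (cs.simple i) := by
  rw [eta, phi_simple, fPerm_apply]
  simp

lemma eta_one (t : W) : eta cs 1 t = 1 := by
  simp [eta, map_one]

lemma eta_eq_one_of_not_mem (ω : List B) (t : W) (h : t ∉ cs.rightInvSeq ω) :
    eta cs (cs.wordProd ω) t = 1 := by
  induction ω with
  | nil => simpa using eta_one cs t
  | cons i ω ih =>
    rw [CoxeterSystem.rightInvSeq] at h
    simp only [List.mem_cons, not_or] at h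
    obtain ⟨h1, h2⟩ := h
    rw [cs.wordProd_cons, eta_mul cs (cs.simple i) (cs.wordProd ω) t, ih h2, one_mul,
      eta_simple]
    apply chi_eq_one_of_ne
    intro hc
    apply h1
    rw [← hc]
    group

lemma length_lt_of_eta_neg {w t : W} (h : eta cs w t = -1) :
    cs.length (w * t) < cs.length w := by
  obtain ⟨ω, hred, rfl⟩ := cs.exists_reduced_word' w
  by_cases hmem : t ∈ cs.rightInvSeq ω
  · exact (cs.isRightInversion_of_mem_rightInvSeq hred hmem).2
  · rw [eta_eq_one_of_not_mem cs ω t hmem] at h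
    exact absurd h (by decide)

lemma eta_self {t : W} (ht : cs.IsReflection t) : eta cs t t = -1 := by
  obtain ⟨w, i, rfl⟩ := ht
  have e0 : w * cs.simple i * w⁻¹ = w * (cs.simple i * w⁻¹) := by rw [mul_assoc]
  have e1 : (cs.simple i * w⁻¹) * (w * cs.simple i * w⁻¹) * (cs.simple i * w⁻¹)⁻¹
      = cs.simple i := by group
  have e2 : w⁻¹ * (w * cs.simple i * w⁻¹) * w⁻¹⁻¹ = cs.simple i := by group
  have hid : eta cs w⁻¹ (w * cs.simple i * w⁻¹) * eta cs w (cs.simple i) = 1 := by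
    have := eta_mul cs w w⁻¹ (w * cs.simple i * w⁻¹)
    rw [e2, mul_inv_cancel, eta_one] at this
    exact this.symm
  have hA := eta_mul cs w (cs.simple i * w⁻¹) (w * cs.simple i * w⁻¹)
  rw [e1] at hA
  have hB := eta_mul cs (cs.simple i) w⁻¹ (w * cs.simple i * w⁻¹)
  rw [e2] at hB
  rw [← e0] at hA
  rw [hB] at hA
  have hchi : eta cs (cs.simple i) (cs.simple i) = -1 := by
    rw [eta_simple]; unfold chi; rw [if_pos rfl]
  rw [hchi] at hA
  rw [hA, mul_comm (eta cs w⁻¹ (w * cs.simple i * w⁻¹)) (-1 : ℤˣ), mul_assoc, hid, mul_one]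

lemma isRightInversion_iff_eta {w t : W} (ht : cs.IsReflection t) :
    cs.length (w * t) < cs.length w ↔ eta cs w t = -1 := by
  constructor
  · intro hlt
    rcases Int.units_eq_one_or (eta cs w t) with h | h
    · exfalso
      have h2 : eta cs (w * t) t = -1 := by
        rw [eta_mul cs w t t, eta_self cs ht,
          show t * t * t⁻¹ = t by group, h, mul_one]
      have h3 := length_lt_of_eta_neg cs h2
      rw [mul_assoc, ht.mul_self, mul_one] at h3
      omega
    · exact h
  · exact length_lt_of_eta_neg cs

lemma eta_eq_one_of_not_lt {w t : W} (ht : cs.IsReflection t)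
    (h : ¬ cs.length (w * t) < cs.length w) : eta cs w t = 1 := by
  rcases Int.units_eq_one_or (eta cs w t) with h1 | h1
  · exact h1
  · exact absurd ((isRightInversion_iff_eta cs ht).mpr h1) h

/-- The key length formula for a maximal-length element. -/
lemma length_mul_add_length (w₀ : W) (hw₀ : ∀ w : W, cs.length w ≤ cs.length w₀)
    (u : W) : cs.length (w₀ * u) + cs.length u = cs.length w₀ := by
  have main : ∀ n : ℕ, ∀ u : W, cs.length u = n →
      cs.length (w₀ * u) + cs.length u = cs.length w₀ := by
    intro n
    induction n using Nat.strong_induction_on with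
    | _ n ih =>
      intro u hn
      rcases eq_or_ne u 1 with rfl | hne
      · simp
      · obtain ⟨i, hi⟩ := cs.exists_rightDescent_of_ne_one hne
        unfold CoxeterSystem.IsRightDescent at hi
        have hlu : cs.length (u * cs.simple i) + 1 = cs.length u := by
          rcases cs.length_mul_simple u i with h | h
          · omega
          · exact h
        set u' := u * cs.simple i with hu'
        have hu'si : u' * cs.simple i = u := cs.simple_mul_simple_cancel_right i
        have hrec : cs.length (w₀ * u') + cs.length u' = cs.length w₀ :=
          ih (cs.length u') (by omega) u' rfl
        have h1 : eta cs u' (cs.simple i) = 1 := by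
          apply eta_eq_one_of_not_lt cs (cs.isReflection_simple i)
          rw [hu'si]
          omega
        have hrefl : cs.IsReflection (u' * cs.simple i * u'⁻¹) :=
          (cs.isReflection_simple i).conj u'
        have h2 : eta cs w₀ (u' * cs.simple i * u'⁻¹) = -1 := by
          apply (isRightInversion_iff_eta cs hrefl).mp
          exact lt_of_le_of_ne (hw₀ _) (hrefl.length_mul_left_ne w₀)
        have h3 : eta cs (w₀ * u') (cs.simple i) = -1 := by
          rw [eta_mul cs w₀ u' (cs.simple i), h1, h2, one_mul]
        have h4 : cs.length (w₀ * u' * cs.simple i) < cs.length (w₀ * u') :=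
          (isRightInversion_iff_eta cs (cs.isReflection_simple i)).mpr h3
        have h5 : w₀ * u' * cs.simple i = w₀ * u := by rw [mul_assoc, hu'si]
        rw [h5] at h4
        have h6 : cs.length (w₀ * u) + 1 = cs.length (w₀ * u') := by
          rcases cs.length_mul_simple (w₀ * u') i with h | h
          · rw [h5] at h; omega
          · rw [h5] at h; omega
        omega
  exact main (cs.length u) u rfl

/-- Uniqueness: an element all of whose simple reflections are right descents equals `w₀`. -/
lemma eq_longest (w₀ : W) (hw₀ : ∀ w : W, cs.length w ≤ cs.length w₀)
    {w : W} (hdesc : ∀ i : B, cs.length (w * cs.simple i) < cs.length w) : w = w₀ := by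
  have hwu : w₀ * (w₀⁻¹ * w) = w := by group
  rcases eq_or_ne (w₀⁻¹ * w) 1 with h1 | hne
  · rw [h1, mul_one] at hwu
    exact hwu.symm
  · exfalso
    obtain ⟨i, hi⟩ := cs.exists_rightDescent_of_ne_one hne
    unfold CoxeterSystem.IsRightDescent at hi
    have hLu := length_mul_add_length cs w₀ hw₀ (w₀⁻¹ * w)
    have hLu' := length_mul_add_length cs w₀ hw₀ ((w₀⁻¹ * w) * cs.simple i)
    have hlu : cs.length ((w₀⁻¹ * w) * cs.simple i) + 1 = cs.length (w₀⁻¹ * w) := by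
      rcases cs.length_mul_simple (w₀⁻¹ * w) i with h | h
      · omega
      · exact h
    have heq : w₀ * ((w₀⁻¹ * w) * cs.simple i) = w * cs.simple i := by group
    rw [heq] at hLu'
    rw [hwu] at hLu
    have := hdesc i
    omega

/-- The descent set of `w₀ * w` within `A` is the complement in `A` of that of `w`. -/
lemma descent_compl (A : Set W) (hA : ∀ t ∈ A, cs.IsReflection t)
    (w₀ : W) (hw₀ : ∀ w : W, cs.length w ≤ cs.length w₀) (w : W) :
    {t ∈ A | cs.length (w₀ * w * t) < cs.length (w₀ * w)} =
      A \ {t ∈ A | cs.length (w * t) < cs.length w} := by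
  ext t
  simp only [Set.mem_setOf_eq, Set.mem_diff]
  constructor
  · rintro ⟨htA, hlt⟩
    refine ⟨htA, ?_⟩
    rintro ⟨-, hlt2⟩
    have h1 := length_mul_add_length cs w₀ hw₀ w
    have h2 := length_mul_add_length cs w₀ hw₀ (w * t)
    rw [← mul_assoc] at h2
    omega
  · rintro ⟨htA, hnot⟩
    refine ⟨htA, ?_⟩
    have h1 := length_mul_add_length cs w₀ hw₀ w
    have h2 := length_mul_add_length cs w₀ hw₀ (w * t)
    rw [← mul_assoc] at h2
    have hne := (hA t htA).length_mul_left_ne w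
    have hno : ¬ cs.length (w * t) < cs.length w := fun hc => hnot ⟨htA, hc⟩
    omega

end CoxAdmissible

/-- In a finite Coxeter group: (a) `A` is `A`-admissible;
(b) `I ⊆ A` is `A`-admissible iff `A \ I` is; (c) `{w : D_A(w) = A} = {w₀}` iff `S ⊆ A`. -/
theorem admissible_props_finite {B W : Type*} [Group W] [Finite W] {M : CoxeterMatrix B}
    (cs : CoxeterSystem M W) (A : Set W) (hA : ∀ t ∈ A, cs.IsReflection t)
    (w₀ : W) (hw₀ : ∀ w : W, cs.length w ≤ cs.length w₀) :
    (∃ w : W, {t ∈ A | cs.length (w * t) < cs.length w} = A) ∧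
      (∀ I : Set W, I ⊆ A →
        ((∃ w : W, {t ∈ A | cs.length (w * t) < cs.length w} = I) ↔
          (∃ w : W, {t ∈ A | cs.length (w * t) < cs.length w} = A \ I))) ∧
      ({w : W | {t ∈ A | cs.length (w * t) < cs.length w} = A} = {w₀} ↔
        Set.range cs.simple ⊆ A) := by
  classical
  have hNw₀ : {t ∈ A | cs.length (w₀ * t) < cs.length w₀} = A := by
    ext t
    simp only [Set.mem_setOf_eq]
    constructor
    · exact fun h => h.1
    · intro htA
      exact ⟨htA, lt_of_le_of_ne (hw₀ _) ((hA t htA).length_mul_left_ne w₀)⟩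
  refine ⟨⟨w₀, hNw₀⟩, ?_, ?_⟩
  · intro I hI
    constructor
    · rintro ⟨w, hw⟩
      exact ⟨w₀ * w, by rw [CoxAdmissible.descent_compl cs A hA w₀ hw₀ w, hw]⟩
    · rintro ⟨w, hw⟩
      refine ⟨w₀ * w, ?_⟩
      rw [CoxAdmissible.descent_compl cs A hA w₀ hw₀ w, hw, Set.diff_diff_cancel_left hI]
  · constructor
    · intro hset
      rintro x ⟨i, rfl⟩
      by_contra hsi
      have hne1 : w₀ * cs.simple i ≠ w₀ := by
        intro hc
        have h1 : cs.simple i = 1 :=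
          mul_left_cancel (a := w₀) (show w₀ * cs.simple i = w₀ * 1 by rw [mul_one]; exact hc)
        have h2 := cs.length_simple i
        rw [h1] at h2
        simp at h2
      apply hne1
      have hmem : (w₀ * cs.simple i) ∈ {w : W | {t ∈ A | cs.length (w * t) < cs.length w} = A} := by
        show {t ∈ A | cs.length (w₀ * cs.simple i * t) < cs.length (w₀ * cs.simple i)} = A
        ext t
        simp only [Set.mem_setOf_eq]
        constructor
        · exact fun h => h.1
        · intro htA
          refine ⟨htA, ?_⟩
          have h2 := CoxAdmissible.length_mul_add_length cs w₀ hw₀ (cs.simple i * t)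
          have h1 := CoxAdmissible.length_mul_add_length cs w₀ hw₀ (cs.simple i)
          rw [cs.length_simple] at h1
          rw [← mul_assoc] at h2
          have hne0 : cs.length (cs.simple i * t) ≠ 0 := by
            intro h0
            have heq := cs.length_eq_zero_iff.mp h0
            have ht : t = cs.simple i := by
              have h3 : t = (cs.simple i)⁻¹ := eq_inv_of_mul_eq_one_right heq
              rw [h3, cs.inv_simple]
            rw [ht] at htA
            exact hsi htA
          have hne1' : cs.length (cs.simple i * t) ≠ 1 := by
            intro h1'
            have hodd := (hA t htA).odd_length
            have hpar := cs.length_mul_mod_two (cs.simple i) t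
            rw [h1', cs.length_simple] at hpar
            rw [Nat.odd_iff] at hodd
            omega
          omega
      rw [hset] at hmem
      exact hmem
    · intro hS
      ext w
      simp only [Set.mem_setOf_eq, Set.mem_singleton_iff]
      constructor
      · intro hw
        apply CoxAdmissible.eq_longest cs w₀ hw₀
        intro i
        have hsiA : cs.simple i ∈ A := hS ⟨i, rfl⟩
        have hmem : cs.simple i ∈ {t ∈ A | cs.length (w * t) < cs.length w} := by
          rw [hw]; exact hsiA
        exact hmem.2
      · rintro rfl
        exact hNw₀
end

section
/- Let W = W₁ × W₂ be a finite Coxeter group which is a direct product of two standard parabolic subgroups, T its reflections, and A ⊆ T. Then for every A-admissible I, the set {w ∈ W : D_A(w) = I} equals the product of {w₁ ∈ W₁ : D_{A∩W₁}(w₁) = I∩W₁} and {w₂ ∈ W₂ : D_{A∩W₂}(w₂) = I∩W₂}. -/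
/-- If `W = W₁ × W₂` is a finite Coxeter group which is a direct product
of two standard parabolic subgroups (corresponding to a partition `S = S₁ ⊔ S₂` with all
entries `M i j = 2` across the partition), then for every `A`-admissible `I`,
`D_I^A = D_{I ∩ W₁}^{A ∩ W₁} × D_{I ∩ W₂}^{A ∩ W₂}`. -/
theorem descent_class_product {B W : Type*} [Group W] [Finite W] {M : CoxeterMatrix B}
    (cs : CoxeterSystem M W) (S₁ S₂ : Set B)
    (hunion : S₁ ∪ S₂ = Set.univ) (hdisj : Disjoint S₁ S₂)
    (hcomm : ∀ i ∈ S₁, ∀ j ∈ S₂, M i j = 2)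
    (W₁ W₂ : Subgroup W)
    (hW₁ : W₁ = Subgroup.closure (cs.simple '' S₁))
    (hW₂ : W₂ = Subgroup.closure (cs.simple '' S₂))
    (A : Set W) (hA : ∀ t ∈ A, cs.IsReflection t)
    (I : Set W) (hI : ∃ w : W, {t ∈ A | cs.length (w * t) < cs.length w} = I) :
    {w : W | {t ∈ A | cs.length (w * t) < cs.length w} = I} =
      {w : W | ∃ w₁ ∈ W₁, ∃ w₂ ∈ W₂, w = w₁ * w₂ ∧
        {t ∈ A ∩ W₁ | cs.length (w₁ * t) < cs.length w₁} = I ∩ W₁ ∧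
        {t ∈ A ∩ W₂ | cs.length (w₂ * t) < cs.length w₂} = I ∩ W₂} := by
  classical
  have hmem : ∀ i : B, i ∉ S₁ → i ∈ S₂ := by
    intro i hi
    have : i ∈ S₁ ∪ S₂ := hunion ▸ Set.mem_univ i
    exact this.resolve_left hi
  have hmem' : ∀ i ∈ S₂, i ∉ S₁ := fun i hi₂ hi₁ => Set.disjoint_left.mp hdisj hi₁ hi₂
  -- simple reflections across the partition commute
  have hsc : ∀ i ∈ S₁, ∀ j ∈ S₂, Commute (cs.simple i) (cs.simple j) := by
    intro i hi j hj
    have h3 : cs.simple i * cs.simple j * (cs.simple i * cs.simple j) = 1 := by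
      have h2 : (cs.simple i * cs.simple j) ^ 2 = 1 := by
        rw [← hcomm i hi j hj]; exact cs.simple_mul_simple_pow i j
      rw [← sq]; exact h2
    have h4 := eq_inv_of_mul_eq_one_left h3
    rw [mul_inv_rev, cs.inv_simple, cs.inv_simple] at h4
    exact h4
  -- elements of W₁ commute with elements of W₂
  have hcommW : ∀ x ∈ W₁, ∀ y ∈ W₂, Commute x y := by
    intro x hx
    rw [hW₁] at hx
    induction hx using Subgroup.closure_induction with
    | mem x hx =>
      obtain ⟨i, hi, rfl⟩ := hx
      intro y hy
      rw [hW₂] at hy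
      induction hy using Subgroup.closure_induction with
      | mem y hy => obtain ⟨j, hj, rfl⟩ := hy; exact hsc i hi j hj
      | one => exact Commute.one_right _
      | mul a b _ _ ha hb => exact ha.mul_right hb
      | inv a _ ha => exact ha.inv_right
    | one => intro y _; exact Commute.one_left _
    | mul a b _ _ ha hb => intro y hy; exact (ha y hy).mul_left (hb y hy)
    | inv a _ ha => intro y hy; exact (ha y hy).inv_left
  -- the projections
  have simple_mem₁ : ∀ i ∈ S₁, cs.simple i ∈ W₁ := fun i hi =>
    hW₁ ▸ Subgroup.subset_closure ⟨i, hi, rfl⟩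
  have simple_mem₂ : ∀ j ∈ S₂, cs.simple j ∈ W₂ := fun j hj =>
    hW₂ ▸ Subgroup.subset_closure ⟨j, hj, rfl⟩
  set f₁ : B → W := fun i => if i ∈ S₁ then cs.simple i else 1 with hf₁def
  set f₂ : B → W := fun i => if i ∈ S₁ then 1 else cs.simple i with hf₂def
  have hf₁ : CoxeterMatrix.IsLiftable M f₁ := by
    intro i j
    by_cases hi : i ∈ S₁ <;> by_cases hj : j ∈ S₁ <;>
      simp only [hf₁def, hi, hj, if_pos, if_neg, if_true, if_false, mul_one, one_mul]
    · exact cs.simple_mul_simple_pow i j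
    · rw [hcomm i hi j (hmem j hj)]; exact cs.simple_sq i
    · rw [M.symmetric i j, hcomm j hj i (hmem i hi)]; exact cs.simple_sq j
    · exact one_pow _
  have hf₂ : CoxeterMatrix.IsLiftable M f₂ := by
    intro i j
    by_cases hi : i ∈ S₁ <;> by_cases hj : j ∈ S₁ <;>
      simp only [hf₂def, hi, hj, if_pos, if_neg, if_true, if_false, mul_one, one_mul]
    · exact one_pow _
    · rw [hcomm i hi j (hmem j hj)]; exact cs.simple_sq j
    · rw [M.symmetric i j, hcomm j hj i (hmem i hi)]; exact cs.simple_sq i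
    · exact cs.simple_mul_simple_pow i j
  set p₁ : W →* W := cs.lift ⟨f₁, hf₁⟩ with hp₁def
  set p₂ : W →* W := cs.lift ⟨f₂, hf₂⟩ with hp₂def
  have hp₁s : ∀ i, p₁ (cs.simple i) = f₁ i := fun i => cs.lift_apply_simple hf₁ i
  have hp₂s : ∀ i, p₂ (cs.simple i) = f₂ i := fun i => cs.lift_apply_simple hf₂ i
  have hp₁fix : ∀ x ∈ W₁, p₁ x = x := by
    intro x hx
    rw [hW₁] at hx
    induction hx using Subgroup.closure_induction with
    | mem x hx =>
      obtain ⟨i, hi, rfl⟩ := hx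
      rw [hp₁s i, hf₁def]; simp [hi]
    | one => simp
    | mul a b _ _ ha hb => rw [map_mul, ha, hb]
    | inv a _ ha => rw [map_inv, ha]
  have hp₁kill : ∀ y ∈ W₂, p₁ y = 1 := by
    intro y hy
    rw [hW₂] at hy
    induction hy using Subgroup.closure_induction with
    | mem y hy =>
      obtain ⟨j, hj, rfl⟩ := hy
      rw [hp₁s j, hf₁def]; simp [hmem' j hj]
    | one => simp
    | mul a b _ _ ha hb => rw [map_mul, ha, hb, mul_one]
    | inv a _ ha => rw [map_inv, ha, inv_one]
  have hp₂fix : ∀ y ∈ W₂, p₂ y = y := by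
    intro y hy
    rw [hW₂] at hy
    induction hy using Subgroup.closure_induction with
    | mem y hy =>
      obtain ⟨j, hj, rfl⟩ := hy
      rw [hp₂s j, hf₂def]; simp [hmem' j hj]
    | one => simp
    | mul a b _ _ ha hb => rw [map_mul, ha, hb]
    | inv a _ ha => rw [map_inv, ha]
  have hp₂kill : ∀ x ∈ W₁, p₂ x = 1 := by
    intro x hx
    rw [hW₁] at hx
    induction hx using Subgroup.closure_induction with
    | mem x hx =>
      obtain ⟨i, hi, rfl⟩ := hx
      rw [hp₂s i, hf₂def]; simp [hi]
    | one => simp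
    | mul a b _ _ ha hb => rw [map_mul, ha, hb, mul_one]
    | inv a _ ha => rw [map_inv, ha, inv_one]
  -- word-length bound for the projections
  have hlen2 : ∀ ω : List B,
      cs.length (p₁ (cs.wordProd ω)) + cs.length (p₂ (cs.wordProd ω)) ≤ ω.length := by
    intro ω
    induction ω with
    | nil => simp
    | cons i ω ih =>
      rw [cs.wordProd_cons, map_mul, map_mul, hp₁s i, hp₂s i]
      by_cases hi : i ∈ S₁
      · have h1 : f₁ i = cs.simple i := by rw [hf₁def]; simp [hi]
        have h2 : f₂ i = 1 := by rw [hf₂def]; simp [hi]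
        have h3 := cs.length_mul_le (cs.simple i) (p₁ (cs.wordProd ω))
        rw [cs.length_simple] at h3
        rw [h1, h2, one_mul]
        simp only [List.length_cons]
        omega
      · have h1 : f₁ i = 1 := by rw [hf₁def]; simp [hi]
        have h2 : f₂ i = cs.simple i := by rw [hf₂def]; simp [hi]
        have h3 := cs.length_mul_le (cs.simple i) (p₂ (cs.wordProd ω))
        rw [cs.length_simple] at h3
        rw [h1, h2, one_mul]
        simp only [List.length_cons]
        omega
  -- length additivity
  have hadd : ∀ x ∈ W₁, ∀ y ∈ W₂, cs.length (x * y) = cs.length x + cs.length y := by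
    intro x hx y hy
    refine le_antisymm (cs.length_mul_le x y) ?_
    obtain ⟨ω, hω, hprod⟩ := cs.exists_reduced_word (x * y)
    have h1 : p₁ (x * y) = x := by rw [map_mul, hp₁fix x hx, hp₁kill y hy, mul_one]
    have h2 : p₂ (x * y) = y := by rw [map_mul, hp₂kill x hx, hp₂fix y hy, one_mul]
    have h3 := hlen2 ω
    rw [← hprod, h1, h2, ← (show cs.length (cs.wordProd ω) = ω.length from hω), ← hprod] at h3
    exact h3
  -- every element decomposes
  have hdecomp : ∀ w : W, ∃ x ∈ W₁, ∃ y ∈ W₂, w = x * y := by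
    intro w
    have hw : w ∈ Subgroup.closure (Set.range cs.simple) := by
      rw [cs.subgroup_closure_range_simple]; trivial
    induction hw using Subgroup.closure_induction with
    | mem x hx =>
      obtain ⟨i, rfl⟩ := hx
      by_cases hi : i ∈ S₁
      · exact ⟨cs.simple i, simple_mem₁ i hi, 1, one_mem _, (mul_one _).symm⟩
      · exact ⟨1, one_mem _, cs.simple i, simple_mem₂ i (hmem i hi), (one_mul _).symm⟩
    | one => exact ⟨1, one_mem _, 1, one_mem _, (one_mul _).symm⟩
    | mul u v _ _ hu hv =>
      obtain ⟨a, ha, b, hb, rfl⟩ := hu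
      obtain ⟨c, hc, d, hd, rfl⟩ := hv
      refine ⟨a * c, mul_mem ha hc, b * d, mul_mem hb hd, ?_⟩
      have hbc : b * c = c * b := ((hcommW c hc b hb).symm).eq
      calc a * b * (c * d) = a * (b * c) * d := by group
        _ = a * (c * b) * d := by rw [hbc]
        _ = a * c * (b * d) := by group
    | inv u _ hu =>
      obtain ⟨a, ha, b, hb, rfl⟩ := hu
      refine ⟨a⁻¹, inv_mem ha, b⁻¹, inv_mem hb, ?_⟩
      rw [mul_inv_rev, ((hcommW a ha b hb).inv_inv).symm.eq]
  -- every reflection lies in W₁ or W₂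
  have hrefl : ∀ t : W, cs.IsReflection t → t ∈ W₁ ∨ t ∈ W₂ := by
    rintro t ⟨w, i, rfl⟩
    obtain ⟨x, hx, y, hy, rfl⟩ := hdecomp w
    by_cases hi : i ∈ S₁
    · left
      have hc : y * cs.simple i = cs.simple i * y :=
        ((hcommW _ (simple_mem₁ i hi) y hy).symm).eq
      have heq : x * y * cs.simple i * (x * y)⁻¹ = x * cs.simple i * x⁻¹ := by
        rw [mul_inv_rev, mul_assoc x y, hc]
        group
      rw [heq]
      exact mul_mem (mul_mem hx (simple_mem₁ i hi)) (inv_mem hx)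
    · right
      have hj := hmem i hi
      have hc : x * cs.simple i = cs.simple i * x :=
        (hcommW x hx _ (simple_mem₂ i hj)).eq
      have hmemc : y * cs.simple i * y⁻¹ ∈ W₂ :=
        mul_mem (mul_mem hy (simple_mem₂ i hj)) (inv_mem hy)
      have heq : x * y * cs.simple i * (x * y)⁻¹ = y * cs.simple i * y⁻¹ := by
        have h5 : x * (y * cs.simple i * y⁻¹) = (y * cs.simple i * y⁻¹) * x :=
          (hcommW x hx _ hmemc).eq
        calc x * y * cs.simple i * (x * y)⁻¹
            = x * (y * cs.simple i * y⁻¹) * x⁻¹ := by group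
          _ = (y * cs.simple i * y⁻¹) * x * x⁻¹ := by rw [h5]
          _ = y * cs.simple i * y⁻¹ := by group
      rw [heq]
      exact hmemc
  -- the key descent transfer lemmas
  have hkey1 : ∀ t : W, t ∈ W₁ → ∀ x ∈ W₁, ∀ y ∈ W₂,
      (cs.length (x * y * t) < cs.length (x * y) ↔ cs.length (x * t) < cs.length x) := by
    intro t htW x hx y hy
    have hc : y * t = t * y := ((hcommW t htW y hy).symm).eq
    have h1 : x * y * t = x * t * y := by rw [mul_assoc, hc, ← mul_assoc]
    rw [h1, hadd (x * t) (mul_mem hx htW) y hy, hadd x hx y hy]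
    omega
  have hkey2 : ∀ t : W, t ∈ W₂ → ∀ x ∈ W₁, ∀ y ∈ W₂,
      (cs.length (x * y * t) < cs.length (x * y) ↔ cs.length (y * t) < cs.length y) := by
    intro t htW x hx y hy
    rw [mul_assoc, hadd x hx (y * t) (mul_mem hy htW), hadd x hx y hy]
    omega
  have hIA : I ⊆ A := by
    obtain ⟨v, hv⟩ := hI
    rw [← hv]
    exact fun t ht => ht.1
  -- main argument
  ext w
  simp only [Set.mem_setOf_eq]
  constructor
  · intro hw
    obtain ⟨x, hx, y, hy, rfl⟩ := hdecomp w
    refine ⟨x, hx, y, hy, rfl, ?_, ?_⟩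
    · ext t
      simp only [Set.mem_inter_iff, Set.mem_setOf_eq, SetLike.mem_coe]
      constructor
      · rintro ⟨⟨htA, htW⟩, hlt⟩
        have hxy : cs.length (x * y * t) < cs.length (x * y) :=
          (hkey1 t htW x hx y hy).mpr hlt
        have htI : t ∈ I := by rw [← hw]; exact ⟨htA, hxy⟩
        exact ⟨htI, htW⟩
      · rintro ⟨htI, htW⟩
        have htA : t ∈ A := hIA htI
        have hlt : cs.length (x * y * t) < cs.length (x * y) := by
          rw [← hw] at htI; exact htI.2
        exact ⟨⟨htA, htW⟩, (hkey1 t htW x hx y hy).mp hlt⟩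
    · ext t
      simp only [Set.mem_inter_iff, Set.mem_setOf_eq, SetLike.mem_coe]
      constructor
      · rintro ⟨⟨htA, htW⟩, hlt⟩
        have hxy : cs.length (x * y * t) < cs.length (x * y) :=
          (hkey2 t htW x hx y hy).mpr hlt
        have htI : t ∈ I := by rw [← hw]; exact ⟨htA, hxy⟩
        exact ⟨htI, htW⟩
      · rintro ⟨htI, htW⟩
        have htA : t ∈ A := hIA htI
        have hlt : cs.length (x * y * t) < cs.length (x * y) := by
          rw [← hw] at htI; exact htI.2
        exact ⟨⟨htA, htW⟩, (hkey2 t htW x hx y hy).mp hlt⟩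
  · rintro ⟨x, hx, y, hy, rfl, h1, h2⟩
    ext t
    simp only [Set.mem_setOf_eq]
    constructor
    · rintro ⟨htA, hlt⟩
      rcases hrefl t (hA t htA) with htW | htW
      · have hxt : cs.length (x * t) < cs.length x := (hkey1 t htW x hx y hy).mp hlt
        have : t ∈ I ∩ (W₁ : Set W) := by
          rw [← h1]
          exact ⟨⟨htA, htW⟩, hxt⟩
        exact this.1
      · have hyt : cs.length (y * t) < cs.length y := (hkey2 t htW x hx y hy).mp hlt
        have : t ∈ I ∩ (W₂ : Set W) := by
          rw [← h2]
          exact ⟨⟨htA, htW⟩, hyt⟩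
        exact this.1
    · intro htI
      have htA : t ∈ A := hIA htI
      rcases hrefl t (hA t htA) with htW | htW
      · have : t ∈ {t ∈ A ∩ (W₁ : Set W) | cs.length (x * t) < cs.length x} := by
          rw [h1]; exact ⟨htI, htW⟩
        exact ⟨htA, (hkey1 t htW x hx y hy).mpr this.2⟩
      · have : t ∈ {t ∈ A ∩ (W₂ : Set W) | cs.length (y * t) < cs.length y} := by
          rw [h2]; exact ⟨htI, htW⟩
        exact ⟨htA, (hkey2 t htW x hx y hy).mpr this.2⟩
end

section
/- Let (W,S) be a Coxeter system with reflections T and A ⊆ T. Define w ∼_A w' as the reflexive-transitive closure of the relation w ⌣_A w' given by (w'w⁻¹ ∈ S and w⁻¹w' ∉ A). Then for all w, w' ∈ W: w ∼_A w' if and only if D_A(w) = D_A(w'), which holds if and only if N_A(w) = N_A(w'). -/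
open CoxeterSystem List

namespace DescentEquivAux

structure GeomRep {B W : Type*} [Group W] (M : CoxeterMatrix B) (cs : CoxeterSystem M W)
    (V : Type*) [AddCommGroup V] [Module ℝ V] where
  b : Module.Basis B ℝ V
  Bil : LinearMap.BilinForm ℝ V
  hBil : ∀ i i' : B, Bil (b i) (b i') = - Real.cos (Real.pi / (M i i' : ℝ))
  ρ : W →* V ≃ₗ[ℝ] V
  hρ : ∀ (i : B) (v : V), ρ (cs.simple i) v = v - (2 * Bil (b i) v) • b i

namespace GeomRep

variable {B W : Type*} [Group W] {M : CoxeterMatrix B} {cs : CoxeterSystem M W}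
  {V : Type*} [AddCommGroup V] [Module ℝ V] (G : GeomRep M cs V)

/-- The set of positive roots. -/
def Pos : Set V :=
  {v : V | (∃ u : W, ∃ k : B, G.ρ u (G.b k) = v) ∧ ∀ k : B, 0 ≤ G.b.repr v k}

lemma mul_apply (u v : W) (x : V) : G.ρ (u * v) x = G.ρ u (G.ρ v x) := by
  rw [map_mul]; rfl

lemma bil_self (i : B) : G.Bil (G.b i) (G.b i) = 1 := by
  rw [G.hBil, M.diagonal]
  norm_num

lemma bil_symm (x y : V) : G.Bil x y = G.Bil y x := by
  have : G.Bil = G.Bil.flip := by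
    apply G.b.ext; intro i
    apply G.b.ext; intro j
    show _ = G.Bil (G.b j) (G.b i)
    rw [G.hBil, G.hBil, M.symmetric]
  conv_lhs => rw [this]
  rfl

lemma rho_simple_self (i : B) : G.ρ (cs.simple i) (G.b i) = - G.b i := by
  rw [G.hρ, G.bil_self]
  module

lemma rho_simple_simple (i : B) (v : V) :
    G.ρ (cs.simple i) (G.ρ (cs.simple i) v) = v := by
  rw [← G.mul_apply, cs.simple_mul_simple_self, map_one]; rfl

lemma bil_invariant (w : W) (x y : V) : G.Bil (G.ρ w x) (G.ρ w y) = G.Bil x y := by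
  induction w using cs.simple_induction_left generalizing x y with
  | one => simp only [map_one]; rfl
  | mul_simple_left w i ih =>
    have hs : ∀ a c : V, G.Bil (G.ρ (cs.simple i) a) (G.ρ (cs.simple i) c) = G.Bil a c := by
      intro a c
      rw [G.hρ, G.hρ]
      simp only [map_sub, map_smul, LinearMap.sub_apply, LinearMap.smul_apply, smul_eq_mul]
      have h1 : G.Bil (G.b i) (G.b i) = 1 := G.bil_self i
      have h2 : G.Bil a (G.b i) = G.Bil (G.b i) a := G.bil_symm a (G.b i)
      rw [h1, h2]
      ring
    rw [G.mul_apply, G.mul_apply, hs, ih]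

lemma root_ne_zero (u : W) (k : B) : G.ρ u (G.b k) ≠ 0 := by
  intro h
  have := (G.ρ u).injective (a₁ := G.b k) (a₂ := 0) (by simpa using h)
  exact G.b.ne_zero k this

lemma pos_not_neg {v : V} (hv : v ∈ G.Pos) : -v ∉ G.Pos := by
  rintro ⟨_, h2⟩
  obtain ⟨⟨u, k, hr⟩, h1⟩ := hv
  apply G.root_ne_zero u k
  rw [hr]
  apply G.b.repr.injective
  ext k'
  have := h1 k'
  have := h2 k'
  simp only [map_neg, Finsupp.coe_neg, Pi.neg_apply] at this
  simp only [map_zero, Finsupp.coe_zero, Pi.zero_apply]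
  linarith

lemma bil_root_self (u : W) (k : B) : G.Bil (G.ρ u (G.b k)) (G.ρ u (G.b k)) = 1 := by
  rw [G.bil_invariant, G.bil_self]

lemma simple_mem_pos (i : B) : G.b i ∈ G.Pos := by
  constructor
  · exact ⟨1, i, by simp only [map_one]; rfl⟩
  · intro k
    rw [G.b.repr_self]
    classical
    rcases eq_or_ne i k with rfl | h
    · simp
    · simp [Finsupp.single_apply, h]

lemma act_left (i j : B) (p q : ℝ) :
    G.ρ (cs.simple i) (p • G.b i + q • G.b j) =
      (- p - 2*q*(G.Bil (G.b i) (G.b j))) • G.b i + q • G.b j := by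
  rw [G.hρ]
  have h : G.Bil (G.b i) (p • G.b i + q • G.b j) = p + q * G.Bil (G.b i) (G.b j) := by
    simp only [map_add, map_smul, smul_eq_mul, G.bil_self]
    ring
  rw [h]
  module

lemma act_right (i j : B) (p q : ℝ) :
    G.ρ (cs.simple j) (p • G.b i + q • G.b j) =
      p • G.b i + (- q - 2*p*(G.Bil (G.b i) (G.b j))) • G.b j := by
  rw [add_comm, G.act_left j i q p, G.bil_symm (G.b j) (G.b i), add_comm]

lemma sin_step (y t : ℝ) :
    Real.sin (y + t) = 2 * Real.cos t * Real.sin y - Real.sin (y - t) := by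
  rw [Real.sin_add, Real.sin_sub]; ring

lemma cone_formula (i j : B) (hij : i ≠ j) (hm : M i j ≠ 0) (k : ℕ) :
    G.ρ (cs.wordProd (alternatingWord i j k)) (G.b i) =
      (if Even k then Real.sin (((k:ℝ)+1) * (Real.pi / (M i j : ℝ))) / Real.sin (Real.pi / (M i j : ℝ))
        else Real.sin ((k:ℝ) * (Real.pi / (M i j : ℝ))) / Real.sin (Real.pi / (M i j : ℝ))) • G.b i +
      (if Even k then Real.sin ((k:ℝ) * (Real.pi / (M i j : ℝ))) / Real.sin (Real.pi / (M i j : ℝ))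
        else Real.sin (((k:ℝ)+1) * (Real.pi / (M i j : ℝ))) / Real.sin (Real.pi / (M i j : ℝ))) • G.b j := by
  have hm2 : 2 ≤ M i j := by
    have := M.off_diagonal i j hij; omega
  set t := Real.pi / (M i j : ℝ) with ht
  have hmR : (2:ℝ) ≤ (M i j : ℝ) := by exact_mod_cast hm2
  have htpos : 0 < t := div_pos Real.pi_pos (by linarith)
  have htlt : t < Real.pi := by
    rw [ht, div_lt_iff₀ (by linarith)]
    nlinarith [Real.pi_pos]
  have hsin : 0 < Real.sin t := Real.sin_pos_of_pos_of_lt_pi htpos htlt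
  have ha : G.Bil (G.b i) (G.b j) = - Real.cos t := G.hBil i j
  have idQP : ∀ k : ℕ, Real.sin ((((k+1):ℕ):ℝ) * t) = Real.sin (((k:ℝ)+1) * t) := by
    intro k; push_cast; ring_nf
  have idP : ∀ k : ℕ, Real.sin (((((k+1):ℕ):ℝ)+1) * t)
      = 2 * Real.cos t * Real.sin (((k:ℝ)+1) * t) - Real.sin ((k:ℝ) * t) := by
    intro k
    have h1 : ((((k+1):ℕ):ℝ)+1) * t = ((k:ℝ)+1) * t + t := by push_cast; ring
    have h2 : ((k:ℝ)+1) * t - t = (k:ℝ) * t := by ring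
    rw [h1, sin_step, h2]
  induction k with
  | zero =>
    simp only [Nat.cast_zero, Even.zero, if_true, zero_add, one_mul, zero_mul, Real.sin_zero,
      zero_div, zero_smul, add_zero, div_self hsin.ne']
    rw [show alternatingWord i j 0 = [] from rfl, wordProd_nil, map_one, one_smul]
    rfl
  | succ k ih =>
    rw [alternatingWord_succ' i j k, wordProd_cons, G.mul_apply, ih]
    rcases Nat.even_or_odd k with he | ho
    · have h2 : ¬ Even (k+1) := by simp [Nat.even_add_one, he]
      rw [if_pos he, if_pos he, if_pos he, if_neg h2, if_neg h2]
      rw [G.act_right i j _ _, ha]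
      congr 1
      · rw [idQP k]
      · congr 1
        rw [idP k]
        field_simp
        ring
    · have h1 : ¬ Even k := Nat.not_even_iff_odd.mpr ho
      have h2 : Even (k+1) := Nat.even_add_one.mpr h1
      rw [if_neg h1, if_neg h1, if_neg h1, if_pos h2, if_pos h2]
      rw [G.act_left i j _ _, ha]
      congr 1
      · congr 1
        rw [idP k]
        field_simp
        ring
      · rw [idQP k]

lemma cone_formula_zero (i j : B) (hm : M i j = 0) (k : ℕ) :
    G.ρ (cs.wordProd (alternatingWord i j k)) (G.b i) =
      (if Even k then ((k:ℝ)+1) else (k:ℝ)) • G.b i +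
      (if Even k then (k:ℝ) else ((k:ℝ)+1)) • G.b j := by
  have ha : G.Bil (G.b i) (G.b j) = - 1 := by
    rw [G.hBil i j, hm]
    norm_num
  induction k with
  | zero =>
    simp only [Nat.cast_zero, Even.zero, if_true, zero_add, zero_smul, add_zero]
    rw [show alternatingWord i j 0 = [] from rfl, wordProd_nil, map_one, one_smul]
    rfl
  | succ k ih =>
    rw [alternatingWord_succ' i j k, wordProd_cons, G.mul_apply, ih]
    rcases Nat.even_or_odd k with he | ho
    · have h2 : ¬ Even (k+1) := by simp [Nat.even_add_one, he]
      rw [if_pos he, if_pos he, if_pos he, if_neg h2, if_neg h2]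
      rw [G.act_right i j _ _, ha]
      congr 1
      · congr 1; push_cast; ring
      · congr 1; push_cast; ring
    · have h1 : ¬ Even k := Nat.not_even_iff_odd.mpr ho
      have h2 : Even (k+1) := Nat.even_add_one.mpr h1
      rw [if_neg h1, if_neg h1, if_neg h1, if_pos h2, if_pos h2]
      rw [G.act_left i j _ _, ha]
      congr 1
      · congr 1; push_cast; ring
      · congr 1; push_cast; ring

lemma cone (i j : B) (hij : i ≠ j) (k : ℕ) (hk : M i j = 0 ∨ k < M i j) :
    ∃ p q : ℝ, 0 ≤ p ∧ 0 ≤ q ∧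
      G.ρ (cs.wordProd (alternatingWord i j k)) (G.b i) = p • G.b i + q • G.b j := by
  rcases hk with hm | hk
  · rw [G.cone_formula_zero i j hm k]
    refine ⟨_, _, ?_, ?_, rfl⟩ <;> split <;> positivity
  · have hm : M i j ≠ 0 := by omega
    have hm2 : 2 ≤ M i j := by have := M.off_diagonal i j hij; omega
    rw [G.cone_formula i j hij hm k]
    set t := Real.pi / (M i j : ℝ) with ht
    have hmR : (2:ℝ) ≤ (M i j : ℝ) := by exact_mod_cast hm2
    have htpos : 0 < t := div_pos Real.pi_pos (by linarith)
    have htlt : t < Real.pi := by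
      rw [ht, div_lt_iff₀ (by linarith)]
      nlinarith [Real.pi_pos]
    have hsin : 0 < Real.sin t := Real.sin_pos_of_pos_of_lt_pi htpos htlt
    have hkm : ((k:ℝ)+1) ≤ (M i j : ℝ) := by
      have : (k+1 : ℕ) ≤ M i j := hk
      exact_mod_cast this
    have hs : ∀ x : ℝ, 0 ≤ x → x ≤ (M i j : ℝ) → 0 ≤ Real.sin (x * t) := by
      intro x hx0 hxm
      apply Real.sin_nonneg_of_nonneg_of_le_pi
      · positivity
      · calc x * t ≤ (M i j : ℝ) * t := mul_le_mul_of_nonneg_right hxm (le_of_lt htpos)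
          _ = Real.pi := by rw [ht]; field_simp
    refine ⟨_, _, ?_, ?_, rfl⟩ <;> split
    · exact div_nonneg (hs _ (by positivity) hkm) hsin.le
    · exact div_nonneg (hs _ (by positivity) (by linarith)) hsin.le
    · exact div_nonneg (hs _ (by positivity) (by linarith)) hsin.le
    · exact div_nonneg (hs _ (by positivity) hkm) hsin.le

end GeomRep

section Cox

variable {B W : Type*} [Group W] {M : CoxeterMatrix B} (cs : CoxeterSystem M W)

lemma step_helper (x y l : B) (hxy : x ≠ y) (hl : l = x ∨ l = y) (k : ℕ)
    (hM0 : M x y = 0 ∨ k ≤ M x y) :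
    ∃ k', (M x y = 0 ∨ k' ≤ M x y) ∧ k' ≤ k + 1 ∧
      (cs.simple l * cs.wordProd (alternatingWord x y k) = cs.wordProd (alternatingWord x y k') ∨
       cs.simple l * cs.wordProd (alternatingWord x y k) = cs.wordProd (alternatingWord y x k')) := by
  have hM2 : M x y = 0 ∨ 2 ≤ M x y := by
    have := M.off_diagonal x y hxy
    omega
  rcases k with _ | k''
  · refine ⟨1, by omega, by omega, ?_⟩
    rcases hl with rfl | rfl
    · right
      rw [show alternatingWord l y 0 = [] from rfl, wordProd_nil, mul_one,
        show alternatingWord y l 1 = [l] from rfl, wordProd_singleton]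
    · left
      rw [show alternatingWord x l 0 = [] from rfl, wordProd_nil, mul_one,
        show alternatingWord x l 1 = [l] from rfl, wordProd_singleton]
  · by_cases hc : l = (if Even k'' then y else x)
    · refine ⟨k'', by omega, by omega, Or.inl ?_⟩
      rw [alternatingWord_succ' x y k'', wordProd_cons, ← hc, simple_mul_simple_cancel_left]
    · have hc' : l = (if Even (k'' + 1) then y else x) := by
        rcases Nat.even_or_odd k'' with he | ho
        · rw [if_pos he] at hc
          rw [if_neg (fun h => (Nat.even_add_one.mp h) he)]
          exact hl.resolve_right hc
        · rw [if_neg (Nat.not_even_iff_odd.mpr ho)] at hc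
          rw [if_pos (Nat.even_add_one.mpr (Nat.not_even_iff_odd.mpr ho))]
          exact hl.resolve_left hc
      have hcase : (M x y = 0 ∨ k'' + 2 ≤ M x y) ∨ (M x y ≠ 0 ∧ k'' + 1 = M x y) := by omega
      rcases hcase with hlt | ⟨hne, heq⟩
      · refine ⟨k'' + 2, by omega, by omega, Or.inl ?_⟩
        rw [show k'' + 2 = (k''+1)+1 from rfl, alternatingWord_succ' x y (k''+1), ← hc',
          wordProd_cons]
      · have h2 : M.M y x = k'' + 1 := by
          rw [M.symmetric y x]; omega
        have hbraid : cs.wordProd (alternatingWord x y (k''+1))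
            = cs.wordProd (alternatingWord y x (k''+1)) := by
          have := cs.wordProd_braidWord_eq x y
          unfold CoxeterSystem.braidWord at this
          rwa [← heq, h2] at this
        have hd : l = (if Even k'' then x else y) := by
          rcases Nat.even_or_odd k'' with he | ho
          · rw [if_pos he] at hc
            rw [if_pos he]
            exact hl.resolve_right hc
          · rw [if_neg (Nat.not_even_iff_odd.mpr ho)] at hc
            rw [if_neg (Nat.not_even_iff_odd.mpr ho)]
            exact hl.resolve_left hc
        refine ⟨k'', by omega, by omega, Or.inr ?_⟩
        rw [hbraid, alternatingWord_succ' y x k'', wordProd_cons, ← hd,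
          simple_mul_simple_cancel_left]

lemma normal_form (i j : B) (hij : i ≠ j) (τ : List B) (hτ : ∀ l ∈ τ, l = i ∨ l = j) :
    ∃ k, (M i j = 0 ∨ k ≤ M i j) ∧ k ≤ τ.length ∧
      (cs.wordProd τ = cs.wordProd (alternatingWord i j k) ∨
       cs.wordProd τ = cs.wordProd (alternatingWord j i k)) := by
  induction τ with
  | nil => exact ⟨0, Or.inr (Nat.zero_le _), Nat.zero_le _, Or.inl rfl⟩
  | cons l τ ih =>
    have hl : l = i ∨ l = j := hτ l (List.mem_cons_self)
    obtain ⟨k, hkM, hkle, hw⟩ := ih (fun x hx => hτ x (List.mem_cons_of_mem l hx))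
    rcases hw with hw | hw
    · obtain ⟨k', h1, h2, h3⟩ := step_helper cs i j l hij hl k hkM
      refine ⟨k', h1, by simp only [List.length_cons]; omega, ?_⟩
      rw [wordProd_cons, hw]
      exact h3
    · obtain ⟨k', h1, h2, h3⟩ := step_helper cs j i l (Ne.symm hij) hl.symm k
        (by rwa [M.symmetric j i])
      refine ⟨k', by rw [M.symmetric i j]; exact h1, by simp only [List.length_cons]; omega, ?_⟩
      rw [wordProd_cons, hw]
      exact h3.symm

lemma mem_alternatingWord (i j : B) (k : ℕ) : ∀ l ∈ alternatingWord i j k, l = i ∨ l = j := by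
  induction k with
  | zero => simp [show alternatingWord i j 0 = [] from rfl]
  | succ k ih =>
    intro l hl
    rw [alternatingWord_succ' i j k] at hl
    rcases List.mem_cons.mp hl with rfl | hl
    · split <;> simp
    · exact ih l hl

end Cox

section Main

variable {B W : Type*} [Group W] {M : CoxeterMatrix B} {cs : CoxeterSystem M W}
  {V : Type*} [AddCommGroup V] [Module ℝ V] (G : GeomRep M cs V)

open GeomRep

lemma positivity (w : W) (i : B) (h : ¬ cs.IsRightDescent w i) : G.ρ w (G.b i) ∈ G.Pos := by
  generalize hn : cs.length w = n
  induction n using Nat.strong_induction_on generalizing w i with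
  | _ n ih =>
  rcases eq_or_ne w 1 with rfl | hw
  · have h1 : G.ρ (1 : W) (G.b i) = G.b i := by rw [map_one]; rfl
    rw [h1]
    exact G.simple_mem_pos i
  · subst hn
    have hlw1 : cs.length w ≠ 0 := fun h0 => hw (cs.length_eq_zero_iff.mp h0)
    obtain ⟨j, hj⟩ := cs.exists_rightDescent_of_ne_one hw
    have hij : j ≠ i := fun hji => h (hji ▸ hj)
    classical
    set P : ℕ → Prop := fun m => ∃ τ : List B, (∀ l ∈ τ, l = i ∨ l = j) ∧ τ.length = m ∧
      cs.length (w * cs.wordProd τ) + m = cs.length w with hPdef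
    have hP1 : P 1 := by
      refine ⟨[j], by simp, rfl, ?_⟩
      rw [wordProd_singleton]
      exact cs.isRightDescent_iff.mp hj
    have hbound : ∀ m, P m → m ≤ cs.length w := by
      rintro m ⟨τ, _, _, hm⟩; omega
    obtain ⟨n₀, hPn₀, hn₀1, hmax⟩ : ∃ n₀, P n₀ ∧ 1 ≤ n₀ ∧ ∀ m, n₀ < m → ¬ P m :=
      ⟨Nat.findGreatest P (cs.length w), Nat.findGreatest_spec (hbound 1 hP1) hP1,
        Nat.le_findGreatest (hbound 1 hP1) hP1,
        fun m hm hPm => Nat.findGreatest_is_greatest hm (hbound m hPm) hPm⟩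
    obtain ⟨τ, hτij, hτlen, hτval⟩ := hPn₀
    set u := w * cs.wordProd τ with hu
    have hnd : ∀ l, (l = i ∨ l = j) → ¬ cs.IsRightDescent u l := by
      intro l hl hdesc
      have hP' : P (n₀ + 1) := by
        refine ⟨τ ++ [l], ?_, by simp [hτlen], ?_⟩
        · intro x hx
          rcases List.mem_append.mp hx with hx | hx
          · exact hτij x hx
          · simp at hx; subst hx; exact hl
        · rw [wordProd_append, wordProd_singleton, ← mul_assoc, ← hu]
          have := cs.isRightDescent_iff.mp hdesc
          omega
      exact hmax (n₀ + 1) (Nat.lt_succ_self n₀) hP'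
    have hui : G.ρ u (G.b i) ∈ G.Pos :=
      ih (cs.length u) (by omega) u i (hnd i (Or.inl rfl)) rfl
    have huj : G.ρ u (G.b j) ∈ G.Pos :=
      ih (cs.length u) (by omega) u j (hnd j (Or.inr rfl)) rfl
    have hwsi : cs.length w < cs.length (w * cs.simple i) := by
      have := cs.length_mul_simple w i
      unfold CoxeterSystem.IsRightDescent at h
      omega
    have H : ∀ σ' : List B, cs.wordProd σ' = (cs.wordProd τ)⁻¹ * cs.simple i →
        n₀ < σ'.length := by
      intro σ' hval
      by_contra hle
      push_neg at hle
      have he : w * cs.simple i = u * cs.wordProd σ' := by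
        rw [hval, hu]; group
      have hl2 : cs.length (w * cs.simple i) ≤ cs.length u + σ'.length := by
        rw [he]
        calc cs.length (u * cs.wordProd σ') ≤ cs.length u + cs.length (cs.wordProd σ') :=
              cs.length_mul_le u _
          _ ≤ cs.length u + σ'.length := by
              have := cs.length_wordProd_le σ'
              omega
      omega
    have hτval' : cs.length u + n₀ = cs.length w := hτval
    have hM2 : M i j = 0 ∨ 2 ≤ M i j := by
      have := M.off_diagonal i j (Ne.symm hij)
      omega
    obtain ⟨κ, hκM, hκle, hκw⟩ := normal_form cs i j (Ne.symm hij) τ.reverse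
      (by intro l hl; exact hτij l (List.mem_reverse.mp hl))
    rw [List.length_reverse, hτlen] at hκle
    have key : ∃ κ', (M i j = 0 ∨ κ' < M i j) ∧
        cs.wordProd τ.reverse = cs.wordProd (alternatingWord i j κ') := by
      rcases hκw with hzw | hzw
      · by_cases hmne : M i j = 0
        · exact ⟨κ, Or.inl hmne, hzw⟩
        have hle2 : κ ≤ M i j := hκM.resolve_left hmne
        rcases lt_or_eq_of_le hle2 with hlt | heq
        · exact ⟨κ, Or.inr hlt, hzw⟩
        · exfalso
          have hm1 : κ = (κ - 1) + 1 := by omega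
          have hbr : cs.wordProd (alternatingWord i j κ) =
              cs.wordProd (alternatingWord j i κ) := by
            have := cs.wordProd_braidWord_eq i j
            unfold CoxeterSystem.braidWord at this
            rwa [M.symmetric j i, ← heq] at this
          have hconcat : cs.wordProd (alternatingWord j i κ)
              = cs.wordProd (alternatingWord i j (κ - 1)) * cs.simple i := by
            conv_lhs => rw [hm1, alternatingWord_succ j i (κ-1)]
            rw [wordProd_concat]
          have : cs.wordProd (alternatingWord i j (κ-1))
              = (cs.wordProd τ)⁻¹ * cs.simple i := by
            rw [← wordProd_reverse, hzw, hbr, hconcat, mul_assoc,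
              simple_mul_simple_self, mul_one]
          have := H _ this
          rw [length_alternatingWord] at this
          omega
      · rcases Nat.eq_zero_or_pos κ with rfl | hκ1
        · exact ⟨0, by omega, hzw⟩
        · exfalso
          have hm1 : κ = (κ - 1) + 1 := by omega
          have hconcat : cs.wordProd (alternatingWord j i κ)
              = cs.wordProd (alternatingWord i j (κ - 1)) * cs.simple i := by
            conv_lhs => rw [hm1, alternatingWord_succ j i (κ-1)]
            rw [wordProd_concat]
          have : cs.wordProd (alternatingWord i j (κ-1))
              = (cs.wordProd τ)⁻¹ * cs.simple i := by
            rw [← wordProd_reverse, hzw, hconcat, mul_assoc,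
              simple_mul_simple_self, mul_one]
          have := H _ this
          rw [length_alternatingWord] at this
          omega
    obtain ⟨κ', hκ'M, hzw⟩ := key
    obtain ⟨p, q, hp, hq, hcone⟩ := G.cone i j (Ne.symm hij) κ' hκ'M
    have hw_eq : w = u * cs.wordProd τ.reverse := by
      rw [wordProd_reverse, hu]; group
    have hval : G.ρ w (G.b i) = p • (G.ρ u (G.b i)) + q • (G.ρ u (G.b j)) := by
      rw [hw_eq, G.mul_apply, hzw, hcone, map_add, map_smul, map_smul]
    refine ⟨⟨w, i, rfl⟩, fun k => ?_⟩
    rw [hval]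
    have h1 := hui.2 k
    have h2 := huj.2 k
    simp only [map_add, map_smul, Finsupp.coe_add, Finsupp.coe_smul, Pi.add_apply,
      Pi.smul_apply, smul_eq_mul]
    exact add_nonneg (mul_nonneg hp h1) (mul_nonneg hq h2)

lemma positivity' (w : W) (i : B) (h : cs.IsRightDescent w i) : -(G.ρ w (G.b i)) ∈ G.Pos := by
  have hnd : ¬ cs.IsRightDescent (w * cs.simple i) i := by
    unfold CoxeterSystem.IsRightDescent at *
    rw [cs.simple_mul_simple_cancel_right]
    omega
  have := positivity G (w * cs.simple i) i hnd
  rwa [G.mul_apply, G.rho_simple_self, map_neg] at this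

lemma root_pos_or_neg (w : W) (i : B) : G.ρ w (G.b i) ∈ G.Pos ∨ -(G.ρ w (G.b i)) ∈ G.Pos := by
  by_cases h : cs.IsRightDescent w i
  · exact Or.inr (positivity' G w i h)
  · exact Or.inl (positivity G w i h)

lemma neg_root_pos_iff (w : W) (i : B) :
    -(G.ρ w (G.b i)) ∈ G.Pos ↔ cs.IsRightDescent w i := by
  constructor
  · intro hneg
    by_contra h
    exact G.pos_not_neg (positivity G w i h) hneg
  · exact positivity' G w i

lemma simple_perm_pos (j : B) {β : V} (hβ : β ∈ G.Pos) (hne : β ≠ G.b j) :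
    G.ρ (cs.simple j) β ∈ G.Pos := by
  classical
  obtain ⟨⟨u, k, huk⟩, hcoord⟩ := hβ
  by_cases hsupp : ∀ k', k' ≠ j → G.b.repr β k' = 0
  · exfalso
    have hβj : β = (G.b.repr β j) • G.b j := by
      have hrep : G.b.repr β = Finsupp.single j (G.b.repr β j) := by
        ext k'
        rcases eq_or_ne k' j with rfl | hk'
        · simp
        · rw [hsupp k' hk', Finsupp.single_apply, if_neg (fun hh => hk' hh.symm)]
      conv_lhs => rw [← G.b.repr.symm_apply_apply β]
      rw [hrep]
      simp [Module.Basis.repr_symm_single]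
    set c := G.b.repr β j with hc
    have hc0 : 0 ≤ c := hcoord j
    have hBB : G.Bil β β = 1 := by rw [← huk]; exact G.bil_root_self u k
    rw [hβj] at hBB
    simp only [map_smul, LinearMap.smul_apply, smul_eq_mul] at hBB
    rw [G.bil_self] at hBB
    have hc1 : c = 1 := by nlinarith
    rw [hβj, hc1, one_smul] at hne
    exact hne rfl
  · push_neg at hsupp
    obtain ⟨k', hk'j, hk'ne⟩ := hsupp
    have hk'pos : 0 < G.b.repr β k' := lt_of_le_of_ne (hcoord k') (Ne.symm hk'ne)
    have hroot : G.ρ (cs.simple j * u) (G.b k) = G.ρ (cs.simple j) β := by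
      rw [G.mul_apply, huk]
    rcases root_pos_or_neg G (cs.simple j * u) k with hpos | hneg
    · rwa [hroot] at hpos
    · exfalso
      have hco : G.b.repr (G.ρ (cs.simple j) β) k' = G.b.repr β k' := by
        rw [G.hρ]
        rw [map_sub, map_smul]
        simp only [Finsupp.coe_sub, Finsupp.coe_smul, Pi.sub_apply, Pi.smul_apply, smul_eq_mul]
        rw [G.b.repr_self, Finsupp.single_apply, if_neg (fun hh => hk'j hh.symm)]
        ring
      have h2 := hneg.2 k'
      rw [hroot, map_neg] at h2
      simp only [Finsupp.coe_neg, Pi.neg_apply] at h2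
      rw [hco] at h2
      linarith

lemma refl_positivity (z : W) (k : B) (hz : G.ρ z (G.b k) ∈ G.Pos)
    (sα : V → W) (hsα : ∀ (u : W) (k : B), sα (G.ρ u (G.b k)) = u * cs.simple k * u⁻¹)
    (w : W) (h : cs.length w < cs.length (w * (z * cs.simple k * z⁻¹))) :
    G.ρ w (G.ρ z (G.b k)) ∈ G.Pos := by
  generalize hn : cs.length w = n
  induction n using Nat.strong_induction_on generalizing w with
  | _ n ih =>
  rcases eq_or_ne w 1 with rfl | hw
  · have h1 : G.ρ (1 : W) (G.ρ z (G.b k)) = G.ρ z (G.b k) := by rw [map_one]; rfl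
    rwa [h1]
  · subst hn
    set t := z * cs.simple k * z⁻¹ with htdef
    have htrefl : cs.IsReflection t := ⟨z, k, rfl⟩
    obtain ⟨j, hj⟩ := cs.exists_leftDescent_of_ne_one hw
    set w₁ := cs.simple j * w with hw₁
    have hw₁len : cs.length w₁ < cs.length w := hj
    have hw2 : w = cs.simple j * w₁ := by
      rw [hw₁, ← mul_assoc, simple_mul_simple_self, one_mul]
    have hw₁t : cs.length w₁ < cs.length (w₁ * t) := by
      by_contra hle
      push_neg at hle
      have hne := htrefl.length_mul_left_ne w₁
      have hb : cs.length (w * t) ≤ cs.length (w₁ * t) + 1 := by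
        conv_lhs => rw [hw2, mul_assoc]
        rcases cs.length_simple_mul (w₁ * t) j with h' | h' <;> omega
      omega
    have hβ : G.ρ w₁ (G.ρ z (G.b k)) ∈ G.Pos := ih (cs.length w₁) (by omega) w₁ hw₁t rfl
    by_cases hbj : G.ρ w₁ (G.ρ z (G.b k)) = G.b j
    · exfalso
      have h1 : G.ρ (w₁ * z) (G.b k) = G.ρ (1 : W) (G.b j) := by
        rw [G.mul_apply, hbj, map_one]; rfl
      have h2 := hsα (w₁ * z) k
      rw [h1, hsα 1 j] at h2
      simp only [one_mul, inv_one, mul_one] at h2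
      -- h2 : w₁ * z * cs.simple k * (w₁ * z)⁻¹ = cs.simple j
      have hwt : w * t = w₁ := by
        rw [hw2, htdef]
        have : z * cs.simple k * z⁻¹ = w₁⁻¹ * cs.simple j * w₁ := by
          rw [h2]; group
        rw [this]
        group
        rw [cs.simple_mul_simple_self, one_mul]
      rw [hwt] at h
      omega
    · have : G.ρ w (G.ρ z (G.b k)) = G.ρ (cs.simple j) (G.ρ w₁ (G.ρ z (G.b k))) := by
        rw [hw2, G.mul_apply]
      rw [this]
      exact simple_perm_pos G j hβ hbj

lemma rho_refl_neg (z : W) (k : B) :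
    G.ρ (z * cs.simple k * z⁻¹) (G.ρ z (G.b k)) = -(G.ρ z (G.b k)) := by
  rw [← G.mul_apply]
  have : z * cs.simple k * z⁻¹ * z = z * cs.simple k := by group
  rw [this, G.mul_apply, G.rho_simple_self, map_neg]

lemma neg_refl_pos_iff (z : W) (k : B) (hz : G.ρ z (G.b k) ∈ G.Pos)
    (sα : V → W) (hsα : ∀ (u : W) (k : B), sα (G.ρ u (G.b k)) = u * cs.simple k * u⁻¹)
    (w : W) :
    -(G.ρ w (G.ρ z (G.b k))) ∈ G.Pos ↔
      cs.length (w * (z * cs.simple k * z⁻¹)) < cs.length w := by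
  set t := z * cs.simple k * z⁻¹ with htdef
  have htrefl : cs.IsReflection t := ⟨z, k, rfl⟩
  have hne := htrefl.length_mul_left_ne w
  constructor
  · intro hneg
    by_contra hnot
    push_neg at hnot
    have hlt : cs.length w < cs.length (w * t) := by omega
    exact G.pos_not_neg (refl_positivity G z k hz sα hsα w hlt) hneg
  · intro hlt
    have hmul : w * t * t = w := by
      rw [mul_assoc, htrefl.mul_self, mul_one]
    have hlt' : cs.length (w * t) < cs.length (w * t * t) := by rw [hmul]; exact hlt
    have := refl_positivity G z k hz sα hsα (w * t) hlt'
    rwa [G.mul_apply, rho_refl_neg G z k, map_neg] at this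

lemma exists_pos_root (t : W) (ht : cs.IsReflection t) :
    ∃ (z : W) (k : B), G.ρ z (G.b k) ∈ G.Pos ∧ z * cs.simple k * z⁻¹ = t := by
  obtain ⟨u, k, rfl⟩ := ht
  rcases root_pos_or_neg G u k with hpos | hneg
  · exact ⟨u, k, hpos, rfl⟩
  · refine ⟨u * cs.simple k, k, ?_, ?_⟩
    · have : G.ρ (u * cs.simple k) (G.b k) = -(G.ρ u (G.b k)) := by
        rw [G.mul_apply, G.rho_simple_self, map_neg]
      rwa [this]
    · rw [cs.simple_mul_simple_cancel_right, mul_inv_rev, cs.inv_simple, ← mul_assoc]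

variable (A : Set W)

/-- The `A`-descent set. -/
def DSet (cs : CoxeterSystem M W) (A : Set W) (w : W) : Set W :=
  {t ∈ A | cs.length (w * t) < cs.length w}

lemma step_descents (hA : ∀ t ∈ A, cs.IsReflection t)
    (sα : V → W) (hsα : ∀ (u : W) (k : B), sα (G.ρ u (G.b k)) = u * cs.simple k * u⁻¹)
    (u : W) (i : B) (hnotA : u⁻¹ * (cs.simple i * u) ∉ A) :
    DSet cs A u = DSet cs A (cs.simple i * u) := by
  have key : ∀ t ∈ A, (cs.length (u * t) < cs.length u ↔
      cs.length (cs.simple i * u * t) < cs.length (cs.simple i * u)) := by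
    intro t htA
    obtain ⟨z, k, hz, hzk⟩ := exists_pos_root G t (hA t htA)
    have hmulz : ∀ v : W, G.ρ v (G.ρ z (G.b k)) = G.ρ (v * z) (G.b k) := by
      intro v; rw [G.mul_apply]
    have hne1 : G.ρ (u * z) (G.b k) ≠ G.b i := by
      intro hcon
      apply hnotA
      have h1 : G.ρ (u * z) (G.b k) = G.ρ (1 : W) (G.b i) := by rw [hcon, map_one]; rfl
      have h2 := hsα (u * z) k
      rw [h1, hsα 1 i] at h2
      simp only [one_mul, inv_one, mul_one] at h2
      -- h2 : cs.simple i = u * z * cs.simple k * (u * z)⁻¹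
      have : u⁻¹ * (cs.simple i * u) = t := by
        rw [h2, ← hzk]; group
      rwa [this]
    have hne2 : -(G.ρ (u * z) (G.b k)) ≠ G.b i := by
      intro hcon
      apply hnotA
      have hneg : G.ρ (u * z * cs.simple k) (G.b k) = -(G.ρ (u * z) (G.b k)) := by
        rw [G.mul_apply, G.rho_simple_self, map_neg]
      have h1 : G.ρ (u * z * cs.simple k) (G.b k) = G.ρ (1 : W) (G.b i) := by
        rw [hneg, hcon, map_one]; rfl
      have h2 := hsα (u * z * cs.simple k) k
      rw [h1, hsα 1 i] at h2
      simp only [one_mul, inv_one, mul_one] at h2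
      have h3 : cs.simple i = u * z * cs.simple k * z⁻¹ * u⁻¹ := by
        rw [h2, mul_inv_rev, mul_inv_rev, cs.inv_simple]
        group
        rw [cs.simple_mul_simple_cancel_right]
      have : u⁻¹ * (cs.simple i * u) = t := by
        rw [h3, ← hzk]; group
      rwa [this]
    have hiff1 : cs.length (u * t) < cs.length u ↔ -(G.ρ u (G.ρ z (G.b k))) ∈ G.Pos := by
      rw [neg_refl_pos_iff G z k hz sα hsα u, hzk]
    have hiff2 : cs.length (cs.simple i * u * t) < cs.length (cs.simple i * u) ↔
        -(G.ρ (cs.simple i * u) (G.ρ z (G.b k))) ∈ G.Pos := by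
      rw [neg_refl_pos_iff G z k hz sα hsα (cs.simple i * u), hzk]
    rw [hiff1, hiff2]
    have hsw : G.ρ (cs.simple i * u) (G.ρ z (G.b k)) =
        G.ρ (cs.simple i) (G.ρ u (G.ρ z (G.b k))) := by
      rw [G.mul_apply]
    rcases root_pos_or_neg G (u * z) k with hpos | hneg
    · have hppos : G.ρ u (G.ρ z (G.b k)) ∈ G.Pos := by rw [hmulz]; exact hpos
      have hspos : G.ρ (cs.simple i) (G.ρ u (G.ρ z (G.b k))) ∈ G.Pos :=
        simple_perm_pos G i hppos (by rw [hmulz]; exact hne1)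
      constructor
      · intro hcon; exact absurd hcon (G.pos_not_neg hppos)
      · intro hcon; rw [hsw] at hcon; exact absurd hcon (G.pos_not_neg hspos)
    · have hnpos : -(G.ρ u (G.ρ z (G.b k))) ∈ G.Pos := by rw [hmulz]; exact hneg
      have hsneg : -(G.ρ (cs.simple i) (G.ρ u (G.ρ z (G.b k)))) ∈ G.Pos := by
        have := simple_perm_pos G i hnpos (by rw [hmulz]; exact hne2)
        rwa [map_neg] at this
      constructor
      · intro _; rw [hsw]; exact hsneg
      · intro _; exact hnpos
  ext t
  unfold DSet
  simp only [Set.mem_setOf_eq]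
  constructor
  · rintro ⟨h1, h2⟩; exact ⟨h1, (key t h1).mp h2⟩
  · rintro ⟨h1, h2⟩; exact ⟨h1, (key t h1).mpr h2⟩

lemma reflTransGen_descents (hA : ∀ t ∈ A, cs.IsReflection t)
    (sα : V → W) (hsα : ∀ (u : W) (k : B), sα (G.ρ u (G.b k)) = u * cs.simple k * u⁻¹)
    (w w' : W)
    (h : Relation.ReflTransGen
      (fun u v : W => v * u⁻¹ ∈ Set.range cs.simple ∧ u⁻¹ * v ∉ A) w w') :
    DSet cs A w = DSet cs A w' := by
  induction h with
  | refl => rfl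
  | @tail x y hxy hstep ih2 =>
    obtain ⟨⟨i, hsi⟩, hnA⟩ := hstep
    have hy : y = cs.simple i * x := by rw [hsi]; group
    rw [ih2, hy]
    apply step_descents G A hA sα hsα x i
    rw [← hy]
    exact hnA

lemma descents_reflTransGen (hA : ∀ t ∈ A, cs.IsReflection t)
    (sα : V → W) (hsα : ∀ (u : W) (k : B), sα (G.ρ u (G.b k)) = u * cs.simple k * u⁻¹)
    (w w' : W) (h : DSet cs A w = DSet cs A w') :
    Relation.ReflTransGen
      (fun u v : W => v * u⁻¹ ∈ Set.range cs.simple ∧ u⁻¹ * v ∉ A) w w' := by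
  generalize hn : cs.length (w' * w⁻¹) = n
  induction n using Nat.strong_induction_on generalizing w with
  | _ n ih =>
  rcases eq_or_ne (w' * w⁻¹) 1 with hy1 | hy1
  · rw [(mul_inv_eq_one.mp hy1).symm]
  · subst hn
    set y := w' * w⁻¹ with hy
    obtain ⟨i, hi⟩ := cs.exists_rightDescent_of_ne_one hy1
    have hρwinv : ∀ v : V, G.ρ w (G.ρ w⁻¹ v) = v := by
      intro v
      rw [← G.mul_apply, mul_inv_cancel, map_one]
      rfl
    have hnotA : w⁻¹ * (cs.simple i * w) ∉ A := by
      intro htA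
      set t₀ := w⁻¹ * (cs.simple i * w) with ht₀
      have hmemiff : (t₀ ∈ DSet cs A w) ↔ (t₀ ∈ DSet cs A w') := by rw [h]
      rcases root_pos_or_neg G w⁻¹ i with hpos | hneg
      · have h1 : ¬ cs.length (w * t₀) < cs.length w := by
          have hiff := neg_refl_pos_iff G w⁻¹ i hpos sα hsα w
          have harg : w⁻¹ * cs.simple i * w⁻¹⁻¹ = t₀ := by rw [ht₀]; group
          rw [harg] at hiff
          rw [← hiff, hρwinv]
          exact fun hcon => G.pos_not_neg (G.simple_mem_pos i) hcon
        have h2 : cs.length (w' * t₀) < cs.length w' := by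
          have hiff := neg_refl_pos_iff G w⁻¹ i hpos sα hsα w'
          have harg : w⁻¹ * cs.simple i * w⁻¹⁻¹ = t₀ := by rw [ht₀]; group
          rw [harg] at hiff
          apply hiff.mp
          have hval : G.ρ w' (G.ρ w⁻¹ (G.b i)) = G.ρ y (G.b i) := by
            rw [← G.mul_apply, ← hy]
          rw [hval]
          exact positivity' G y i hi
        exact absurd (hmemiff.mpr ⟨htA, h2⟩).2 h1
      · have hzpos : G.ρ (w⁻¹ * cs.simple i) (G.b i) ∈ G.Pos := by
          have hv : G.ρ (w⁻¹ * cs.simple i) (G.b i) = -(G.ρ w⁻¹ (G.b i)) := by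
            rw [G.mul_apply, G.rho_simple_self, map_neg]
          rw [hv]; exact hneg
        have harg : (w⁻¹ * cs.simple i) * cs.simple i * (w⁻¹ * cs.simple i)⁻¹ = t₀ := by
          rw [ht₀, cs.simple_mul_simple_cancel_right, mul_inv_rev, cs.inv_simple]
          group
        have h1 : cs.length (w * t₀) < cs.length w := by
          have hiff := neg_refl_pos_iff G (w⁻¹ * cs.simple i) i hzpos sα hsα w
          rw [harg] at hiff
          apply hiff.mp
          have hval : G.ρ w (G.ρ (w⁻¹ * cs.simple i) (G.b i))
              = G.ρ (cs.simple i) (G.b i) := by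
            rw [← G.mul_apply, ← mul_assoc, mul_inv_cancel, one_mul]
          rw [hval, G.rho_simple_self, neg_neg]
          exact G.simple_mem_pos i
        have h2 : ¬ cs.length (w' * t₀) < cs.length w' := by
          have hiff := neg_refl_pos_iff G (w⁻¹ * cs.simple i) i hzpos sα hsα w'
          rw [harg] at hiff
          rw [← hiff]
          have hval : G.ρ w' (G.ρ (w⁻¹ * cs.simple i) (G.b i))
              = G.ρ (y * cs.simple i) (G.b i) := by
            rw [← G.mul_apply, ← mul_assoc, ← hy]
          rw [hval]
          have hnd : ¬ cs.IsRightDescent (y * cs.simple i) i := by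
            unfold CoxeterSystem.IsRightDescent at hi ⊢
            rw [cs.simple_mul_simple_cancel_right]
            omega
          exact fun hcon => G.pos_not_neg (positivity G (y * cs.simple i) i hnd) hcon
        exact absurd (hmemiff.mp ⟨htA, h1⟩).2 h2
    have hstep : (fun u v : W => v * u⁻¹ ∈ Set.range cs.simple ∧ u⁻¹ * v ∉ A) w
        (cs.simple i * w) := ⟨⟨i, by group⟩, hnotA⟩
    have hD : DSet cs A (cs.simple i * w) = DSet cs A w' := by
      rw [← step_descents G A hA sα hsα w i hnotA]
      exact h
    have hlen : w' * (cs.simple i * w)⁻¹ = y * cs.simple i := by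
      rw [hy, mul_inv_rev, cs.inv_simple]
      group
    exact Relation.ReflTransGen.head hstep
      (ih (cs.length (y * cs.simple i)) hi (cs.simple i * w) hD (by rw [hlen]))

lemma NA_mem_iff (sα : V → W)
    (hsα : ∀ (u : W) (k : B), sα (G.ρ u (G.b k)) = u * cs.simple k * u⁻¹)
    (w : W) (α : V) (hαPos : α ∈ G.Pos) :
    -(G.ρ w α) ∈ G.Pos ↔ cs.length (w * sα α) < cs.length w := by
  obtain ⟨z, k, hzk⟩ := hαPos.1
  have hz : G.ρ z (G.b k) ∈ G.Pos := by rw [hzk]; exact hαPos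
  have ht : sα α = z * cs.simple k * z⁻¹ := by rw [← hzk, hsα]
  rw [ht, ← hzk]
  exact neg_refl_pos_iff G z k hz sα hsα w

lemma descents_iff_NA (hA : ∀ t ∈ A, cs.IsReflection t)
    (sα : V → W) (hsα : ∀ (u : W) (k : B), sα (G.ρ u (G.b k)) = u * cs.simple k * u⁻¹)
    (w w' : W) :
    DSet cs A w = DSet cs A w' ↔
      {α ∈ G.Pos | sα α ∈ A ∧ -(G.ρ w α) ∈ G.Pos} =
      {α ∈ G.Pos | sα α ∈ A ∧ -(G.ρ w' α) ∈ G.Pos} := by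
  constructor
  · intro h
    ext α
    simp only [Set.mem_setOf_eq]
    have key : ∀ v : W, (α ∈ G.Pos ∧ sα α ∈ A ∧ -(G.ρ v α) ∈ G.Pos) ↔
        (α ∈ G.Pos ∧ sα α ∈ A ∧ sα α ∈ DSet cs A v) := by
      intro v
      constructor
      · rintro ⟨h1, h2, h3⟩
        exact ⟨h1, h2, h2, (NA_mem_iff G sα hsα v α h1).mp h3⟩
      · rintro ⟨h1, h2, h3⟩
        exact ⟨h1, h2, (NA_mem_iff G sα hsα v α h1).mpr h3.2⟩
    rw [key w, key w', h]
  · intro h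
    ext t
    simp only [DSet, Set.mem_setOf_eq]
    constructor
    all_goals
    · rintro ⟨htA, hlen⟩
      refine ⟨htA, ?_⟩
      obtain ⟨z, k, hz, hzk⟩ := exists_pos_root G t (hA t htA)
      have hαPos : G.ρ z (G.b k) ∈ G.Pos := hz
      have ht : sα (G.ρ z (G.b k)) = t := by rw [hsα, hzk]
      have hmem : ∀ v : W, (G.ρ z (G.b k)) ∈ {α ∈ G.Pos | sα α ∈ A ∧ -(G.ρ v α) ∈ G.Pos} ↔
          cs.length (v * t) < cs.length v := by
        intro v
        simp only [Set.mem_setOf_eq]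
        constructor
        · rintro ⟨_, _, h3⟩
          have := (NA_mem_iff G sα hsα v _ hαPos).mp h3
          rwa [ht] at this
        · intro hv
          refine ⟨hαPos, by rw [ht]; exact htA, ?_⟩
          apply (NA_mem_iff G sα hsα v _ hαPos).mpr
          rwa [ht]
      first
        | exact (hmem w').mp (h ▸ (hmem w).mpr hlen)
        | exact (hmem w).mp (h ▸ (hmem w').mpr hlen)

end Main

end DescentEquivAux


/-- For `A ⊆ T`, let `w ⌣_A w'` mean `w'w⁻¹ ∈ S` and `w⁻¹w' ∉ A`,
and let `∼_A` be its reflexive-transitive closure. Then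
`w ∼_A w' ↔ D_A(w) = D_A(w') ↔ N_A(w) = N_A(w')`. -/
theorem descent_equivalence {B W : Type*} [Group W] {M : CoxeterMatrix B}
    (cs : CoxeterSystem M W)
    (V : Type*) [AddCommGroup V] [Module ℝ V] (b : Module.Basis B ℝ V)
    (Bil : LinearMap.BilinForm ℝ V)
    (hBil : ∀ i i' : B, Bil (b i) (b i') = - Real.cos (Real.pi / (M i i' : ℝ)))
    (ρ : W →* V ≃ₗ[ℝ] V)
    (hρ : ∀ (i : B) (v : V), ρ (cs.simple i) v = v - (2 * Bil (b i) v) • b i)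
    (sα : V → W)
    (hsα : ∀ (u : W) (k : B), sα (ρ u (b k)) = u * cs.simple k * u⁻¹)
    (Pos : Set V)
    (hPos : Pos = {v : V | (∃ u : W, ∃ k : B, ρ u (b k) = v) ∧ ∀ k : B, 0 ≤ b.repr v k})
    (A : Set W) (hA : ∀ t ∈ A, cs.IsReflection t)
    (NA : W → Set V)
    (hNA : ∀ w : W, NA w = {α ∈ Pos | sα α ∈ A ∧ -(ρ w α) ∈ Pos})
    (w w' : W) :
    (Relation.ReflTransGen
        (fun u v : W => v * u⁻¹ ∈ Set.range cs.simple ∧ u⁻¹ * v ∉ A) w w' ↔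
      {t ∈ A | cs.length (w * t) < cs.length w} =
        {t ∈ A | cs.length (w' * t) < cs.length w'}) ∧
    ({t ∈ A | cs.length (w * t) < cs.length w} =
        {t ∈ A | cs.length (w' * t) < cs.length w'} ↔
      NA w = NA w') := by
  let G : DescentEquivAux.GeomRep M cs V := ⟨b, Bil, hBil, ρ, hρ⟩
  have hsαG : ∀ (u : W) (k : B), sα (G.ρ u (G.b k)) = u * cs.simple k * u⁻¹ := hsα
  have hPosG : Pos = G.Pos := hPos
  constructor
  · constructor
    · exact fun h => DescentEquivAux.reflTransGen_descents G A hA sα hsαG w w' h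
    · exact fun h => DescentEquivAux.descents_reflTransGen G A hA sα hsαG w w' h
  · have hiff := DescentEquivAux.descents_iff_NA G A hA sα hsαG w w'
    rw [hNA w, hNA w', hPosG]
    exact hiff
end

section
/- Let (W,S) be a Coxeter system with reflections T and A ⊆ T. For each A-admissible subset I, the set D_I^A = {w ∈ W : D_A(w) = I} is left-connected: for any w, w' ∈ D_I^A, there is a sequence w = w₁, w₂, …, w_r = w' in D_I^A with w_{i+1} w_i⁻¹ ∈ S for all i. -/
namespace DCLC
open CoxeterSystem List
open scoped Classical

variable {B W : Type*} [Group W] {M : CoxeterMatrix B} (cs : CoxeterSystem M W)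

/-- The basic sign-twisted conjugation map on `W × ℤˣ`. -/
noncomputable def sigmaFun (c : W) : W × ℤˣ → W × ℤˣ :=
  fun p => (c * p.1 * c, if p.1 = c then -p.2 else p.2)

lemma sigmaFun_involutive {c : W} (hc : c * c = 1) : Function.Involutive (sigmaFun c) := by
  have hconj : ∀ x : W, c * (c * x * c) * c = x := by
    intro x
    calc c * (c * x * c) * c = (c * c) * x * (c * c) := by group
    _ = x := by rw [hc]; group
  have hccc : c * c * c = c := by rw [hc]; group
  rintro ⟨t, ε⟩
  have hcond : c * t * c = c ↔ t = c := by
    constructor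
    · intro h
      have h2 := hconj t
      rw [h] at h2
      rw [← h2, hccc]
    · intro h; rw [h, hccc]
  simp only [sigmaFun, hconj]
  by_cases h : t = c
  · simp [h, hcond, hccc]
  · simp [h, hcond]

/-- The sign-twisted conjugation permutation for an involution. -/
noncomputable def sig (c : W) (hc : c * c = 1) : Equiv.Perm (W × ℤˣ) :=
  (sigmaFun_involutive hc).toPerm

lemma sig_apply (c : W) (hc : c * c = 1) (t : W) (ε : ℤˣ) :
    sig c hc (t, ε) = (c * t * c, if t = c then -ε else ε) := rfl

lemma ite_neg_eq (P : Prop) [Decidable P] (x : ℤˣ) :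
    (if P then -x else x) = (if P then (-1 : ℤˣ) else 1) * x := by
  split <;> simp

lemma double_flip (c1 c2 : Prop) [Decidable c1] [Decidable c2] (x : ℤˣ) :
    (if c2 then -(if c1 then -x else x) else (if c1 then -x else x)) =
      x * ((if c1 then (-1 : ℤˣ) else 1) * (if c2 then (-1 : ℤˣ) else 1)) := by
  by_cases h1 : c1 <;> by_cases h2 : c2 <;> simp [h1, h2]

lemma conj_eq_iff (x y g h : W) : x * g * y = h ↔ g = x⁻¹ * h * y⁻¹ := by
  constructor
  · intro e; rw [← e]; group
  · intro e; rw [e]; group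

lemma sig_pow_apply (a b : W) (ha : a * a = 1) (hb : b * b = 1) (k : ℕ) (t : W) (ε : ℤˣ) :
    ((sig a ha * sig b hb) ^ k) (t, ε) =
      ((a * b) ^ k * t * (b * a) ^ k,
        ε * ∏ j ∈ Finset.range (2 * k), (if t = (b * a) ^ j * b then (-1 : ℤˣ) else 1)) := by
  have hainv : a⁻¹ = a := inv_eq_of_mul_eq_one_right ha
  have hbinv : b⁻¹ = b := inv_eq_of_mul_eq_one_right hb
  have hinv : ∀ n : ℕ, ((a * b) ^ n)⁻¹ = (b * a) ^ n := fun n => by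
    rw [← inv_pow, mul_inv_rev, hainv, hbinv]
  have hinv' : ∀ n : ℕ, ((b * a) ^ n)⁻¹ = (a * b) ^ n := fun n => by
    rw [← inv_pow, mul_inv_rev, hainv, hbinv]
  have hsemi : ∀ n : ℕ, b * (a * b) ^ n = (b * a) ^ n * b := fun n =>
    (show SemiconjBy b (a*b) (b*a) by simp [SemiconjBy, mul_assoc]).pow_right n
  induction k with
  | zero => simp
  | succ k ih =>
    rw [pow_succ', Equiv.Perm.mul_apply, ih, Equiv.Perm.mul_apply, sig_apply, sig_apply]
    have cond1 : (a*b)^k * t * (b*a)^k = b ↔ t = (b*a)^(2*k) * b := by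
      rw [conj_eq_iff, hinv, hinv']
      have : (b*a)^k * b * (a*b)^k = (b*a)^(2*k) * b := by
        rw [mul_assoc, hsemi, ← mul_assoc, ← pow_add, two_mul]
      rw [this]
    have cond2 : b * ((a*b)^k * t * (b*a)^k) * b = a ↔ t = (b*a)^(2*k+1) * b := by
      rw [conj_eq_iff, hbinv]
      rw [show b * a * b = (b*a)*b by group, conj_eq_iff, hinv, hinv']
      have : (b*a)^k * ((b*a) * b) * (a*b)^k = (b*a)^(2*k+1) * b := by
        rw [← mul_assoc, mul_assoc ((b*a)^k * (b*a)), hsemi,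
          show (b*a)^k * (b*a) * ((b*a)^k * b) = ((b*a)^k * (b*a) * (b*a)^k) * b by group,
          ← pow_succ, ← pow_add, show k + 1 + k = 2*k+1 by omega]
      rw [this]
    have hfc : a * (b * ((a*b)^k * t * (b*a)^k) * b) * a = (a*b)^(k+1) * t * (b*a)^(k+1) := by
      rw [pow_succ' (a*b), pow_succ (b*a)]; group
    have hrange : 2 * (k+1) = (2*k) + 1 + 1 := by omega
    rw [hrange, Finset.prod_range_succ, Finset.prod_range_succ]
    refine Prod.ext ?_ ?_
    · simpa using hfc
    · show (if _ then _ else _) = _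
      rw [if_congr cond2 rfl rfl, if_congr cond1 rfl rfl, double_flip]
      simp only [mul_assoc]



noncomputable def eta (i : B) : Equiv.Perm (W × ℤˣ) :=
  sig (cs.simple i) (cs.simple_mul_simple_self i)

lemma eta_braid (i i' : B) : (eta cs i * eta cs i') ^ M i i' = 1 := by
  apply Equiv.ext
  rintro ⟨t, ε⟩
  rw [eta, eta, sig_pow_apply]
  have h1 : (cs.simple i * cs.simple i') ^ M i i' = 1 := cs.simple_mul_simple_pow i i'
  have h2 : (cs.simple i' * cs.simple i) ^ M i i' = 1 := cs.simple_mul_simple_pow' i i'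
  rw [h1, h2, two_mul, Finset.prod_range_add]
  have hper : ∀ j : ℕ,
      (if t = (cs.simple i' * cs.simple i) ^ (M i i' + j) * cs.simple i' then (-1:ℤˣ) else 1)
        = (if t = (cs.simple i' * cs.simple i) ^ j * cs.simple i' then (-1:ℤˣ) else 1) := by
    intro j
    rw [pow_add, h2, one_mul]
  simp only [hper]
  rw [Int.units_mul_self]
  simp

noncomputable def phi : W →* Equiv.Perm (W × ℤˣ) :=
  cs.lift ⟨fun i => eta cs i, fun i i' => eta_braid cs i i'⟩

lemma phi_simple (i : B) : phi cs (cs.simple i) = eta cs i :=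
  cs.lift_apply_simple _ i

noncomputable def etaW (w t : W) : ℤˣ := ((phi cs w) (t, 1)).2

lemma phi_apply (w : W) : ∀ (t : W) (ε : ℤˣ),
    phi cs w (t, ε) = (w * t * w⁻¹, ε * etaW cs w t) := by
  induction w using cs.simple_induction_left with
  | one => intro t ε; simp [etaW, map_one, Equiv.Perm.one_apply]
  | mul_simple_left w i hw =>
    intro t ε
    have hm : phi cs (cs.simple i * w) = phi cs (cs.simple i) * phi cs w :=
      map_mul (phi cs) _ _
    have h2 : etaW cs (cs.simple i * w) t
        = (if w * t * w⁻¹ = cs.simple i then (-1:ℤˣ) else 1) * etaW cs w t := by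
      unfold etaW
      rw [hm, Equiv.Perm.mul_apply, hw t 1, phi_simple]
      show (sig _ _ _).2 = _
      rw [sig_apply]
      by_cases h : w * t * w⁻¹ = cs.simple i <;> simp [h]
    rw [hm, Equiv.Perm.mul_apply, hw t ε, phi_simple]
    show sig _ _ _ = _
    rw [sig_apply, h2]
    refine Prod.ext ?_ ?_
    · show cs.simple i * (w * t * w⁻¹) * cs.simple i = _
      rw [mul_inv_rev, cs.inv_simple]
      group
    · show (if w * t * w⁻¹ = cs.simple i then -(ε * etaW cs w t) else ε * etaW cs w t) = _
      by_cases h : w * t * w⁻¹ = cs.simple i <;> simp [h]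

lemma eta_one (t : W) : etaW cs 1 t = 1 := by
  simp [etaW, map_one, Equiv.Perm.one_apply]

lemma eta_cocycle (u v t : W) :
    etaW cs (u * v) t = etaW cs v t * etaW cs u (v * t * v⁻¹) := by
  unfold etaW
  rw [map_mul, Equiv.Perm.mul_apply, phi_apply cs v t 1, phi_apply cs u (v * t * v⁻¹) (1 * _)]
  simp [etaW]

lemma eta_simple (i : B) (t : W) :
    etaW cs (cs.simple i) t = if t = cs.simple i then -1 else 1 := by
  unfold etaW
  rw [phi_simple]
  rfl


lemma eta_wordProd_count (ω : List B) (t : W) :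
    etaW cs (cs.wordProd ω) t = (-1 : ℤˣ) ^ ((cs.rightInvSeq ω).count t) := by
  induction ω with
  | nil => simp [eta_one]
  | cons i ω ih =>
    rw [cs.wordProd_cons, eta_cocycle, ih, eta_simple]
    have hris : cs.rightInvSeq (i :: ω)
        = ((cs.wordProd ω)⁻¹ * cs.simple i * cs.wordProd ω) :: cs.rightInvSeq ω := rfl
    rw [hris, List.count_cons]
    have hcond : (cs.wordProd ω * t * (cs.wordProd ω)⁻¹ = cs.simple i)
        ↔ (t = (cs.wordProd ω)⁻¹ * cs.simple i * cs.wordProd ω) := by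
      rw [conj_eq_iff, inv_inv]
    by_cases h : t = (cs.wordProd ω)⁻¹ * cs.simple i * cs.wordProd ω
    · rw [if_pos (hcond.mpr h)]
      simp [h, pow_succ]
    · rw [if_neg (fun hc => h (hcond.mp hc))]
      have hbe : ((cs.wordProd ω)⁻¹ * cs.simple i * cs.wordProd ω == t) = false :=
        beq_eq_false_iff_ne.mpr (fun hc => h hc.symm)
      rw [hbe]
      simp

lemma eta_refl_self {t : W} (ht : cs.IsReflection t) : etaW cs t t = -1 := by
  obtain ⟨w, i, rfl⟩ := ht
  have h1 : etaW cs (w * cs.simple i * w⁻¹) (w * cs.simple i * w⁻¹)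
      = etaW cs w⁻¹ (w * cs.simple i * w⁻¹) * etaW cs (w * cs.simple i) (cs.simple i) := by
    have hc := eta_cocycle cs (w * cs.simple i) w⁻¹ (w * cs.simple i * w⁻¹)
    have e : w⁻¹ * (w * cs.simple i * w⁻¹) * w⁻¹⁻¹ = cs.simple i := by group
    rw [e] at hc
    exact hc
  have h2 : etaW cs (w * cs.simple i) (cs.simple i)
      = -1 * etaW cs w (cs.simple i) := by
    rw [eta_cocycle]
    have : cs.simple i * cs.simple i * (cs.simple i)⁻¹ = cs.simple i := by
      rw [cs.simple_mul_simple_self, one_mul, cs.inv_simple]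
    rw [this, eta_simple, if_pos rfl]
  have h3 : etaW cs w⁻¹ (w * cs.simple i * w⁻¹) * etaW cs w (cs.simple i) = 1 := by
    have h4 := eta_cocycle cs w w⁻¹ (w * cs.simple i * w⁻¹)
    rw [mul_inv_cancel] at h4
    rw [eta_one] at h4
    have h5 : w⁻¹ * (w * cs.simple i * w⁻¹) * w⁻¹⁻¹ = cs.simple i := by group
    rw [h5] at h4
    exact h4.symm
  rw [h1, h2]
  calc etaW cs w⁻¹ (w * cs.simple i * w⁻¹) * (-1 * etaW cs w (cs.simple i))
      = -1 * (etaW cs w⁻¹ (w * cs.simple i * w⁻¹) * etaW cs w (cs.simple i)) := mul_left_comm _ _ _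
    _ = -1 := by rw [h3, mul_one]

lemma eta_neg_iff {t : W} (ht : cs.IsReflection t) (w : W) :
    cs.length (w * t) < cs.length w ↔ etaW cs w t = -1 := by
  have key : ∀ v : W, etaW cs v t = -1 → cs.length (v * t) < cs.length v := by
    intro v hv
    obtain ⟨ω, hω, rfl⟩ := cs.exists_reduced_word' v
    rw [eta_wordProd_count] at hv
    have hne : (cs.rightInvSeq ω).count t ≠ 0 := by
      intro h0
      rw [h0, pow_zero] at hv
      exact (by decide : (1:ℤˣ) ≠ -1) hv
    have hmem : t ∈ cs.rightInvSeq ω := by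
      rw [← List.count_pos_iff]
      omega
    exact (cs.isRightInversion_of_mem_rightInvSeq hω hmem).2
  constructor
  · intro hlt
    rcases Int.units_eq_one_or (etaW cs w t) with h | h
    · exfalso
      have ha : t * t * t⁻¹ = t := by rw [ht.mul_self, one_mul, ht.inv]
      have h2 : etaW cs (w * t) t = -1 := by
        rw [eta_cocycle, ha, eta_refl_self cs ht, h, mul_one]
      have h3 := key (w * t) h2
      rw [mul_assoc, ht.mul_self, mul_one] at h3
      omega
    · exact h
  · exact key w

lemma chain_aux (A : Set W) (hA : ∀ t ∈ A, cs.IsReflection t) (I : Set W) :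
    ∀ n : ℕ, ∀ w w' : W, cs.length (w' * w⁻¹) = n →
      {t ∈ A | cs.length (w * t) < cs.length w} = I →
      {t ∈ A | cs.length (w' * t) < cs.length w'} = I →
      Relation.ReflTransGen (fun u v : W => v * u⁻¹ ∈ Set.range cs.simple ∧
        {t ∈ A | cs.length (v * t) < cs.length v} = I) w w' := by
  intro n
  induction n using Nat.strong_induction_on with
  | _ n ih =>
    intro w w' hn hw hw'
    rcases eq_or_ne (w' * w⁻¹) 1 with h1 | h1
    · have : w' = w := by
        rw [mul_inv_eq_one] at h1
        exact h1
      rw [this]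
    · obtain ⟨i, hi⟩ := cs.exists_rightDescent_of_ne_one h1
      have hi' : cs.length (w' * w⁻¹ * cs.simple i) < cs.length (w' * w⁻¹) := hi
      have hus : etaW cs (w' * w⁻¹) (cs.simple i) = -1 :=
        (eta_neg_iff cs (cs.isReflection_simple i) _).mp hi'
      have hclass : {t ∈ A | cs.length (cs.simple i * w * t) < cs.length (cs.simple i * w)} = I := by
        ext t
        by_cases htA : t ∈ A
        · have htr := hA t htA
          have hwmem : t ∈ I ↔ cs.length (w * t) < cs.length w := by
            rw [← hw]; simp [htA]
          have hw'mem : t ∈ I ↔ cs.length (w' * t) < cs.length w' := by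
            rw [← hw']; simp [htA]
          by_cases hcnj : w * t * w⁻¹ = cs.simple i
          · exfalso
            have e0 : w' = (w' * w⁻¹) * w := by group
            have e1 : etaW cs w' t = - etaW cs w t := by
              rw [e0, eta_cocycle, hcnj, hus, mul_neg_one]
            rcases Int.units_eq_one_or (etaW cs w t) with h | h
            · have hnw : ¬ cs.length (w * t) < cs.length w := by
                rw [eta_neg_iff cs htr, h]
                decide
              have hyw' : cs.length (w' * t) < cs.length w' := by
                rw [eta_neg_iff cs htr, e1, h]
              exact hnw (hwmem.mp (hw'mem.mpr hyw'))
            · have hyw : cs.length (w * t) < cs.length w := by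
                rw [eta_neg_iff cs htr, h]
              have hnw' : ¬ cs.length (w' * t) < cs.length w' := by
                rw [eta_neg_iff cs htr, e1, h]
                decide
              exact hnw' (hw'mem.mp (hwmem.mpr hyw))
          · have e2 : etaW cs (cs.simple i * w) t = etaW cs w t := by
              rw [eta_cocycle, eta_simple, if_neg hcnj, mul_one]
            have e3 : cs.length (cs.simple i * w * t) < cs.length (cs.simple i * w)
                ↔ cs.length (w * t) < cs.length w := by
              rw [eta_neg_iff cs htr, eta_neg_iff cs htr w, ← e2]
            simp only [Set.mem_setOf_eq, htA, true_and]
            rw [e3, ← hwmem]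
        · simp only [Set.mem_setOf_eq, htA, false_and, false_iff]
          intro hc
          rw [← hw] at hc
          exact htA hc.1
      have hrel : (cs.simple i * w) * w⁻¹ ∈ Set.range cs.simple ∧
          {t ∈ A | cs.length ((cs.simple i * w) * t) < cs.length (cs.simple i * w)} = I := by
        constructor
        · exact ⟨i, by group⟩
        · convert hclass using 3
      have hlen : cs.length (w' * (cs.simple i * w)⁻¹) < n := by
        have e4 : w' * (cs.simple i * w)⁻¹ = (w' * w⁻¹) * cs.simple i := by
          rw [mul_inv_rev, cs.inv_simple]
          group
        rw [e4, ← hn]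
        exact hi'
      exact Relation.ReflTransGen.head hrel
        (ih _ hlen (cs.simple i * w) w' rfl hclass hw')

end DCLC

/-- Each descent class `D_I^A = {w : D_A(w) = I}` is left-connected:
any two of its elements are joined by a chain inside the class whose consecutive
left quotients are simple reflections. -/
theorem descent_class_left_connected {B W : Type*} [Group W] {M : CoxeterMatrix B}
    (cs : CoxeterSystem M W) (A : Set W) (hA : ∀ t ∈ A, cs.IsReflection t)
    (I : Set W) (hI : ∃ w : W, {t ∈ A | cs.length (w * t) < cs.length w} = I)
    (w w' : W)
    (hw : {t ∈ A | cs.length (w * t) < cs.length w} = I)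
    (hw' : {t ∈ A | cs.length (w' * t) < cs.length w'} = I) :
    Relation.ReflTransGen
      (fun u v : W => v * u⁻¹ ∈ Set.range cs.simple ∧
        {t ∈ A | cs.length (v * t) < cs.length v} = I) w w' :=
  DCLC.chain_aux cs A hA I (cs.length (w' * w⁻¹)) w w' rfl hw hw'
end

section
/- Let (W,S) be a Coxeter system with reflections T. Suppose A ⊆ T satisfies: there exist subsets S₁, S₂ of S with A = S₁ ∪ (∪_{s∈S₂} C(s)), where C(s) is the conjugacy class of s in W. Then A is nice: for every r ∈ A and w ∈ W with w⁻¹ r w ∉ A, one has D_A(rw) = D_A(w). -/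
namespace CoxeterNiceAux

open CoxeterSystem List

open scoped Classical

noncomputable section

variable {B W : Type*} [Group W] {M : CoxeterMatrix B} (cs : CoxeterSystem M W)

/-- The generator involution on `W × ℤˣ`. -/
def etaFun (i : B) : W × ℤˣ → W × ℤˣ :=
  fun p => (cs.simple i * p.1 * cs.simple i, if p.1 = cs.simple i then -p.2 else p.2)

lemma etaFun_involutive (i : B) : Function.Involutive (etaFun cs i) := by
  intro p
  obtain ⟨t, ε⟩ := p
  unfold etaFun
  simp only
  have hfix : cs.simple i * t * cs.simple i = cs.simple i ↔ t = cs.simple i := by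
    constructor
    · intro hc
      have h2 : t = (cs.simple i)⁻¹ * (cs.simple i * t * cs.simple i) * (cs.simple i)⁻¹ := by
        group
      rw [hc] at h2
      rw [h2, cs.inv_simple, cs.simple_mul_simple_self, one_mul]
    · intro hc; rw [hc, cs.simple_mul_simple_self, one_mul]
  have hcomp : cs.simple i * (cs.simple i * t * cs.simple i) * cs.simple i = t := by
    have h := cs.simple_mul_simple_self i
    calc cs.simple i * (cs.simple i * t * cs.simple i) * cs.simple i
        = (cs.simple i * cs.simple i) * t * (cs.simple i * cs.simple i) := by group
      _ = t := by rw [h]; group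
  rw [hfix]
  by_cases h : t = cs.simple i <;> simp [h, hcomp]

/-- The generator permutation. -/
def eta1 (i : B) : Equiv.Perm (W × ℤˣ) := (etaFun_involutive cs i).toPerm

lemma eta1_apply (i : B) (t : W) (ε : ℤˣ) :
    eta1 cs i (t, ε) = (cs.simple i * t * cs.simple i, if t = cs.simple i then -ε else ε) := rfl

lemma eta1_liftable : M.IsLiftable (eta1 cs) := by
  intro i j
  set a := cs.simple i with ha
  set b := cs.simple j with hb
  set q : W := a * b with hqdef
  set m := M i j with hm
  have hq : q ^ m = 1 := cs.simple_mul_simple_pow i j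
  have hbinv : b⁻¹ = b := cs.inv_simple j
  have hainv : a⁻¹ = a := cs.inv_simple i
  have hqinv : q⁻¹ = b * a := by rw [hqdef, mul_inv_rev, hainv, hbinv]
  have hbq : q⁻¹ * b * q = b * q ^ 2 := by
    rw [hqinv, hqdef, pow_two]; group
  -- the single step
  have step : ∀ (t : W) (ε : ℤˣ), (eta1 cs i * eta1 cs j) (t, ε) =
      (q * t * q⁻¹, ε * ((if t = b * q ^ 0 then (-1 : ℤˣ) else 1)
        * (if t = b * q ^ 1 then (-1 : ℤˣ) else 1))) := by
    intro t ε
    rw [Equiv.Perm.mul_apply, eta1_apply, eta1_apply]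
    have hcond : b * t * b = a ↔ t = b * q ^ 1 := by
      constructor
      · intro hc
        have : t = b⁻¹ * (b * t * b) * b⁻¹ := by group
        rw [hc, hbinv] at this
        rw [this, pow_one, hqdef]
        group
      · intro hc
        rw [hc, pow_one, hqdef]
        have hbb : b * b = 1 := cs.simple_mul_simple_self j
        calc b * (b * (a * b)) * b = (b * b) * a * (b * b) := by group
          _ = a := by rw [hbb]; group
    have hfirst : a * (b * t * b) * a = q * t * q⁻¹ := by
      rw [hqinv, hqdef]; group
    have hc0 : (t = b) ↔ (t = b * q ^ 0) := by rw [pow_zero, mul_one]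
    by_cases h1 : t = b <;> by_cases h2 : b * t * b = a
    · rw [if_pos h1, if_pos h2, hfirst, if_pos (hc0.mp h1), if_pos (hcond.mp h2)]
      simp
    · rw [if_pos h1, if_neg h2, hfirst, if_pos (hc0.mp h1),
        if_neg (fun hh => h2 (hcond.mpr hh))]
      simp
    · rw [if_neg h1, if_pos h2, hfirst, if_neg (fun hh => h1 (hc0.mpr hh)),
        if_pos (hcond.mp h2)]
      simp
    · rw [if_neg h1, if_neg h2, hfirst, if_neg (fun hh => h1 (hc0.mpr hh)),
        if_neg (fun hh => h2 (hcond.mpr hh))]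
      simp
  -- the iterate
  have key : ∀ (k : ℕ) (t : W) (ε : ℤˣ), ((eta1 cs i * eta1 cs j) ^ k) (t, ε) =
      (q ^ k * t * (q ^ k)⁻¹,
        ε * ∏ r ∈ Finset.range (2 * k), (if t = b * q ^ r then (-1 : ℤˣ) else 1)) := by
    intro k
    induction k with
    | zero => intro t ε; simp
    | succ k ih =>
      intro t ε
      have hshift : ∀ r : ℕ, (q * t * q⁻¹ = b * q ^ r) ↔ (t = b * q ^ (r + 1 + 1)) := by
        intro r
        have hqq : q * q ^ r = q ^ r * q := by
          rw [← pow_succ', ← pow_succ]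
        have base : q⁻¹ * (b * q ^ r) * q = b * q ^ (r + 1 + 1) := by
          calc q⁻¹ * (b * q ^ r) * q = q⁻¹ * b * (q ^ r * q) := by group
            _ = q⁻¹ * b * (q * q ^ r) := by rw [hqq]
            _ = (q⁻¹ * b * q) * q ^ r := by group
            _ = b * q ^ 2 * q ^ r := by rw [hbq]
            _ = b * q ^ (r + 1 + 1) := by
                rw [mul_assoc, ← pow_add]
                norm_num
                rw [add_comm]
        constructor
        · intro hc
          have h2 : t = q⁻¹ * (b * q ^ r) * q := by rw [← hc]; group
          rw [h2, base]
        · intro hc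
          rw [hc, ← base]
          group
      rw [pow_succ, Equiv.Perm.mul_apply, step, ih]
      rw [Prod.mk.injEq]
      constructor
      · rw [pow_succ]
        group
      · have hresh : (∏ r ∈ Finset.range (2 * k),
            (if q * t * q⁻¹ = b * q ^ r then (-1 : ℤˣ) else 1))
            = ∏ r ∈ Finset.range (2 * k), (if t = b * q ^ (r + 1 + 1) then (-1 : ℤˣ) else 1) := by
          refine Finset.prod_congr rfl fun r _ => ?_
          simp only [hshift r]
        rw [hresh]
        have h2 : 2 * (k + 1) = 2 * k + 1 + 1 := by ring
        rw [h2, Finset.prod_range_succ', Finset.prod_range_succ']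
        simp only [pow_zero, mul_one, pow_one, zero_add]
        ring_nf
        simp only [mul_comm, mul_left_comm, mul_assoc]
  -- conclude
  show (eta1 cs i * eta1 cs j) ^ m = 1
  apply Equiv.ext
  rintro ⟨t, ε⟩
  rw [key m t ε]
  have hsplit : (∏ r ∈ Finset.range (2 * m), (if t = b * q ^ r then (-1 : ℤˣ) else 1)) = 1 := by
    rw [two_mul, Finset.prod_range_add]
    have : ∀ r : ℕ, (if t = b * q ^ (m + r) then (-1 : ℤˣ) else 1)
        = (if t = b * q ^ r then (-1 : ℤˣ) else 1) := by
      intro r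
      rw [pow_add, hq, one_mul]
    simp only [this]
    exact Int.units_mul_self _
  rw [hsplit, hq]
  simp

/-- The reflection representation on `W × ℤˣ`. -/
def eta : W →* Equiv.Perm (W × ℤˣ) := cs.lift ⟨eta1 cs, eta1_liftable cs⟩

lemma eta_simple (i : B) : eta cs (cs.simple i) = eta1 cs i :=
  cs.lift_apply_simple (eta1_liftable cs) i

/-- The sign of `t` under `w`. -/
def sgn (w t : W) : ℤˣ := ((eta cs w) (t, 1)).2

lemma eta_apply (w t : W) (ε : ℤˣ) :
    eta cs w (t, ε) = (w * t * w⁻¹, ε * sgn cs w t) := by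
  unfold sgn
  refine cs.simple_induction
    (p := fun w => ∀ (t : W) (ε : ℤˣ), eta cs w (t, ε) = (w * t * w⁻¹, ε * (eta cs w (t, 1)).2))
    w ?_ ?_ ?_ t ε
  · intro i t ε
    rw [eta_simple, eta1_apply, eta1_apply, cs.inv_simple]
    by_cases h : t = cs.simple i <;> simp [h]
  · intro t ε
    simp
  · intro u v hu hv t ε
    rw [map_mul, Equiv.Perm.mul_apply, Equiv.Perm.mul_apply, hv t ε, hv t 1, one_mul,
      hu (v * t * v⁻¹) (ε * (((eta cs) v) (t, 1)).2),
      hu (v * t * v⁻¹) ((((eta cs) v) (t, 1)).2)]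
    rw [Prod.mk.injEq]
    constructor
    · rw [mul_inv_rev]; group
    · rw [mul_assoc]

lemma sgn_mul (u v t : W) : sgn cs (u * v) t = sgn cs u (v * t * v⁻¹) * sgn cs v t := by
  show ((eta cs (u * v)) (t, 1)).2 = _
  rw [map_mul, Equiv.Perm.mul_apply, eta_apply cs v t 1, one_mul,
    eta_apply cs u (v * t * v⁻¹) (sgn cs v t)]
  exact mul_comm _ _

lemma sgn_one (t : W) : sgn cs 1 t = 1 := by
  unfold sgn
  simp

lemma sgn_simple (i : B) (t : W) :
    sgn cs (cs.simple i) t = if t = cs.simple i then -1 else 1 := by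
  unfold sgn
  rw [eta_simple, eta1_apply]

lemma sgn_refl {t : W} (ht : cs.IsReflection t) : sgn cs t t = -1 := by
  obtain ⟨u, i, rfl⟩ := ht
  set x : W := u * cs.simple i * u⁻¹ with hx
  have h0 : sgn cs u (cs.simple i) * sgn cs u⁻¹ x = 1 := by
    have h1 : u⁻¹ * x * (u⁻¹)⁻¹ = cs.simple i := by rw [hx]; group
    have := sgn_mul cs u u⁻¹ x
    rw [mul_inv_cancel, sgn_one, h1] at this
    exact this.symm
  have h2 : x = u * (cs.simple i * u⁻¹) := by rw [hx]; group
  have h3 : (cs.simple i * u⁻¹) * x * (cs.simple i * u⁻¹)⁻¹ = cs.simple i := by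
    rw [hx, mul_inv_rev, inv_inv, cs.inv_simple]
    have : cs.simple i * u⁻¹ * (u * cs.simple i * u⁻¹) * (u * cs.simple i)
        = cs.simple i * cs.simple i * cs.simple i := by group
    rw [this, cs.simple_mul_simple_self, one_mul]
  have h4 : u⁻¹ * x * (u⁻¹)⁻¹ = cs.simple i := by rw [hx]; group
  calc sgn cs x x = sgn cs (u * (cs.simple i * u⁻¹)) x := by rw [← h2]
    _ = sgn cs u ((cs.simple i * u⁻¹) * x * (cs.simple i * u⁻¹)⁻¹)
        * (sgn cs (cs.simple i) (u⁻¹ * x * (u⁻¹)⁻¹) * sgn cs u⁻¹ x) := by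
        rw [sgn_mul, sgn_mul]
    _ = sgn cs u (cs.simple i) * ((-1) * sgn cs u⁻¹ x) := by
        rw [h3, h4, sgn_simple, if_pos rfl]
    _ = -(sgn cs u (cs.simple i) * sgn cs u⁻¹ x) := by rw [neg_one_mul, mul_neg]
    _ = -1 := by rw [h0]

lemma mem_ris_of_sgn (ω : List B) (t : W) (h : sgn cs (cs.wordProd ω) t = -1) :
    t ∈ cs.rightInvSeq ω := by
  induction ω with
  | nil =>
    rw [cs.wordProd_nil, sgn_one] at h
    exact absurd h (by decide)
  | cons i ω ih =>
    rw [cs.wordProd_cons, sgn_mul] at h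
    show t ∈ ((cs.wordProd ω)⁻¹ * cs.simple i * cs.wordProd ω) :: cs.rightInvSeq ω
    by_cases hc : cs.wordProd ω * t * (cs.wordProd ω)⁻¹ = cs.simple i
    · have : t = (cs.wordProd ω)⁻¹ * cs.simple i * cs.wordProd ω := by
        rw [← hc]; group
      rw [this]
      exact List.mem_cons_self
    · rw [sgn_simple, if_neg hc, one_mul] at h
      exact List.mem_cons_of_mem _ (ih h)

lemma isRightInversion_of_sgn (w t : W) (h : sgn cs w t = -1) :
    cs.IsRightInversion w t := by
  obtain ⟨ω, hl, hw⟩ := cs.exists_reduced_word w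
  have hred : cs.IsReduced ω := by rw [CoxeterSystem.IsReduced, ← hw]; rw [hw]; exact hl
  rw [hw] at h ⊢
  exact cs.isRightInversion_of_mem_rightInvSeq hred (mem_ris_of_sgn cs ω t h)

lemma inversion_iff (w : W) {t : W} (ht : cs.IsReflection t) :
    cs.length (w * t) < cs.length w ↔ sgn cs w t = -1 := by
  constructor
  · intro hlt
    by_contra hs
    rcases Int.units_eq_one_or (sgn cs w t) with h1 | h1
    · have h2 : sgn cs (w * t) t = -1 := by
        have h3 : t * t * t⁻¹ = t := by group
        rw [sgn_mul, h3, h1, sgn_refl cs ht, one_mul]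
      have h4 := (isRightInversion_of_sgn cs (w * t) t h2).2
      rw [mul_assoc, ht.mul_self, mul_one] at h4
      exact absurd hlt (lt_asymm h4)
    · exact hs h1
  · intro h
    exact (isRightInversion_of_sgn cs w t h).2

/-- Key lemma: multiplying on the left by a simple reflection other than `w * t * w⁻¹`
does not change whether `t` is a right inversion. -/
lemma key_lemma (i : B) (w : W) {t : W} (ht : cs.IsReflection t)
    (hne : w * t * w⁻¹ ≠ cs.simple i) :
    cs.length (cs.simple i * w * t) < cs.length (cs.simple i * w) ↔
      cs.length (w * t) < cs.length w := by
  rw [mul_assoc, ← mul_assoc (cs.simple i) w t]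
  rw [inversion_iff cs (cs.simple i * w) ht, inversion_iff cs w ht]
  rw [sgn_mul, sgn_simple, if_neg hne, one_mul]

end
end CoxeterNiceAux

/-- If `A = S₁ ∪ (⋃_{s ∈ S₂} C(s))` for subsets `S₁, S₂` of `S`,
then `A` is nice: for every `r ∈ A` and `w ∈ W` with `w⁻¹ r w ∉ A`,
`D_A(rw) = D_A(w)`. -/
theorem union_of_simples_and_classes_is_nice {B W : Type*} [Group W] {M : CoxeterMatrix B}
    (cs : CoxeterSystem M W) (S₁ S₂ : Set B) (A : Set W)
    (hA : A = cs.simple '' S₁ ∪ ⋃ i ∈ S₂, {x : W | ∃ w : W, x = w * cs.simple i * w⁻¹})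
    (r : W) (hr : r ∈ A) (w : W) (hrw : w⁻¹ * r * w ∉ A) :
    {t ∈ A | cs.length (r * w * t) < cs.length (r * w)} =
      {t ∈ A | cs.length (w * t) < cs.length w} := by
  -- every element of A is a reflection
  have hrefl : ∀ t ∈ A, cs.IsReflection t := by
    intro t ht
    rw [hA] at ht
    rcases ht with ⟨i, _, rfl⟩ | ht
    · exact cs.isReflection_simple i
    · simp only [Set.mem_iUnion, Set.mem_setOf_eq] at ht
      obtain ⟨i, _, u, rfl⟩ := ht
      exact ⟨u, i, rfl⟩
  -- r must be a simple reflection from S₁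
  have hr' := hr
  rw [hA] at hr'
  rcases hr' with ⟨i₀, hi₀, hr_eq⟩ | hr2
  swap
  · exfalso
    simp only [Set.mem_iUnion, Set.mem_setOf_eq] at hr2
    obtain ⟨i, hi, u, rfl⟩ := hr2
    apply hrw
    rw [hA]
    right
    simp only [Set.mem_iUnion, Set.mem_setOf_eq]
    exact ⟨i, hi, w⁻¹ * u, by group⟩
  -- now r = cs.simple i₀
  ext t
  simp only [Set.mem_setOf_eq]
  refine and_congr_right fun htA => ?_
  have ht : cs.IsReflection t := hrefl t htA
  have hne : w * t * w⁻¹ ≠ cs.simple i₀ := by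
    intro heq
    apply hrw
    have : t = w⁻¹ * r * w := by
      rw [← hr_eq, ← heq]; group
    rw [← this]
    exact htA
  rw [← hr_eq]
  exact CoxeterNiceAux.key_lemma cs i₀ w ht hne
end

section
/- Let W be a finite Coxeter group with reflections T and A ⊆ T nice. For I, J A-admissible, w ∈ W and s ∈ S with w ⌣_A sw (i.e., w⁻¹sw ∉ A), the bijection ψ_s^A on W × W (defined by ψ_s^A(u,v) = (su,v) if u⁻¹su ∉ A, and (u, u⁻¹su·v) otherwise) maps {(u,v) ∈ D_I^A × D_J^A : uv = w} bijectively onto {(u,v) ∈ D_I^A × D_J^A : uv = sw}. -/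
namespace PsiAux

open CoxeterSystem List
open scoped Classical

section GroupAux

variable {G : Type*} [Group G]

lemma conj_eq_iff (a x y : G) : a * x * a⁻¹ = y ↔ x = a⁻¹ * y * a := by
  constructor <;> intro h <;> subst h <;> group

lemma inv_pow_mul_inv_pow (g : G) (m k : ℕ) :
    (g ^ m)⁻¹ * (g ^ k)⁻¹ = (g ^ (k + m))⁻¹ := by
  rw [← mul_inv_rev, ← pow_add]

variable {a b : G} (ha : a⁻¹ = a) (hb : b⁻¹ = b)

include ha hb in
lemma gl1 (n : ℕ) : b * (a * b) ^ n = ((a * b) ^ n)⁻¹ * b := by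
  induction n with
  | zero => simp
  | succ n ih =>
      have key : b * (a * b) = (a * b)⁻¹ * b := by
        rw [mul_inv_rev, ha, hb]; simp only [mul_assoc]
      calc b * (a * b) ^ (n + 1)
          = (b * (a * b)) * (a * b) ^ n := by rw [pow_succ']; simp only [mul_assoc]
        _ = (a * b)⁻¹ * (b * (a * b) ^ n) := by rw [key]; simp only [mul_assoc]
        _ = (a * b)⁻¹ * (((a * b) ^ n)⁻¹ * b) := by rw [ih]
        _ = ((a * b)⁻¹ * ((a * b) ^ n)⁻¹) * b := by simp only [mul_assoc]
        _ = ((a * b) ^ (n + 1))⁻¹ * b := by rw [← mul_inv_rev, ← pow_succ]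

include ha hb in
lemma gl2 (n : ℕ) :
    ((a * b) ^ n)⁻¹ * b * (a * b) ^ n = ((a * b) ^ (2 * n))⁻¹ * b := by
  rw [mul_assoc, gl1 ha hb, ← mul_assoc, inv_pow_mul_inv_pow, two_mul]

include ha hb in
lemma gl3 (n : ℕ) :
    (b * (a * b) ^ n)⁻¹ * a * (b * (a * b) ^ n) = ((a * b) ^ (2 * n + 1))⁻¹ * b := by
  have hba : b * a = (a * b)⁻¹ := by rw [mul_inv_rev, ha, hb]
  calc (b * (a * b) ^ n)⁻¹ * a * (b * (a * b) ^ n)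
      = ((a * b) ^ n)⁻¹ * (b * (a * (b * (a * b) ^ n))) := by
        rw [mul_inv_rev, hb]; simp only [mul_assoc]
    _ = ((a * b) ^ n)⁻¹ * (b * (a * (((a * b) ^ n)⁻¹ * b))) := by rw [gl1 ha hb]
    _ = ((a * b) ^ n)⁻¹ * ((b * a) * (((a * b) ^ n)⁻¹ * b)) := by simp only [mul_assoc]
    _ = ((a * b) ^ n)⁻¹ * ((a * b)⁻¹ * (((a * b) ^ n)⁻¹ * b)) := by rw [hba]
    _ = (((a * b) ^ n)⁻¹ * ((a * b) ^ 1)⁻¹) * (((a * b) ^ n)⁻¹ * b) := by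
        rw [pow_one]; simp only [mul_assoc]
    _ = ((a * b) ^ (1 + n))⁻¹ * (((a * b) ^ n)⁻¹ * b) := by rw [inv_pow_mul_inv_pow]
    _ = (((a * b) ^ (1 + n))⁻¹ * ((a * b) ^ n)⁻¹) * b := by simp only [mul_assoc]
    _ = ((a * b) ^ (n + (1 + n)))⁻¹ * b := by rw [inv_pow_mul_inv_pow]
    _ = ((a * b) ^ (2 * n + 1))⁻¹ * b := by rw [show n + (1 + n) = 2 * n + 1 from by ring]

end GroupAux

variable {B W : Type*} [Group W] {M : CoxeterMatrix B} (cs : CoxeterSystem M W)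

/-- The basic involution on `W × ℤˣ` attached to the simple reflection `i`. -/
noncomputable def fmap (i : B) : W × ℤˣ → W × ℤˣ :=
  fun q => (cs.simple i * q.1 * cs.simple i, if q.1 = cs.simple i then -q.2 else q.2)

lemma fmap_involutive (i : B) : Function.Involutive (fmap cs i) := by
  rintro ⟨t, ε⟩
  have hfst : ∀ x : W, cs.simple i * (cs.simple i * x * cs.simple i) * cs.simple i = x := by
    intro x
    simp [mul_assoc, cs.simple_mul_simple_cancel_left, cs.simple_mul_simple_self]
  have hc : cs.simple i * t * cs.simple i = cs.simple i ↔ t = cs.simple i := by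
    constructor
    · intro h
      have h2 := congrArg (fun z => cs.simple i * z * cs.simple i) h
      change cs.simple i * (cs.simple i * t * cs.simple i) * cs.simple i = cs.simple i * cs.simple i * cs.simple i at h2
      rw [hfst t] at h2
      rw [h2]
      simp [mul_assoc, cs.simple_mul_simple_self]
    · intro h
      rw [h]
      simp [mul_assoc, cs.simple_mul_simple_self]
  simp only [fmap]
  rw [Prod.mk.injEq]
  refine ⟨hfst t, ?_⟩
  simp only [hc]
  by_cases h : t = cs.simple i <;> simp [h]

/-- The basic involution as a permutation. -/
noncomputable def fperm (i : B) : Equiv.Perm (W × ℤˣ) := (fmap_involutive cs i).toPerm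

lemma fperm_apply (i : B) (q : W × ℤˣ) : fperm cs i q = fmap cs i q := rfl

lemma fperm_pow_apply (i i' : B) (t : W) (ε : ℤˣ) (n : ℕ) :
    ((fperm cs i * fperm cs i') ^ n) (t, ε)
      = ((cs.simple i * cs.simple i') ^ n * t * ((cs.simple i * cs.simple i') ^ n)⁻¹,
        (∏ k ∈ Finset.range (2 * n),
          (if t = ((cs.simple i * cs.simple i') ^ k)⁻¹ * cs.simple i' then (-1 : ℤˣ) else 1)) * ε) := by
  induction n with
  | zero => simp
  | succ n ih =>
      have ha' : (cs.simple i)⁻¹ = cs.simple i := cs.inv_simple i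
      have hb' : (cs.simple i')⁻¹ = cs.simple i' := cs.inv_simple i'
      have cond1 : ((cs.simple i * cs.simple i') ^ n * t * ((cs.simple i * cs.simple i') ^ n)⁻¹
            = cs.simple i')
          ↔ t = ((cs.simple i * cs.simple i') ^ (2 * n))⁻¹ * cs.simple i' := by
        rw [conj_eq_iff, gl2 ha' hb']
      have cond2 : (cs.simple i' * ((cs.simple i * cs.simple i') ^ n * t *
              ((cs.simple i * cs.simple i') ^ n)⁻¹) * cs.simple i' = cs.simple i)
          ↔ t = ((cs.simple i * cs.simple i') ^ (2 * n + 1))⁻¹ * cs.simple i' := by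
        rw [show cs.simple i' * ((cs.simple i * cs.simple i') ^ n * t *
              ((cs.simple i * cs.simple i') ^ n)⁻¹) * cs.simple i'
            = (cs.simple i' * (cs.simple i * cs.simple i') ^ n) * t *
              (cs.simple i' * (cs.simple i * cs.simple i') ^ n)⁻¹ from by
          rw [mul_inv_rev, hb']; simp only [mul_assoc],
          conj_eq_iff, gl3 ha' hb']
      rw [pow_succ', Equiv.Perm.mul_apply, ih, Equiv.Perm.mul_apply, fperm_apply, fperm_apply]
      simp only [fmap]
      rw [Prod.mk.injEq]
      constructor
      · simp only [pow_succ', mul_inv_rev, cs.inv_simple, mul_assoc]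
      · rw [show 2 * (n + 1) = 2 * n + 1 + 1 from by ring, Finset.prod_range_succ,
          Finset.prod_range_succ]
        simp only [cond1, cond2]
        by_cases h1 : t = ((cs.simple i * cs.simple i') ^ (2 * n))⁻¹ * cs.simple i' <;>
          by_cases h2 : t = ((cs.simple i * cs.simple i') ^ (2 * n + 1))⁻¹ * cs.simple i'
        · simp only [if_pos h1, if_pos h2]
          simp [mul_assoc]
        · simp only [if_pos h1, if_neg h2]
          simp [mul_assoc]
        · simp only [if_neg h1, if_pos h2]
          simp [mul_assoc]
        · simp only [if_neg h1, if_neg h2]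
          simp [mul_assoc]

lemma liftable : M.IsLiftable (fperm cs : B → Equiv.Perm (W × ℤˣ)) := by
  intro i i'
  refine Equiv.ext fun q => ?_
  obtain ⟨t, ε⟩ := q
  rw [fperm_pow_apply, Equiv.Perm.one_apply]
  have hp : (cs.simple i * cs.simple i') ^ M i i' = 1 := cs.simple_mul_simple_pow i i'
  have hper : ∀ k, (cs.simple i * cs.simple i') ^ (M i i' + k)
      = (cs.simple i * cs.simple i') ^ k := by
    intro k; rw [pow_add, hp, one_mul]
  have hprod : (∏ k ∈ Finset.range (2 * M i i'),
      (if t = ((cs.simple i * cs.simple i') ^ k)⁻¹ * cs.simple i' then (-1 : ℤˣ) else 1)) = 1 := by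
    rw [two_mul, Finset.prod_range_add]
    simp only [hper]
    exact Int.units_mul_self _
  rw [hp, hprod]
  simp

/-- The sign representation `W →* Perm (W × ℤˣ)`. -/
noncomputable def phi : W →* Equiv.Perm (W × ℤˣ) := cs.lift ⟨fperm cs, liftable cs⟩

lemma phi_simple (i : B) : phi cs (cs.simple i) = fperm cs i := cs.lift_apply_simple _ i

/-- The sign of `t` under `w`. -/
noncomputable def nsign (w t : W) : ℤˣ := ((phi cs w) (t, 1)).2

lemma nsign_one (t : W) : nsign cs 1 t = 1 := by
  show ((phi cs 1) (t, 1)).2 = 1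
  rw [map_one]
  rfl

lemma nsign_simple_self (j : B) : nsign cs (cs.simple j) (cs.simple j) = -1 := by
  show ((phi cs (cs.simple j)) (cs.simple j, 1)).2 = -1
  rw [phi_simple, fperm_apply]
  simp [fmap]

lemma phi_apply (w t : W) : ∀ ε : ℤˣ, phi cs w (t, ε) = (w * t * w⁻¹, nsign cs w t * ε) := by
  induction w using cs.simple_induction_left with
  | one =>
      intro ε
      rw [map_one, nsign_one]
      simp
  | mul_simple_left w' j ih =>
      intro ε
      rw [map_mul, Equiv.Perm.mul_apply, ih ε, phi_simple, fperm_apply]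
      have hsnd : nsign cs (cs.simple j * w') t
          = (if w' * t * w'⁻¹ = cs.simple j then -(nsign cs w' t) else nsign cs w' t) := by
        show ((phi cs (cs.simple j * w')) (t, 1)).2 = _
        rw [map_mul, Equiv.Perm.mul_apply, ih 1, phi_simple, fperm_apply]
        simp [fmap]
      simp only [fmap]
      rw [Prod.mk.injEq]
      constructor
      · rw [mul_inv_rev, cs.inv_simple]; simp only [mul_assoc]
      · rw [hsnd]
        by_cases h : w' * t * w'⁻¹ = cs.simple j <;> simp [h]

lemma nsign_mul (w v t : W) :
    nsign cs (w * v) t = nsign cs w (v * t * v⁻¹) * nsign cs v t := by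
  show ((phi cs (w * v)) (t, 1)).2 = _
  rw [map_mul, Equiv.Perm.mul_apply, phi_apply, phi_apply]
  simp

lemma nsign_self {t : W} (ht : cs.IsReflection t) : nsign cs t t = -1 := by
  obtain ⟨w, j, rfl⟩ := ht
  have c1 : w⁻¹ * (w * (cs.simple j * w⁻¹)) * w⁻¹⁻¹ = cs.simple j := by group
  have c2 : (cs.simple j * w⁻¹) * (w * (cs.simple j * w⁻¹)) * (cs.simple j * w⁻¹)⁻¹
      = cs.simple j := by group
  have hprod : nsign cs w (cs.simple j) * nsign cs w⁻¹ (w * (cs.simple j * w⁻¹)) = 1 := by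
    have h := nsign_mul cs w w⁻¹ (w * (cs.simple j * w⁻¹))
    rw [c1, mul_inv_cancel] at h
    rw [← h, nsign_one]
  rw [show w * cs.simple j * w⁻¹ = w * (cs.simple j * w⁻¹) from mul_assoc w _ _]
  rw [nsign_mul, nsign_mul, c1, c2, nsign_simple_self, neg_one_mul, mul_neg, hprod]

lemma nsign_mul_reflection (w : W) {t : W} (ht : cs.IsReflection t) :
    nsign cs (w * t) t = -nsign cs w t := by
  rw [nsign_mul, show t * t * t⁻¹ = t from by group, nsign_self cs ht, mul_neg_one]

lemma nsign_wordProd (ω : List B) (t : W) :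
    nsign cs (cs.wordProd ω) t
      = ((cs.rightInvSeq ω).map (fun r => if r = t then (-1 : ℤˣ) else 1)).prod := by
  induction ω with
  | nil => simp [nsign_one]
  | cons j ω ih =>
      have expand : nsign cs (cs.wordProd (j :: ω)) t
          = (if cs.wordProd ω * t * (cs.wordProd ω)⁻¹ = cs.simple j
              then -(nsign cs (cs.wordProd ω) t) else nsign cs (cs.wordProd ω) t) := by
        rw [cs.wordProd_cons]
        show ((phi cs (cs.simple j * cs.wordProd ω)) (t, 1)).2 = _
        rw [map_mul, Equiv.Perm.mul_apply, phi_apply cs (cs.wordProd ω) t 1, phi_simple,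
          fperm_apply]
        simp [fmap]
      rw [expand, show cs.rightInvSeq (j :: ω)
          = ((cs.wordProd ω)⁻¹ * cs.simple j * cs.wordProd ω) :: cs.rightInvSeq ω from rfl,
        List.map_cons, List.prod_cons, ← ih]
      by_cases h : (cs.wordProd ω)⁻¹ * cs.simple j * cs.wordProd ω = t
      · have h' : cs.wordProd ω * t * (cs.wordProd ω)⁻¹ = cs.simple j := by
          rw [← h]; group
        rw [if_pos h', if_pos h, neg_one_mul]
      · have h' : ¬ (cs.wordProd ω * t * (cs.wordProd ω)⁻¹ = cs.simple j) := by
          intro hc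
          apply h
          rw [← hc]; group
        rw [if_neg h', if_neg h, one_mul]

lemma length_lt_of_nsign (w : W) {t : W} (hn : nsign cs w t = -1) :
    cs.length (w * t) < cs.length w := by
  obtain ⟨ω, hred, rfl⟩ := cs.exists_reduced_word' w
  rw [nsign_wordProd] at hn
  have hmem : t ∈ cs.rightInvSeq ω := by
    by_contra hmem
    have hone : (((cs.rightInvSeq ω).map (fun r => if r = t then (-1 : ℤˣ) else 1)).prod) = 1 := by
      apply List.prod_eq_one
      intro x hx
      obtain ⟨r, hr, rfl⟩ := List.mem_map.mp hx
      rw [if_neg (fun (hc : r = t) => hmem (hc ▸ hr))]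
    rw [hone] at hn
    exact absurd hn (by decide)
  exact (cs.isRightInversion_of_mem_rightInvSeq hred hmem).2

lemma nsign_neg_iff {t : W} (ht : cs.IsReflection t) (w : W) :
    nsign cs w t = -1 ↔ cs.length (w * t) < cs.length w := by
  constructor
  · exact length_lt_of_nsign cs w
  · intro h
    have hvt : (w * t) * t = w := by rw [mul_assoc, ht.mul_self, mul_one]
    have h1 : nsign cs (w * t) t ≠ -1 := by
      intro hc
      have h2 := length_lt_of_nsign cs (w * t) hc
      rw [hvt] at h2
      omega
    have h2 : nsign cs (w * t) t = 1 := by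
      rcases Int.units_eq_one_or (nsign cs (w * t) t) with h' | h'
      · exact h'
      · exact absurd h' h1
    have h3 := nsign_mul_reflection cs (w * t) ht
    rw [hvt, h2] at h3
    rw [h3]

/-- **Key lemma.** A reflection `t` different from `u⁻¹ s u` is a right inversion of `u`
iff it is a right inversion of `s u`. -/
lemma key_lemma (i : B) (u : W) {t : W} (ht : cs.IsReflection t)
    (hne : u⁻¹ * cs.simple i * u ≠ t) :
    cs.length (u * t) < cs.length u ↔
      cs.length (cs.simple i * u * t) < cs.length (cs.simple i * u) := by
  have heq : nsign cs (cs.simple i * u) t = nsign cs u t := by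
    show ((phi cs (cs.simple i * u)) (t, 1)).2 = _
    rw [map_mul, Equiv.Perm.mul_apply, phi_apply cs u t 1, phi_simple, fperm_apply]
    have hc : ¬ (u * t * u⁻¹ = cs.simple i) := fun hc => hne (by rw [← hc]; group)
    simp [fmap, hc, nsign]
  rw [← nsign_neg_iff cs ht u, ← nsign_neg_iff cs ht (cs.simple i * u), heq]

lemma descent_simple_mul (A : Set W) (hA : ∀ t ∈ A, cs.IsReflection t) (i : B) (x : W)
    (hx : x⁻¹ * cs.simple i * x ∉ A) :
    {t ∈ A | cs.length (cs.simple i * x * t) < cs.length (cs.simple i * x)}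
      = {t ∈ A | cs.length (x * t) < cs.length x} := by
  ext t
  simp only [Set.mem_setOf_eq]
  constructor
  · rintro ⟨htA, hlen⟩
    exact ⟨htA, (key_lemma cs i x (hA t htA) (fun hc => hx (hc ▸ htA))).mpr hlen⟩
  · rintro ⟨htA, hlen⟩
    exact ⟨htA, (key_lemma cs i x (hA t htA) (fun hc => hx (hc ▸ htA))).mp hlen⟩

open scoped Classical in
lemma psi_mapsTo (A : Set W) (hA : ∀ t ∈ A, cs.IsReflection t)
    (hnice : ∀ r ∈ A, ∀ w : W, w⁻¹ * r * w ∉ A →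
      {t ∈ A | cs.length (r * w * t) < cs.length (r * w)} =
        {t ∈ A | cs.length (w * t) < cs.length w})
    (I J : Set W) (i : B) (w : W) (hw : w⁻¹ * cs.simple i * w ∉ A) :
    Set.MapsTo
      (fun p : W × W =>
        if p.1⁻¹ * cs.simple i * p.1 ∉ A then (cs.simple i * p.1, p.2)
        else (p.1, p.1⁻¹ * cs.simple i * p.1 * p.2))
      {p : W × W | {t ∈ A | cs.length (p.1 * t) < cs.length p.1} = I ∧
        {t ∈ A | cs.length (p.2 * t) < cs.length p.2} = J ∧ p.1 * p.2 = w}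
      {p : W × W | {t ∈ A | cs.length (p.1 * t) < cs.length p.1} = I ∧
        {t ∈ A | cs.length (p.2 * t) < cs.length p.2} = J ∧
        p.1 * p.2 = cs.simple i * w} := by
  rintro ⟨u, v⟩ ⟨h1, h2, h3⟩
  simp only [Set.mem_setOf_eq] at h1 h2 h3 ⊢
  by_cases hc : u⁻¹ * cs.simple i * u ∉ A
  · rw [if_pos hc]
    refine ⟨?_, h2, ?_⟩
    · rw [descent_simple_mul cs A hA i u hc]; exact h1
    · show cs.simple i * u * v = cs.simple i * w
      rw [mul_assoc, h3]
  · rw [if_neg hc]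
    push_neg at hc
    refine ⟨h1, ?_, ?_⟩
    · have hv : v⁻¹ * (u⁻¹ * cs.simple i * u) * v ∉ A := by
        have he : v⁻¹ * (u⁻¹ * cs.simple i * u) * v = w⁻¹ * cs.simple i * w := by
          rw [← h3]; group
        rw [he]; exact hw
      have hn := hnice (u⁻¹ * cs.simple i * u) hc v hv
      rw [hn]
      exact h2
    · show u * (u⁻¹ * cs.simple i * u * v) = cs.simple i * w
      rw [← h3]; group

open scoped Classical in
lemma psi_invol (A : Set W) (i : B) (p : W × W) :
    (fun p : W × W =>
        if p.1⁻¹ * cs.simple i * p.1 ∉ A then (cs.simple i * p.1, p.2)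
        else (p.1, p.1⁻¹ * cs.simple i * p.1 * p.2))
      ((fun p : W × W =>
        if p.1⁻¹ * cs.simple i * p.1 ∉ A then (cs.simple i * p.1, p.2)
        else (p.1, p.1⁻¹ * cs.simple i * p.1 * p.2)) p) = p := by
  dsimp only
  by_cases hc : p.1⁻¹ * cs.simple i * p.1 ∉ A
  · rw [if_pos hc]
    dsimp only
    have he : (cs.simple i * p.1)⁻¹ * cs.simple i * (cs.simple i * p.1)
        = p.1⁻¹ * cs.simple i * p.1 := by
      rw [mul_inv_rev, cs.inv_simple]
      simp only [mul_assoc, cs.simple_mul_simple_cancel_left]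
    rw [he, if_pos hc, cs.simple_mul_simple_cancel_left]
  · rw [if_neg hc]
    dsimp only
    rw [if_neg hc]
    have he : p.1⁻¹ * cs.simple i * p.1 * (p.1⁻¹ * cs.simple i * p.1 * p.2) = p.2 := by
      simp only [mul_assoc, mul_inv_cancel_left, inv_mul_cancel_left,
        cs.simple_mul_simple_cancel_left]
    rw [he]

end PsiAux

open scoped Classical in
/-- For `A` nice, `I, J` `A`-admissible, `s` simple and `w` with
`w⁻¹ s w ∉ A`, the involution `ψ_s^A` maps `{(u,v) ∈ D_I^A × D_J^A : uv = w}`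
bijectively onto `{(u,v) ∈ D_I^A × D_J^A : uv = sw}`. -/
theorem psi_bijection {B W : Type*} [Group W] [Finite W] {M : CoxeterMatrix B}
    (cs : CoxeterSystem M W) (A : Set W) (hA : ∀ t ∈ A, cs.IsReflection t)
    (hnice : ∀ r ∈ A, ∀ w : W, w⁻¹ * r * w ∉ A →
      {t ∈ A | cs.length (r * w * t) < cs.length (r * w)} =
        {t ∈ A | cs.length (w * t) < cs.length w})
    (I J : Set W)
    (hI : ∃ u : W, {t ∈ A | cs.length (u * t) < cs.length u} = I)
    (hJ : ∃ u : W, {t ∈ A | cs.length (u * t) < cs.length u} = J)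
    (i : B) (w : W) (hw : w⁻¹ * cs.simple i * w ∉ A) :
    Set.BijOn
      (fun p : W × W =>
        if p.1⁻¹ * cs.simple i * p.1 ∉ A then (cs.simple i * p.1, p.2)
        else (p.1, p.1⁻¹ * cs.simple i * p.1 * p.2))
      {p : W × W | {t ∈ A | cs.length (p.1 * t) < cs.length p.1} = I ∧
        {t ∈ A | cs.length (p.2 * t) < cs.length p.2} = J ∧ p.1 * p.2 = w}
      {p : W × W | {t ∈ A | cs.length (p.1 * t) < cs.length p.1} = I ∧
        {t ∈ A | cs.length (p.2 * t) < cs.length p.2} = J ∧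
        p.1 * p.2 = cs.simple i * w} := by
  have hw' : (cs.simple i * w)⁻¹ * cs.simple i * (cs.simple i * w) ∉ A := by
    have he : (cs.simple i * w)⁻¹ * cs.simple i * (cs.simple i * w)
        = w⁻¹ * cs.simple i * w := by
      rw [mul_inv_rev, cs.inv_simple]
      simp only [mul_assoc, cs.simple_mul_simple_cancel_left]
    rw [he]; exact hw
  have h1 := PsiAux.psi_mapsTo cs A hA hnice I J i w hw
  have h2 := PsiAux.psi_mapsTo cs A hA hnice I J i (cs.simple i * w) hw'
  rw [cs.simple_mul_simple_cancel_left] at h2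
  exact Set.InvOn.bijOn
    ⟨fun p _ => PsiAux.psi_invol cs A i p, fun p _ => PsiAux.psi_invol cs A i p⟩ h1 h2
end

section
/- Let W be the dihedral group of order 4m (m ≥ 2) with generators S = {s,t}, and A = {s,t,sts}. Then the A-admissible subsets of A are exactly ∅, {s}, {t}, {t,sts}, {s,sts}, and A; in particular D_A(W) has Z-rank 6. Moreover D_∅^A = {1}, D_{{s}}^A = {s}, D_A^A = {w₀}, D_{{t,sts}}^A = {w₀s}, D_{{t}}^A = {(st)^i : 1 ≤ i ≤ m-1} ∪ {(ts)^{i-1}t : 1 ≤ i ≤ m-1}, and D_{{s,sts}}^A = {(st)^i s : 1 ≤ i ≤ m-1} ∪ {(ts)^i : 1 ≤ i ≤ m-1}. -/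
namespace DihedralAdmissibleAux

open DihedralGroup

/-- Auxiliary length function on the dihedral group. -/
def dN {n : ℕ} : DihedralGroup n → ℕ
  | .r a => 2 * min a.val (-a).val
  | .sr a => 2 * min (-a).val (a - 1).val + 1

@[simp] lemma dN_r {n : ℕ} (a : ZMod n) : dN (DihedralGroup.r a) = 2 * min a.val (-a).val := rfl

@[simp] lemma dN_sr {n : ℕ} (a : ZMod n) :
    dN (DihedralGroup.sr a) = 2 * min (-a).val (a - 1).val + 1 := rfl

lemma val_sub_one {n : ℕ} [NeZero n] {a : ZMod n} (h : a ≠ 0) : (a - 1).val = a.val - 1 := by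
  have h1 : 1 ≤ a.val := Nat.one_le_iff_ne_zero.mpr (fun hh => h (by
    rwa [ZMod.val_eq_zero] at hh))
  have h2 : a.val < n := ZMod.val_lt a
  have : a - 1 = ((a.val - 1 : ℕ) : ZMod n) := by
    push_cast [Nat.cast_sub h1]
    rw [ZMod.natCast_val, ZMod.cast_id]
  rw [this, ZMod.val_cast_of_lt (by omega)]

lemma neg_val' {n : ℕ} [NeZero n] {a : ZMod n} (h : a ≠ 0) : (-a).val = n - a.val := by
  rw [ZMod.neg_val, if_neg h]

lemma dN_mul_le {n : ℕ} (hn : 2 ≤ n) (b : ZMod n) (hb : b = 0 ∨ b = 1) (x : DihedralGroup n) :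
    dN (DihedralGroup.sr b * x) ≤ dN x + 1 := by
  haveI : NeZero n := ⟨by omega⟩
  have hone : (1 : ZMod n).val = 1 := by
    rw [ZMod.val_one_eq_one_mod]; exact Nat.mod_eq_of_lt (by omega)
  have h10 : (1 : ZMod n) ≠ 0 := by
    intro h; rw [h, ZMod.val_zero] at hone; omega
  obtain rfl | rfl := hb
  · rcases x with a | a
    · -- sr 0 * r a = sr a
      rw [sr_mul_r, zero_add]
      show 2 * min (-a).val (a - 1).val + 1 ≤ 2 * min a.val (-a).val + 1
      rcases eq_or_ne a 0 with rfl | h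
      · simp
      · rw [val_sub_one h, neg_val' h]
        have h1 : 1 ≤ a.val := Nat.one_le_iff_ne_zero.mpr
          (fun hh => h (by rwa [ZMod.val_eq_zero] at hh))
        have h2 : a.val < n := ZMod.val_lt a
        omega
    · -- sr 0 * sr a = r (a - 0) = r a
      rw [sr_mul_sr, sub_zero]
      show 2 * min a.val (-a).val ≤ 2 * min (-a).val (a - 1).val + 1 + 1
      rcases eq_or_ne a 0 with rfl | h
      · simp
      · rw [val_sub_one h, neg_val' h]
        have h1 : 1 ≤ a.val := Nat.one_le_iff_ne_zero.mpr
          (fun hh => h (by rwa [ZMod.val_eq_zero] at hh))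
        have h2 : a.val < n := ZMod.val_lt a
        omega
  · rcases x with a | a
    · -- sr 1 * r a = sr (1 + a)
      rw [sr_mul_r]
      show 2 * min (-(1+a)).val ((1 + a - 1)).val + 1 ≤ 2 * min a.val (-a).val + 1
      have he : (1 + a - 1) = a := by ring
      rw [he]
      rcases eq_or_ne a 0 with rfl | h
      · simp
      · have hna : -a ≠ 0 := neg_ne_zero.mpr h
        have : -(1 + a) = -a - 1 := by ring
        rw [this, val_sub_one hna, neg_val' h]
        have h1 : 1 ≤ a.val := Nat.one_le_iff_ne_zero.mpr
          (fun hh => h (by rwa [ZMod.val_eq_zero] at hh))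
        have h2 : a.val < n := ZMod.val_lt a
        omega
    · -- sr 1 * sr a = r (a - 1)
      rw [sr_mul_sr]
      show 2 * min (a-1).val (-(a-1)).val ≤ 2 * min (-a).val (a - 1).val + 1 + 1
      rcases eq_or_ne a 1 with rfl | h1
      · simp
      · have hm1 : a - 1 ≠ 0 := sub_ne_zero.mpr h1
        rw [neg_val' hm1]
        rcases eq_or_ne a 0 with rfl | h0
        · rw [ZMod.neg_val, if_pos rfl]
          have : (0 - 1 : ZMod n) = -1 := by ring
          rw [this, neg_val' h10, hone]
          omega
        · rw [val_sub_one h0, neg_val' h0]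
          have h1' : 1 ≤ a.val := Nat.one_le_iff_ne_zero.mpr
            (fun hh => h0 (by rwa [ZMod.val_eq_zero] at hh))
          have h2 : a.val < n := ZMod.val_lt a
          omega

lemma dih_r_pow {n : ℕ} (a : ZMod n) (k : ℕ) :
    (DihedralGroup.r a) ^ k = DihedralGroup.r ((k : ZMod n) * a) := by
  induction k with
  | zero => simp
  | succ k ih =>
      rw [pow_succ, ih, DihedralGroup.r_mul_r]
      congr 1
      push_cast
      ring

lemma dN_r_cast {m k : ℕ} (hm : 1 ≤ m) (hk : k ≤ m) :
    dN (DihedralGroup.r (k : ZMod (2*m))) = 2 * k := by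
  haveI : NeZero (2*m) := ⟨by omega⟩
  have hv : ((k : ZMod (2*m))).val = k := ZMod.val_cast_of_lt (by omega)
  rcases eq_or_ne k 0 with rfl | h
  · rw [Nat.cast_zero, dN_r]; simp
  · have hne : ((k : ZMod (2*m))) ≠ 0 := by
      intro hh; rw [hh, ZMod.val_zero] at hv; omega
    rw [dN_r, neg_val' hne, hv]
    omega

lemma dN_r_neg_cast {m k : ℕ} (hm : 1 ≤ m) (hk : k ≤ m) :
    dN (DihedralGroup.r (-(k : ZMod (2*m)))) = 2 * k := by
  haveI : NeZero (2*m) := ⟨by omega⟩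
  rw [dN_r, neg_neg, Nat.min_comm, ← dN_r]
  exact dN_r_cast hm hk

lemma dN_sr_neg_cast {m k : ℕ} (hk : k + 1 ≤ m) :
    dN (DihedralGroup.sr (-(k : ZMod (2*m)))) = 2 * k + 1 := by
  haveI : NeZero (2*m) := ⟨by omega⟩
  have hv : ((k : ZMod (2*m))).val = k := ZMod.val_cast_of_lt (by omega)
  have hv1 : (((k+1 : ℕ) : ZMod (2*m))).val = k + 1 := ZMod.val_cast_of_lt (by omega)
  have hne : (((k+1 : ℕ) : ZMod (2*m))) ≠ 0 := by
    intro hh; rw [hh, ZMod.val_zero] at hv1; omega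
  have he : (-(k : ZMod (2*m)) - 1) = -(((k+1 : ℕ)) : ZMod (2*m)) := by push_cast; ring
  rw [dN_sr, neg_neg, hv, he, neg_val' hne, hv1]
  omega

lemma dN_sr_one_add_cast {m k : ℕ} (hk : k + 1 ≤ m) :
    dN (DihedralGroup.sr (1 + (k : ZMod (2*m)))) = 2 * k + 1 := by
  haveI : NeZero (2*m) := ⟨by omega⟩
  have hv : ((k : ZMod (2*m))).val = k := ZMod.val_cast_of_lt (by omega)
  have hv1 : (((k+1 : ℕ) : ZMod (2*m))).val = k + 1 := ZMod.val_cast_of_lt (by omega)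
  have hne : (((k+1 : ℕ) : ZMod (2*m))) ≠ 0 := by
    intro hh; rw [hh, ZMod.val_zero] at hv1; omega
  have he1 : (-(1 + (k : ZMod (2*m)))) = -(((k+1 : ℕ)) : ZMod (2*m)) := by push_cast; ring
  have he2 : (1 + (k : ZMod (2*m)) - 1) = (k : ZMod (2*m)) := by ring
  rw [dN_sr, he1, he2, neg_val' hne, hv1, hv]
  omega

end DihedralAdmissibleAux

open DihedralAdmissibleAux

set_option maxHeartbeats 1600000 in
/-- Dihedral group of order `4m` (`m ≥ 2`), `A = {s, t, sts}`:
the `A`-admissible sets are exactly `∅, {s}, {t}, {t,sts}, {s,sts}, A` (so there are 6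
of them, i.e. `D_A(W)` has `ℤ`-rank 6), with the stated descent classes. -/
theorem dihedral_A_admissible_sets {B W : Type*} [Group W] {M : CoxeterMatrix B}
    (cs : CoxeterSystem M W) (i j : B) (hij : i ≠ j) (hB : ∀ k : B, k = i ∨ k = j)
    (m : ℕ) (hm : 2 ≤ m) (hM : M i j = 2 * m)
    (s t : W) (hs : s = cs.simple i) (ht : t = cs.simple j)
    (A : Set W) (hA : A = {s, t, s * t * s})
    (w₀ : W) (hw₀ : w₀ = (s * t) ^ m) :
    {I : Set W | ∃ w : W, {r ∈ A | cs.length (w * r) < cs.length w} = I} =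
      {∅, {s}, {t}, {t, s * t * s}, {s, s * t * s}, A} ∧
    Set.ncard {I : Set W | ∃ w : W, {r ∈ A | cs.length (w * r) < cs.length w} = I} = 6 ∧
    {w : W | {r ∈ A | cs.length (w * r) < cs.length w} = (∅ : Set W)} = {1} ∧
    {w : W | {r ∈ A | cs.length (w * r) < cs.length w} = {s}} = {s} ∧
    {w : W | {r ∈ A | cs.length (w * r) < cs.length w} = A} = {w₀} ∧
    {w : W | {r ∈ A | cs.length (w * r) < cs.length w} = {t, s * t * s}} = {w₀ * s} ∧
    {w : W | {r ∈ A | cs.length (w * r) < cs.length w} = {t}} =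
      {w : W | ∃ k : ℕ, 1 ≤ k ∧ k ≤ m - 1 ∧ (w = (s * t) ^ k ∨ w = (t * s) ^ (k - 1) * t)} ∧
    {w : W | {r ∈ A | cs.length (w * r) < cs.length w} = {s, s * t * s}} =
      {w : W | ∃ k : ℕ, 1 ≤ k ∧ k ≤ m - 1 ∧ (w = (s * t) ^ k * s ∨ w = (t * s) ^ k)} := by
  subst hw₀
  classical
  haveI : NeZero (2*m) := ⟨by omega⟩
  -- basic identities
  have hss : s * s = 1 := by rw [hs]; exact cs.simple_mul_simple_self i
  have htt : t * t = 1 := by rw [ht]; exact cs.simple_mul_simple_self j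
  have hls : cs.length s = 1 := by rw [hs]; exact cs.length_simple i
  have hlt : cs.length t = 1 := by rw [ht]; exact cs.length_simple j
  have hord : (s * t) ^ (2 * m) = 1 := by rw [hs, ht, ← hM]; exact cs.simple_mul_simple_pow i j
  have hstinv : (s * t)⁻¹ = t * s := by
    rw [eq_comm, eq_inv_iff_mul_eq_one, mul_assoc, ← mul_assoc s s t, hss, one_mul, htt]
  have hw0' : (s * t) ^ m = (t * s) ^ m := by
    have h2 : (s*t)^m * (s*t)^m = 1 := by rw [← pow_add, ← two_mul]; exact hord
    calc (s*t)^m = ((s*t)^m)⁻¹ := eq_inv_of_mul_eq_one_right h2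
      _ = ((s*t)⁻¹)^m := (inv_pow _ _).symm
      _ = (t*s)^m := by rw [hstinv]
  have hid1 : ∀ k : ℕ, (s*t)^k * s * t = (s*t)^(k+1) := fun k => by
    rw [pow_succ, mul_assoc]
  have hid2 : ∀ k : ℕ, (s*t)^(k+1) * t = (s*t)^k * s := fun k => by
    rw [pow_succ, mul_assoc, mul_assoc s t t, htt, mul_one]
  have hid3 : ∀ k : ℕ, (s*t)^k * s * s = (s*t)^k := fun k => by
    rw [mul_assoc, hss, mul_one]
  have hid1' : ∀ k : ℕ, (t*s)^k * t * s = (t*s)^(k+1) := fun k => by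
    rw [pow_succ, mul_assoc]
  have hid2' : ∀ k : ℕ, (t*s)^(k+1) * s = (t*s)^k * t := fun k => by
    rw [pow_succ, mul_assoc, mul_assoc t s s, hss, mul_one]
  have hid3' : ∀ k : ℕ, (t*s)^k * t * t = (t*s)^k := fun k => by
    rw [mul_assoc, htt, mul_one]
  have hid5 : (s*t)^m * s = (t*s)^(m-1) * t := by
    calc (s*t)^m * s = (t*s)^((m-1)+1) * s := by rw [Nat.sub_add_cancel (by omega), ← hw0']
      _ = (t*s)^(m-1) * t := hid2' (m-1)
  have hid5' : (t*s)^m * t = (s*t)^(m-1) * s := by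
    calc (t*s)^m * t = (s*t)^((m-1)+1) * t := by rw [Nat.sub_add_cancel (by omega), hw0']
      _ = (s*t)^(m-1) * s := hid2 (m-1)
  have hsimp : ∀ b : B, cs.simple b = s ∨ cs.simple b = t := fun b =>
    (hB b).imp (fun e => by rw [e, ← hs]) (fun e => by rw [e, ← ht])
  -- the homomorphism to the concrete dihedral group
  have hφ : ∃ φ : W →* DihedralGroup (2*m),
      φ s = DihedralGroup.sr 0 ∧ φ t = DihedralGroup.sr 1 := by
    have hf : CoxeterMatrix.IsLiftable M
        (fun b => if b = i then (DihedralGroup.sr 0 : DihedralGroup (2*m))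
          else DihedralGroup.sr 1) := by
      intro a b
      rcases hB a with ha | ha <;> rcases hB b with hb | hb <;> rw [ha, hb] <;>
        simp only [eq_self_iff_true, if_true, if_neg (Ne.symm hij)]
      · simp [M.diagonal]
      · rw [hM, DihedralGroup.sr_mul_sr, dih_r_pow]
        rw [ZMod.natCast_self]; simp
      · rw [M.symmetric j i, hM, DihedralGroup.sr_mul_sr, dih_r_pow]
        rw [ZMod.natCast_self]; simp
      · simp [M.diagonal]
    refine ⟨cs.lift ⟨_, hf⟩, ?_, ?_⟩
    · rw [hs, cs.lift_apply_simple hf i, if_pos rfl]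
    · rw [ht, cs.lift_apply_simple hf j, if_neg hij.symm]
  obtain ⟨φ, hφs, hφt⟩ := hφ
  have hNword : ∀ ω : List B, dN (φ (cs.wordProd ω)) ≤ ω.length := by
    intro ω
    induction ω with
    | nil =>
        rw [cs.wordProd_nil, map_one]
        rw [DihedralGroup.one_def, dN_r]
        simp
    | cons a ω ih =>
        rw [cs.wordProd_cons, map_mul]
        have hsa : φ (cs.simple a) = DihedralGroup.sr 0 ∨
            φ (cs.simple a) = DihedralGroup.sr 1 := by
          rcases hsimp a with e | e
          · left; rw [e, hφs]
          · right; rw [e, hφt]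
        rcases hsa with e | e <;> rw [e] <;>
          simpa using le_trans
            (dN_mul_le (by omega) _ (by simp) _) (by omega)
  have hNle : ∀ w : W, dN (φ w) ≤ cs.length w := by
    intro w
    obtain ⟨ω, hω, rfl⟩ := cs.exists_reduced_word w
    exact hω ▸ hNword ω
  -- images under φ
  have hφst : ∀ k : ℕ, φ ((s*t)^k) = DihedralGroup.r (k : ZMod (2*m)) := by
    intro k
    rw [map_pow, map_mul, hφs, hφt, DihedralGroup.sr_mul_sr, dih_r_pow]
    congr 1
    simp
  have hφts : ∀ k : ℕ, φ ((t*s)^k) = DihedralGroup.r (-(k : ZMod (2*m))) := by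
    intro k
    rw [map_pow, map_mul, hφt, hφs, DihedralGroup.sr_mul_sr, dih_r_pow]
    congr 1
    simp
  have hφsts : ∀ k : ℕ, φ ((s*t)^k * s) = DihedralGroup.sr (-(k : ZMod (2*m))) := by
    intro k
    rw [map_mul, hφst, hφs, DihedralGroup.r_mul_sr]
    congr 1
    ring
  have hφtst : ∀ k : ℕ, φ ((t*s)^k * t) = DihedralGroup.sr (1 + (k : ZMod (2*m))) := by
    intro k
    rw [map_mul, hφts, hφt, DihedralGroup.r_mul_sr]
    congr 1
    ring
  -- length upper bounds
  have Hub_st : ∀ k : ℕ, cs.length ((s*t)^k) ≤ 2*k := by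
    intro k
    induction k with
    | zero => simp
    | succ k ih =>
        have h1 := cs.length_mul_le ((s*t)^k) (s*t)
        have h2 := cs.length_mul_le s t
        rw [pow_succ]
        rw [hls, hlt] at h2
        omega
  have Hub_ts : ∀ k : ℕ, cs.length ((t*s)^k) ≤ 2*k := by
    intro k
    induction k with
    | zero => simp
    | succ k ih =>
        have h1 := cs.length_mul_le ((t*s)^k) (t*s)
        have h2 := cs.length_mul_le t s
        rw [pow_succ]
        rw [hls, hlt] at h2
        omega
  -- exact lengths
  have Hst : ∀ k : ℕ, k ≤ m → cs.length ((s*t)^k) = 2*k := by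
    intro k hk
    have hlow := hNle ((s*t)^k)
    rw [hφst, dN_r_cast (by omega) hk] at hlow
    have := Hub_st k
    omega
  have Hts : ∀ k : ℕ, k ≤ m → cs.length ((t*s)^k) = 2*k := by
    intro k hk
    have hlow := hNle ((t*s)^k)
    rw [hφts, dN_r_neg_cast (by omega) hk] at hlow
    have := Hub_ts k
    omega
  have Hsts : ∀ k : ℕ, k + 1 ≤ m → cs.length ((s*t)^k * s) = 2*k+1 := by
    intro k hk
    have hlow := hNle ((s*t)^k * s)
    rw [hφsts, dN_sr_neg_cast hk] at hlow
    have h1 := cs.length_mul_le ((s*t)^k) s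
    have h2 := Hub_st k
    rw [hls] at h1
    omega
  have Htst : ∀ k : ℕ, k + 1 ≤ m → cs.length ((t*s)^k * t) = 2*k+1 := by
    intro k hk
    have hlow := hNle ((t*s)^k * t)
    rw [hφtst, dN_sr_one_add_cast hk] at hlow
    have h1 := cs.length_mul_le ((t*s)^k) t
    have h2 := Hub_ts k
    rw [hlt] at h1
    omega
  -- membership characterization
  have hmem : ∀ w r : W, r ∈ {r ∈ A | cs.length (w*r) < cs.length w} ↔
      ((r = s ∨ r = t ∨ r = s*t*s) ∧ cs.length (w*r) < cs.length w) := by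
    intro w r
    constructor
    · rintro ⟨hr, hlen⟩
      rw [hA] at hr
      exact ⟨by simpa using hr, hlen⟩
    · rintro ⟨hr, hlen⟩
      exact ⟨by rw [hA]; simpa using hr, hlen⟩
  -- element distinctness
  have hlsts : cs.length (s*t*s) = 3 := by
    have := Hsts 1 (by omega)
    rwa [pow_one] at this
  have hst : s ≠ t := by
    intro h
    have h2 := Hst 1 (by omega)
    rw [pow_one, h, htt, cs.length_one] at h2
    omega
  have hsc : s ≠ s*t*s := by
    intro h
    rw [← h, hls] at hlsts
    omega
  have htc : t ≠ s*t*s := by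
    intro h
    rw [← h, hlt] at hlsts
    omega
  -- the six descent-class computations
  have HD1 : ∀ w : W, w = 1 → {r ∈ A | cs.length (w*r) < cs.length w} = ∅ := by
    rintro w rfl
    ext r
    rw [hmem]
    simp [cs.length_one]
  have HDs : ∀ w : W, w = s → {r ∈ A | cs.length (w*r) < cs.length w} = {s} := by
    intro w hw
    rw [hw]
    have h1 : cs.length (s * s) < cs.length s := by rw [hss, cs.length_one, hls]; omega
    have h2 : ¬ cs.length (s * t) < cs.length s := by
      have := Hst 1 (by omega)
      rw [pow_one] at this
      rw [this, hls]; omega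
    have h3 : ¬ cs.length (s * (s*t*s)) < cs.length s := by
      have he : s * (s*t*s) = t * s := by
        rw [← mul_assoc, ← mul_assoc, hss, one_mul]
      have := Hts 1 (by omega)
      rw [pow_one] at this
      rw [he, this, hls]; omega
    ext r
    rw [hmem]
    constructor
    · rintro ⟨rfl | rfl | rfl, hr⟩
      · rfl
      · exact (h2 hr).elim
      · exact (h3 hr).elim
    · intro hr
      rw [Set.mem_singleton_iff] at hr
      subst hr
      exact ⟨Or.inl rfl, h1⟩
  have HDw0 : ∀ w : W, w = (s*t)^m → {r ∈ A | cs.length (w*r) < cs.length w} = A := by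
    rintro w rfl
    have hw : cs.length ((s*t)^m) = 2*m := Hst m le_rfl
    have h1 : cs.length ((s*t)^m * s) < cs.length ((s*t)^m) := by
      rw [hid5, Htst (m-1) (by omega), hw]; omega
    have h2 : cs.length ((s*t)^m * t) < cs.length ((s*t)^m) := by
      have he : (s*t)^m * t = (s*t)^(m-1) * s := by
        calc (s*t)^m * t = (s*t)^((m-1)+1) * t := by rw [Nat.sub_add_cancel (by omega)]
          _ = (s*t)^(m-1) * s := hid2 (m-1)
      rw [he, Hsts (m-1) (by omega), hw]; omega
    have h3 : cs.length ((s*t)^m * (s*t*s)) < cs.length ((s*t)^m) := by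
      have he : (s*t)^m * (s*t*s) = (t*s)^(m-1) * s := by
        calc (s*t)^m * (s*t*s) = (t*s)^((m-1)+1) * (s*t*s) := by
              rw [Nat.sub_add_cancel (by omega), ← hw0']
          _ = (((t*s)^((m-1)+1) * s) * t) * s := by
              simp only [mul_assoc]
          _ = (((t*s)^(m-1) * t) * t) * s := by rw [hid2' (m-1)]
          _ = (t*s)^(m-1) * s := by rw [hid3' (m-1)]
      have hle := cs.length_mul_le ((t*s)^(m-1)) s
      rw [Hts (m-1) (by omega), hls] at hle
      rw [he, hw]
      omega
    ext r
    rw [hmem]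
    constructor
    · rintro ⟨hr, _⟩
      rw [hA]
      simpa using hr
    · intro hr
      rw [hA] at hr
      simp only [Set.mem_insert_iff, Set.mem_singleton_iff] at hr
      rcases hr with rfl | rfl | rfl
      · exact ⟨Or.inl rfl, h1⟩
      · exact ⟨Or.inr (Or.inl rfl), h2⟩
      · exact ⟨Or.inr (Or.inr rfl), h3⟩
  have HDw0s : ∀ w : W, w = (s*t)^m * s →
      {r ∈ A | cs.length (w*r) < cs.length w} = {t, s*t*s} := by
    rintro w rfl
    have hw : cs.length ((s*t)^m * s) = 2*m - 1 := by
      rw [hid5, Htst (m-1) (by omega)]; omega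
    have h1 : ¬ cs.length ((s*t)^m * s * s) < cs.length ((s*t)^m * s) := by
      rw [hid3 m, Hst m le_rfl, hw]; omega
    have h2 : cs.length ((s*t)^m * s * t) < cs.length ((s*t)^m * s) := by
      have he : (s*t)^m * s * t = (t*s)^(m-1) := by
        rw [hid5, hid3' (m-1)]
      rw [he, Hts (m-1) (by omega), hw]; omega
    have h3 : cs.length ((s*t)^m * s * (s*t*s)) < cs.length ((s*t)^m * s) := by
      have he : (s*t)^m * s * (s*t*s) = (s*t)^(m-1) := by
        calc (s*t)^m * s * (s*t*s) = (((s*t)^m * s * s) * t) * s := by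
              simp only [mul_assoc]
          _ = ((s*t)^m * t) * s := by rw [hid3 m]
          _ = ((s*t)^(m-1) * s) * s := by
              rw [show (s*t)^m * t = (s*t)^(m-1) * s from by
                calc (s*t)^m * t = (s*t)^((m-1)+1) * t := by rw [Nat.sub_add_cancel (by omega)]
                  _ = (s*t)^(m-1) * s := hid2 (m-1)]
          _ = (s*t)^(m-1) := hid3 (m-1)
      rw [he, Hst (m-1) (by omega), hw]; omega
    ext r
    rw [hmem]
    constructor
    · rintro ⟨rfl | rfl | rfl, hr⟩
      · exact (h1 hr).elim
      · exact Set.mem_insert _ _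
      · exact Set.mem_insert_of_mem _ rfl
    · intro hr
      simp only [Set.mem_insert_iff, Set.mem_singleton_iff] at hr
      rcases hr with rfl | rfl
      · exact ⟨Or.inr (Or.inl rfl), h2⟩
      · exact ⟨Or.inr (Or.inr rfl), h3⟩
  have HDt : ∀ (w : W) (k : ℕ), 1 ≤ k → k ≤ m - 1 →
      (w = (s*t)^k ∨ w = (t*s)^(k-1) * t) →
      {r ∈ A | cs.length (w*r) < cs.length w} = {t} := by
    rintro w k hk1 hk2 (rfl | rfl)
    · obtain ⟨K, rfl⟩ : ∃ K, k = K + 1 := ⟨k - 1, by omega⟩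
      have hKm : K + 2 ≤ m := by omega
      have hw : cs.length ((s*t)^(K+1)) = 2*(K+1) := Hst (K+1) (by omega)
      have h1 : ¬ cs.length ((s*t)^(K+1) * s) < cs.length ((s*t)^(K+1)) := by
        rw [Hsts (K+1) hKm, hw]; omega
      have h2 : cs.length ((s*t)^(K+1) * t) < cs.length ((s*t)^(K+1)) := by
        rw [hid2 K, Hsts K (by omega), hw]; omega
      have h3 : ¬ cs.length ((s*t)^(K+1) * (s*t*s)) < cs.length ((s*t)^(K+1)) := by
        have he : (s*t)^(K+1) * (s*t*s) = (s*t)^(K+2) * s := by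
          rw [pow_succ ((s*t)) (K+1)]
          simp only [mul_assoc]
        rw [he, hw]
        rcases Nat.lt_or_ge (K+2) m with hlt | hge
        · rw [Hsts (K+2) (by omega)]; omega
        · have hKm2 : K + 2 = m := by omega
          rw [show (s*t)^(K+2) * s = (t*s)^(m-1) * t from by rw [hKm2, hid5],
            Htst (m-1) (by omega)]
          omega
      ext r
      rw [hmem]
      constructor
      · rintro ⟨rfl | rfl | rfl, hr⟩
        · exact (h1 hr).elim
        · rfl
        · exact (h3 hr).elim
      · intro hr
        rw [Set.mem_singleton_iff] at hr
        subst hr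
        exact ⟨Or.inr (Or.inl rfl), h2⟩
    · obtain ⟨K, rfl⟩ : ∃ K, k = K + 1 := ⟨k - 1, by omega⟩
      simp only [Nat.add_sub_cancel]
      have hKm : K + 2 ≤ m := by omega
      have hw : cs.length ((t*s)^K * t) = 2*K+1 := Htst K (by omega)
      have h1 : ¬ cs.length ((t*s)^K * t * s) < cs.length ((t*s)^K * t) := by
        rw [hid1' K, Hts (K+1) (by omega), hw]; omega
      have h2 : cs.length ((t*s)^K * t * t) < cs.length ((t*s)^K * t) := by
        rw [hid3' K, Hts K (by omega), hw]; omega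
      have h3 : ¬ cs.length ((t*s)^K * t * (s*t*s)) < cs.length ((t*s)^K * t) := by
        have he : (t*s)^K * t * (s*t*s) = (t*s)^(K+2) := by
          calc (t*s)^K * t * (s*t*s) = (((t*s)^K * t * s) * t) * s := by
                simp only [mul_assoc]
          _ = ((t*s)^(K+1) * t) * s := by rw [hid1' K]
          _ = (t*s)^(K+2) := hid1' (K+1)
        rw [he, Hts (K+2) hKm, hw]; omega
      ext r
      rw [hmem]
      constructor
      · rintro ⟨rfl | rfl | rfl, hr⟩
        · exact (h1 hr).elim
        · rfl
        · exact (h3 hr).elim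
      · intro hr
        rw [Set.mem_singleton_iff] at hr
        subst hr
        exact ⟨Or.inr (Or.inl rfl), h2⟩
  have HDssts : ∀ (w : W) (k : ℕ), 1 ≤ k → k ≤ m - 1 →
      (w = (s*t)^k * s ∨ w = (t*s)^k) →
      {r ∈ A | cs.length (w*r) < cs.length w} = {s, s*t*s} := by
    rintro w k hk1 hk2 (rfl | rfl)
    · obtain ⟨K, rfl⟩ : ∃ K, k = K + 1 := ⟨k - 1, by omega⟩
      have hKm : K + 2 ≤ m := by omega
      have hw : cs.length ((s*t)^(K+1) * s) = 2*(K+1)+1 := Hsts (K+1) hKm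
      have h1 : cs.length ((s*t)^(K+1) * s * s) < cs.length ((s*t)^(K+1) * s) := by
        rw [hid3 (K+1), Hst (K+1) (by omega), hw]; omega
      have h2 : ¬ cs.length ((s*t)^(K+1) * s * t) < cs.length ((s*t)^(K+1) * s) := by
        rw [hid1 (K+1), Hst (K+2) hKm, hw]; omega
      have h3 : cs.length ((s*t)^(K+1) * s * (s*t*s)) < cs.length ((s*t)^(K+1) * s) := by
        have he : (s*t)^(K+1) * s * (s*t*s) = (s*t)^K := by
          calc (s*t)^(K+1) * s * (s*t*s) = (((s*t)^(K+1) * s * s) * t) * s := by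
                simp only [mul_assoc]
            _ = ((s*t)^(K+1) * t) * s := by rw [hid3 (K+1)]
            _ = ((s*t)^K * s) * s := by rw [hid2 K]
            _ = (s*t)^K := hid3 K
        rw [he, Hst K (by omega), hw]; omega
      ext r
      rw [hmem]
      constructor
      · rintro ⟨rfl | rfl | rfl, hr⟩
        · exact Set.mem_insert _ _
        · exact (h2 hr).elim
        · exact Set.mem_insert_of_mem _ rfl
      · intro hr
        simp only [Set.mem_insert_iff, Set.mem_singleton_iff] at hr
        rcases hr with rfl | rfl
        · exact ⟨Or.inl rfl, h1⟩
        · exact ⟨Or.inr (Or.inr rfl), h3⟩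
    · obtain ⟨K, rfl⟩ : ∃ K, k = K + 1 := ⟨k - 1, by omega⟩
      have hKm : K + 2 ≤ m := by omega
      have hw : cs.length ((t*s)^(K+1)) = 2*(K+1) := Hts (K+1) (by omega)
      have h1 : cs.length ((t*s)^(K+1) * s) < cs.length ((t*s)^(K+1)) := by
        rw [hid2' K, Htst K (by omega), hw]; omega
      have h2 : ¬ cs.length ((t*s)^(K+1) * t) < cs.length ((t*s)^(K+1)) := by
        rw [Htst (K+1) hKm, hw]; omega
      have h3 : cs.length ((t*s)^(K+1) * (s*t*s)) < cs.length ((t*s)^(K+1)) := by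
        have he : (t*s)^(K+1) * (s*t*s) = (t*s)^K * s := by
          calc (t*s)^(K+1) * (s*t*s) = (((t*s)^(K+1) * s) * t) * s := by
                simp only [mul_assoc]
            _ = (((t*s)^K * t) * t) * s := by rw [hid2' K]
            _ = (t*s)^K * s := by rw [hid3' K]
        have hle := cs.length_mul_le ((t*s)^K) s
        rw [Hts K (by omega), hls] at hle
        rw [he, hw]
        omega
      ext r
      rw [hmem]
      constructor
      · rintro ⟨rfl | rfl | rfl, hr⟩
        · exact Set.mem_insert _ _
        · exact (h2 hr).elim
        · exact Set.mem_insert_of_mem _ rfl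
      · intro hr
        simp only [Set.mem_insert_iff, Set.mem_singleton_iff] at hr
        rcases hr with rfl | rfl
        · exact ⟨Or.inl rfl, h1⟩
        · exact ⟨Or.inr (Or.inr rfl), h3⟩
  -- classification of all elements
  have hclass : ∀ w : W,
      (∃ k, k ≤ m ∧ w = (s*t)^k) ∨ (∃ k, k ≤ m ∧ w = (t*s)^k) ∨
      (∃ k, k + 1 ≤ m ∧ w = (s*t)^k * s) ∨ (∃ k, k + 1 ≤ m ∧ w = (t*s)^k * t) := by
    intro w
    induction w using cs.simple_induction_right with
    | one => exact Or.inl ⟨0, by omega, by simp⟩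
    | mul_simple_right w b ih =>
        rcases hsimp b with hb | hb <;> rw [hb]
        · -- multiply by s
          rcases ih with ⟨k, hk, rfl⟩ | ⟨k, hk, rfl⟩ | ⟨k, hk, rfl⟩ | ⟨k, hk, rfl⟩
          · by_cases hkm : k = m
            · exact Or.inr (Or.inr (Or.inr ⟨m-1, by omega, by rw [hkm]; exact hid5⟩))
            · exact Or.inr (Or.inr (Or.inl ⟨k, by omega, rfl⟩))
          · rcases Nat.eq_zero_or_pos k with rfl | hk0
            · exact Or.inr (Or.inr (Or.inl ⟨0, by omega, by simp⟩))
            · obtain ⟨K, rfl⟩ : ∃ K, k = K + 1 := ⟨k - 1, by omega⟩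
              exact Or.inr (Or.inr (Or.inr ⟨K, by omega, hid2' K⟩))
          · exact Or.inl ⟨k, by omega, hid3 k⟩
          · exact Or.inr (Or.inl ⟨k+1, by omega, hid1' k⟩)
        · -- multiply by t
          rcases ih with ⟨k, hk, rfl⟩ | ⟨k, hk, rfl⟩ | ⟨k, hk, rfl⟩ | ⟨k, hk, rfl⟩
          · rcases Nat.eq_zero_or_pos k with rfl | hk0
            · exact Or.inr (Or.inr (Or.inr ⟨0, by omega, by simp⟩))
            · obtain ⟨K, rfl⟩ : ∃ K, k = K + 1 := ⟨k - 1, by omega⟩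
              exact Or.inr (Or.inr (Or.inl ⟨K, by omega, hid2 K⟩))
          · by_cases hkm : k = m
            · exact Or.inr (Or.inr (Or.inl ⟨m-1, by omega, by rw [hkm]; exact hid5'⟩))
            · exact Or.inr (Or.inr (Or.inr ⟨k, by omega, rfl⟩))
          · exact Or.inl ⟨k+1, by omega, hid1 k⟩
          · exact Or.inr (Or.inl ⟨k, by omega, hid3' k⟩)
  -- the master case analysis
  have Hmaster : ∀ w : W,
      ({r ∈ A | cs.length (w*r) < cs.length w} = ∅ ∧ w = 1) ∨
      ({r ∈ A | cs.length (w*r) < cs.length w} = {s} ∧ w = s) ∨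
      ({r ∈ A | cs.length (w*r) < cs.length w} = A ∧ w = (s*t)^m) ∨
      ({r ∈ A | cs.length (w*r) < cs.length w} = {t, s*t*s} ∧ w = (s*t)^m * s) ∨
      ({r ∈ A | cs.length (w*r) < cs.length w} = {t} ∧
        ∃ k : ℕ, 1 ≤ k ∧ k ≤ m - 1 ∧ (w = (s*t)^k ∨ w = (t*s)^(k-1) * t)) ∨
      ({r ∈ A | cs.length (w*r) < cs.length w} = {s, s*t*s} ∧
        ∃ k : ℕ, 1 ≤ k ∧ k ≤ m - 1 ∧ (w = (s*t)^k * s ∨ w = (t*s)^k)) := by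
    intro w
    rcases hclass w with ⟨k, hk, rfl⟩ | ⟨k, hk, rfl⟩ | ⟨k, hk, rfl⟩ | ⟨k, hk, rfl⟩
    · rcases Nat.eq_zero_or_pos k with rfl | hk0
      · exact Or.inl ⟨HD1 ((s*t)^0) (by simp), by simp⟩
      · by_cases hkm : k = m
        · exact Or.inr (Or.inr (Or.inl ⟨HDw0 ((s*t)^k) (by rw [hkm]), by rw [hkm]⟩))
        · exact Or.inr (Or.inr (Or.inr (Or.inr (Or.inl
            ⟨HDt _ k hk0 (by omega) (Or.inl rfl), k, hk0, by omega, Or.inl rfl⟩))))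
    · rcases Nat.eq_zero_or_pos k with rfl | hk0
      · exact Or.inl ⟨HD1 ((t*s)^0) (by simp), by simp⟩
      · by_cases hkm : k = m
        · exact Or.inr (Or.inr (Or.inl ⟨HDw0 ((t*s)^k) (by rw [hkm]; exact hw0'.symm),
            by rw [hkm]; exact hw0'.symm⟩))
        · exact Or.inr (Or.inr (Or.inr (Or.inr (Or.inr
            ⟨HDssts _ k hk0 (by omega) (Or.inr rfl), k, hk0, by omega, Or.inr rfl⟩))))
    · rcases Nat.eq_zero_or_pos k with rfl | hk0
      · exact Or.inr (Or.inl ⟨HDs ((s*t)^0*s) (by simp), by simp⟩)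
      · exact Or.inr (Or.inr (Or.inr (Or.inr (Or.inr
          ⟨HDssts _ k hk0 (by omega) (Or.inl rfl), k, hk0, by omega, Or.inl rfl⟩))))
    · by_cases hkm : k = m - 1
      · exact Or.inr (Or.inr (Or.inr (Or.inl ⟨HDw0s ((t*s)^k*t) (by rw [hkm]; exact hid5.symm),
          by rw [hkm]; exact hid5.symm⟩)))
      · refine Or.inr (Or.inr (Or.inr (Or.inr (Or.inl
          ⟨HDt ((t*s)^k*t) (k+1) (by omega) (by omega) (Or.inr (by simp)), k+1, by omega, by omega,
            Or.inr (by simp)⟩))))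
  -- pairwise distinctness of the six descent sets
  have q01 : (∅ : Set W) ≠ {s} := (Set.singleton_ne_empty s).symm
  have q02 : (∅ : Set W) ≠ {t} := (Set.singleton_ne_empty t).symm
  have q03 : (∅ : Set W) ≠ {t, s*t*s} := (Set.insert_nonempty _ _).ne_empty.symm
  have q04 : (∅ : Set W) ≠ {s, s*t*s} := (Set.insert_nonempty _ _).ne_empty.symm
  have q05 : (∅ : Set W) ≠ A := by rw [hA]; exact (Set.insert_nonempty _ _).ne_empty.symm
  have q12 : ({s} : Set W) ≠ {t} := by
    intro h
    have : s ∈ ({t} : Set W) := h ▸ Set.mem_singleton s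
    exact hst (by simpa using this)
  have q13 : ({s} : Set W) ≠ {t, s*t*s} := by
    intro h
    have : t ∈ ({s} : Set W) := by rw [h]; exact Set.mem_insert _ _
    have h2 : t = s := by simpa using this
    exact hst h2.symm
  have q14 : ({s} : Set W) ≠ {s, s*t*s} := by
    intro h
    have : s*t*s ∈ ({s} : Set W) := by rw [h]; exact Set.mem_insert_of_mem _ rfl
    have h2 : s*t*s = s := by simpa using this
    exact hsc h2.symm
  have q15 : ({s} : Set W) ≠ A := by
    intro h
    have : t ∈ ({s} : Set W) := by
      rw [h, hA]; exact Set.mem_insert_of_mem _ (Set.mem_insert _ _)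
    have h2 : t = s := by simpa using this
    exact hst h2.symm
  have q23 : ({t} : Set W) ≠ {t, s*t*s} := by
    intro h
    have : s*t*s ∈ ({t} : Set W) := by rw [h]; exact Set.mem_insert_of_mem _ rfl
    have h2 : s*t*s = t := by simpa using this
    exact htc h2.symm
  have q24 : ({t} : Set W) ≠ {s, s*t*s} := by
    intro h
    have : s ∈ ({t} : Set W) := by rw [h]; exact Set.mem_insert _ _
    exact hst (by simpa using this)
  have q25 : ({t} : Set W) ≠ A := by
    intro h
    have : s ∈ ({t} : Set W) := by rw [h, hA]; exact Set.mem_insert _ _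
    exact hst (by simpa using this)
  have q34 : ({t, s*t*s} : Set W) ≠ {s, s*t*s} := by
    intro h
    have : s ∈ ({t, s*t*s} : Set W) := by rw [h]; exact Set.mem_insert _ _
    rcases this with h' | h'
    · exact hst h'
    · exact hsc h'
  have q35 : ({t, s*t*s} : Set W) ≠ A := by
    intro h
    have : s ∈ ({t, s*t*s} : Set W) := by rw [h, hA]; exact Set.mem_insert _ _
    rcases this with h' | h'
    · exact hst h'
    · exact hsc h'
  have q45 : ({s, s*t*s} : Set W) ≠ A := by
    intro h
    have : t ∈ ({s, s*t*s} : Set W) := by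
      rw [h, hA]; exact Set.mem_insert_of_mem _ (Set.mem_insert _ _)
    rcases this with h' | h'
    · exact hst h'.symm
    · exact htc h'
  -- first conjunct
  have hconj1 : {I : Set W | ∃ w : W, {r ∈ A | cs.length (w * r) < cs.length w} = I} =
      {∅, {s}, {t}, {t, s * t * s}, {s, s * t * s}, A} := by
    ext I
    simp only [Set.mem_setOf_eq, Set.mem_insert_iff, Set.mem_singleton_iff]
    constructor
    · rintro ⟨w, rfl⟩
      rcases Hmaster w with ⟨h, _⟩ | ⟨h, _⟩ | ⟨h, _⟩ | ⟨h, _⟩ | ⟨h, _⟩ | ⟨h, _⟩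
      · exact Or.inl h
      · exact Or.inr (Or.inl h)
      · exact Or.inr (Or.inr (Or.inr (Or.inr (Or.inr h))))
      · exact Or.inr (Or.inr (Or.inr (Or.inl h)))
      · exact Or.inr (Or.inr (Or.inl h))
      · exact Or.inr (Or.inr (Or.inr (Or.inr (Or.inl h))))
    · rintro (rfl | rfl | rfl | rfl | rfl | rfl)
      · exact ⟨1, HD1 1 rfl⟩
      · exact ⟨s, HDs s rfl⟩
      · exact ⟨(s*t)^1, HDt _ 1 le_rfl (by omega) (Or.inl rfl)⟩
      · exact ⟨(s*t)^m * s, HDw0s _ rfl⟩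
      · exact ⟨(t*s)^1, HDssts _ 1 le_rfl (by omega) (Or.inr rfl)⟩
      · exact ⟨(s*t)^m, HDw0 _ rfl⟩
  refine ⟨hconj1, ?_, ?_, ?_, ?_, ?_, ?_, ?_⟩
  · -- cardinality
    rw [hconj1]
    rw [Set.ncard_insert_of_notMem (by
        simp only [Set.mem_insert_iff, Set.mem_singleton_iff]
        rintro (h | h | h | h | h)
        exacts [q01 h, q02 h, q03 h, q04 h, q05 h]) (Set.toFinite _),
      Set.ncard_insert_of_notMem (by
        simp only [Set.mem_insert_iff, Set.mem_singleton_iff]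
        rintro (h | h | h | h)
        exacts [q12 h, q13 h, q14 h, q15 h]) (Set.toFinite _),
      Set.ncard_insert_of_notMem (by
        simp only [Set.mem_insert_iff, Set.mem_singleton_iff]
        rintro (h | h | h)
        exacts [q23 h, q24 h, q25 h]) (Set.toFinite _),
      Set.ncard_insert_of_notMem (by
        simp only [Set.mem_insert_iff, Set.mem_singleton_iff]
        rintro (h | h)
        exacts [q34 h, q35 h]) (Set.toFinite _),
      Set.ncard_insert_of_notMem (by
        simp only [Set.mem_singleton_iff]
        intro h
        exact q45 h) (Set.toFinite _),
      Set.ncard_singleton]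
  · -- D = ∅ class
    ext w
    simp only [Set.mem_setOf_eq, Set.mem_singleton_iff]
    constructor
    · intro h
      by_contra hne
      obtain ⟨b, hb⟩ := cs.exists_rightDescent_of_ne_one hne
      unfold CoxeterSystem.IsRightDescent at hb
      rcases hsimp b with e | e <;> rw [e] at hb
      · have : s ∈ {r ∈ A | cs.length (w*r) < cs.length w} :=
          ⟨by rw [hA]; exact Set.mem_insert _ _, hb⟩
        rw [h] at this
        exact this
      · have : t ∈ {r ∈ A | cs.length (w*r) < cs.length w} :=
          ⟨by rw [hA]; exact Set.mem_insert_of_mem _ (Set.mem_insert _ _), hb⟩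
        rw [h] at this
        exact this
    · rintro rfl
      exact HD1 1 rfl
  · -- D = {s} class
    ext w
    simp only [Set.mem_setOf_eq, Set.mem_singleton_iff]
    constructor
    · intro h
      rcases Hmaster w with ⟨h', hw⟩ | ⟨h', hw⟩ | ⟨h', hw⟩ | ⟨h', hw⟩ | ⟨h', hw⟩ | ⟨h', hw⟩
      · rw [h'] at h; exact absurd h q01
      · exact hw
      · rw [h'] at h; exact absurd h (Ne.symm q15)
      · rw [h'] at h; exact absurd h (Ne.symm q13)
      · rw [h'] at h; exact absurd h (Ne.symm q12)
      · rw [h'] at h; exact absurd h (Ne.symm q14)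
    · intro hw
      exact HDs w hw
  · -- D = A class
    ext w
    simp only [Set.mem_setOf_eq, Set.mem_singleton_iff]
    constructor
    · intro h
      rcases Hmaster w with ⟨h', hw⟩ | ⟨h', hw⟩ | ⟨h', hw⟩ | ⟨h', hw⟩ | ⟨h', hw⟩ | ⟨h', hw⟩
      · rw [h'] at h; exact absurd h q05
      · rw [h'] at h; exact absurd h q15
      · exact hw
      · rw [h'] at h; exact absurd h q35
      · rw [h'] at h; exact absurd h q25
      · rw [h'] at h; exact absurd h q45
    · rintro rfl
      exact HDw0 _ rfl
  · -- D = {t, sts} class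
    ext w
    simp only [Set.mem_setOf_eq, Set.mem_singleton_iff]
    constructor
    · intro h
      rcases Hmaster w with ⟨h', hw⟩ | ⟨h', hw⟩ | ⟨h', hw⟩ | ⟨h', hw⟩ | ⟨h', hw⟩ | ⟨h', hw⟩
      · rw [h'] at h; exact absurd h q03
      · rw [h'] at h; exact absurd h q13
      · rw [h'] at h; exact absurd h (Ne.symm q35)
      · exact hw
      · rw [h'] at h; exact absurd h q23
      · rw [h'] at h; exact absurd h (Ne.symm q34)
    · rintro rfl
      exact HDw0s _ rfl
  · -- D = {t} class
    ext w
    simp only [Set.mem_setOf_eq]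
    constructor
    · intro h
      rcases Hmaster w with ⟨h', hw⟩ | ⟨h', hw⟩ | ⟨h', hw⟩ | ⟨h', hw⟩ | ⟨h', hw⟩ | ⟨h', hw⟩
      · rw [h'] at h; exact absurd h q02
      · rw [h'] at h; exact absurd h q12
      · rw [h'] at h; exact absurd h (Ne.symm q25)
      · rw [h'] at h; exact absurd h (Ne.symm q23)
      · exact hw
      · rw [h'] at h; exact absurd h (Ne.symm q24)
    · rintro ⟨k, hk1, hk2, hw⟩
      exact HDt w k hk1 hk2 hw
  · -- D = {s, sts} class
    ext w
    simp only [Set.mem_setOf_eq]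
    constructor
    · intro h
      rcases Hmaster w with ⟨h', hw⟩ | ⟨h', hw⟩ | ⟨h', hw⟩ | ⟨h', hw⟩ | ⟨h', hw⟩ | ⟨h', hw⟩
      · rw [h'] at h; exact absurd h q04
      · rw [h'] at h; exact absurd h q14
      · rw [h'] at h; exact absurd h (Ne.symm q45)
      · rw [h'] at h; exact absurd h q34
      · rw [h'] at h; exact absurd h q24
      · exact hw
    · rintro ⟨k, hk1, hk2, hw⟩
      exact HDssts w k hk1 hk2 hw
end

section
/- Let W be the dihedral group with S = {s,t}, m(s,t) = 2m, m ≥ 2, and A = {s,t,sts}. In the group ring ZW, with d_t = Σ_{i=1}^{m-1}((st)^i + (ts)^{i-1}t), d_s = s, d_{s̄} = w₀s, d_A = w₀, and d_{t̄} = Σ_{i=1}^{m-1}((st)^i s + (ts)^i), the product satisfies d_t·d_t = (m-1)(1 + d_A + d_s + d_{s̄}) + (m-2)(d_t + d_{t̄}). -/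
open Finset

section SumAux

variable {M : Type*} [AddCommMonoid M]

private lemma intIcc_split (g : ℤ → M) (a b c : ℤ) (h1 : a ≤ b + 1) (h2 : b ≤ c) :
    ∑ n ∈ Icc a c, g n = (∑ n ∈ Icc a b, g n) + ∑ n ∈ Icc (b + 1) c, g n := by
  have hset : Icc a c = Icc a b ∪ Icc (b + 1) c := by
    ext x; simp only [mem_Icc, mem_union]; omega
  have hdisj : Disjoint (Icc a b) (Icc (b + 1) c) := by
    rw [Finset.disjoint_left]
    intro x hx hx'
    simp only [mem_Icc] at hx hx'; omega
  rw [hset, Finset.sum_union hdisj]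

private lemma sum_nat_Icc_cast (g : ℤ → M) (a b : ℕ) :
    ∑ k ∈ Icc a b, g (k : ℤ) = ∑ k ∈ Icc (a : ℤ) (b : ℤ), g k := by
  refine Finset.sum_nbij' (fun k : ℕ => (k : ℤ)) (fun k : ℤ => k.toNat) ?_ ?_ ?_ ?_ ?_
  · intro x hx; simp only [mem_Icc] at *; omega
  · intro x hx; simp only [mem_Icc] at *; omega
  · intro x hx; omega
  · intro x hx; simp only [mem_Icc] at hx; omega
  · intro x hx; rfl

private lemma sum_period_shift (g : ℤ → M) (N : ℤ) (hN : 0 < N)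
    (hg : ∀ p q : ℤ, N ∣ (p - q) → g p = g q) (c : ℤ) :
    ∑ n ∈ Icc 0 (N - 1), g (c + n) = ∑ n ∈ Icc 0 (N - 1), g n := by
  have hmem : ∀ x : ℤ, x % N ∈ Icc (0:ℤ) (N - 1) := fun x => by
    simp only [mem_Icc]
    have h1 := Int.emod_nonneg x (ne_of_gt hN)
    have h2 := Int.emod_lt_of_pos x hN
    omega
  have hmod : ∀ x : ℤ, g (x % N) = g x := fun x => by
    refine hg _ _ ⟨-(x / N), ?_⟩
    have := Int.mul_ediv_add_emod x N
    linarith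
  refine Finset.sum_nbij' (fun n => (c + n) % N) (fun n => (n - c) % N)
    (fun n _ => hmem _) (fun n _ => hmem _) ?_ ?_ ?_
  · intro n hn
    simp only [mem_Icc] at hn
    have h3 : ((c + n) % N - c) % N = (c + n - c) % N := by
      rw [Int.sub_emod, Int.emod_emod_of_dvd _ dvd_rfl, ← Int.sub_emod]
    have h4 : (c + n - c) = n := by ring
    rw [h3, h4, Int.emod_eq_of_lt hn.1 (by omega)]
  · intro n hn
    simp only [mem_Icc] at hn
    have h3 : (c + (n - c) % N) % N = (c + (n - c)) % N := by
      rw [Int.add_emod, Int.emod_emod_of_dvd _ dvd_rfl, ← Int.add_emod]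
    have h4 : (c + (n - c)) = n := by ring
    rw [h3, h4, Int.emod_eq_of_lt hn.1 (by omega)]
  · intro n _
    exact (hmod (c + n)).symm

private lemma sum_period_reflect (g : ℤ → M) (N : ℤ) (hN : 0 < N)
    (hg : ∀ p q : ℤ, N ∣ (p - q) → g p = g q) (c : ℤ) :
    ∑ n ∈ Icc 0 (N - 1), g (c - n) = ∑ n ∈ Icc 0 (N - 1), g n := by
  have hmem : ∀ x : ℤ, x % N ∈ Icc (0:ℤ) (N - 1) := fun x => by
    simp only [mem_Icc]
    have h1 := Int.emod_nonneg x (ne_of_gt hN)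
    have h2 := Int.emod_lt_of_pos x hN
    omega
  have hmod : ∀ x : ℤ, g (x % N) = g x := fun x => by
    refine hg _ _ ⟨-(x / N), ?_⟩
    have := Int.mul_ediv_add_emod x N
    linarith
  have hinv : ∀ n ∈ Icc (0:ℤ) (N - 1), (c - (c - n) % N) % N = n := by
    intro n hn
    simp only [mem_Icc] at hn
    have h3 : (c - (c - n) % N) % N = (c - (c - n)) % N := by
      rw [Int.sub_emod, Int.emod_emod_of_dvd _ dvd_rfl, ← Int.sub_emod]
    have h4 : (c - (c - n)) = n := by ring
    rw [h3, h4, Int.emod_eq_of_lt hn.1 (by omega)]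
  refine Finset.sum_nbij' (fun n => (c - n) % N) (fun n => (c - n) % N)
    (fun n _ => hmem _) (fun n _ => hmem _) hinv hinv ?_
  · intro n _
    exact (hmod (c - n)).symm

private lemma sum_window (g : ℤ → M) (N : ℤ) (hN : 0 < N)
    (hg : ∀ p q : ℤ, N ∣ (p - q) → g p = g q) (c : ℤ) :
    ∑ n ∈ Icc c (c + N - 1), g n = ∑ n ∈ Icc 0 (N - 1), g n := by
  rw [← sum_period_shift g N hN hg c]
  refine Finset.sum_nbij' (fun n => n - c) (fun n => c + n) ?_ ?_ ?_ ?_ ?_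
  · intro x hx; simp only [mem_Icc] at *; omega
  · intro x hx; simp only [mem_Icc] at *; omega
  · intro x _; omega
  · intro x _; omega
  · intro x _; congr 1; omega

end SumAux

section DihedralAux

variable {W : Type*} [Group W]

private noncomputable def dE (a : W) (n : ℤ) : MonoidAlgebra ℤ W :=
  MonoidAlgebra.of ℤ W (a ^ n)

private noncomputable def dF (a t : W) (n : ℤ) : MonoidAlgebra ℤ W :=
  MonoidAlgebra.of ℤ W (a ^ n * t)

private lemma t_mul_zpow {a t : W} (ht2 : t * t = 1) (hconj : t * a = a⁻¹ * t) (n : ℤ) :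
    t * a ^ n = a ^ (-n) * t := by
  have htinv : t⁻¹ = t := inv_eq_of_mul_eq_one_right ht2
  have h1 : (MulAut.conj t) (a ^ n) = ((MulAut.conj t) a) ^ n := map_zpow _ _ _
  simp only [MulAut.conj_apply, htinv] at h1
  have h2 : t * a * t = a⁻¹ := by rw [hconj, mul_assoc, ht2, mul_one]
  rw [h2] at h1
  calc t * a ^ n = (t * a ^ n * t) * t := by rw [mul_assoc, ht2, mul_one]
    _ = a ^ (-n) * t := by rw [h1, inv_zpow, ← zpow_neg]

private lemma zpow_congr_of_pow_eq_one {a : W} {N : ℕ} (h : a ^ N = 1) {p q : ℤ}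
    (hd : (N : ℤ) ∣ p - q) : a ^ p = a ^ q := by
  obtain ⟨r, hr⟩ := hd
  have hp : p = q + (N : ℤ) * r := by omega
  rw [hp, zpow_add, zpow_mul, zpow_natCast, h, one_zpow, mul_one]

private lemma dE_mul_dE (a : W) (p q : ℤ) : dE a p * dE a q = dE a (p + q) := by
  simp only [dE, ← map_mul, ← zpow_add]

private lemma dE_mul_dF (a t : W) (p q : ℤ) : dE a p * dF a t q = dF a t (p + q) := by
  simp only [dE, dF, ← map_mul, ← mul_assoc, ← zpow_add]

private lemma dF_mul_dE {a t : W} (ht2 : t * t = 1) (hconj : t * a = a⁻¹ * t) (p q : ℤ) :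
    dF a t p * dE a q = dF a t (p - q) := by
  simp only [dE, dF, ← map_mul]
  congr 1
  rw [mul_assoc, t_mul_zpow ht2 hconj, ← mul_assoc, ← zpow_add, sub_eq_add_neg]

private lemma dF_mul_dF {a t : W} (ht2 : t * t = 1) (hconj : t * a = a⁻¹ * t) (p q : ℤ) :
    dF a t p * dF a t q = dE a (p - q) := by
  simp only [dE, dF, ← map_mul]
  congr 1
  rw [mul_assoc, ← mul_assoc t, t_mul_zpow ht2 hconj, mul_assoc, ht2, mul_one,
    ← zpow_add, sub_eq_add_neg]

end DihedralAux
section MainAux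

private lemma intIcc_split' {M : Type*} [AddCommMonoid M] (g : ℤ → M) (a b b' c : ℤ)
    (hb : b' = b + 1) (h1 : a ≤ b + 1) (h2 : b ≤ c) :
    ∑ n ∈ Icc a c, g n = (∑ n ∈ Icc a b, g n) + ∑ n ∈ Icc b' c, g n := by
  subst hb; exact intIcc_split g a b c h1 h2

end MainAux

/-- In the dihedral group of order `4m` (`m ≥ 2`) with `A = {s,t,sts}`,
in `ℤW` one has `d_t · d_t = (m-1)(1 + d_A + d_s + d_s̄) + (m-2)(d_t + d_t̄)`, where
`d_s = s`, `d_s̄ = w₀ s`, `d_A = w₀`, `d_t = Σ_{k=1}^{m-1} ((st)^k + (ts)^{k-1} t)` and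
`d_t̄ = Σ_{k=1}^{m-1} ((st)^k s + (ts)^k)`. -/
theorem dihedral_dt_squared {B W : Type*} [Group W] {M : CoxeterMatrix B}
    (cs : CoxeterSystem M W) (i j : B) (hij : i ≠ j) (hB : ∀ k : B, k = i ∨ k = j)
    (m : ℕ) (hm : 2 ≤ m) (hM : M i j = 2 * m)
    (s t : W) (hs : s = cs.simple i) (ht : t = cs.simple j)
    (w₀ : W) (hw₀ : w₀ = (s * t) ^ m)
    (ds dsbar dA dt dtbar : MonoidAlgebra ℤ W)
    (hds : ds = MonoidAlgebra.of ℤ W s)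
    (hdsbar : dsbar = MonoidAlgebra.of ℤ W (w₀ * s))
    (hdA : dA = MonoidAlgebra.of ℤ W w₀)
    (hdt : dt = ∑ k ∈ Finset.Icc 1 (m - 1),
      (MonoidAlgebra.of ℤ W ((s * t) ^ k) + MonoidAlgebra.of ℤ W ((t * s) ^ (k - 1) * t)))
    (hdtbar : dtbar = ∑ k ∈ Finset.Icc 1 (m - 1),
      (MonoidAlgebra.of ℤ W ((s * t) ^ k * s) + MonoidAlgebra.of ℤ W ((t * s) ^ k))) :
    dt * dt = ((m : ℤ) - 1) • (1 + dA + ds + dsbar) + ((m : ℤ) - 2) • (dt + dtbar) := by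
  have hm1 : (1:ℕ) ≤ m := by omega
  -- basic group facts
  have hs2 : s * s = 1 := by rw [hs]; exact cs.simple_mul_simple_self i
  have ht2 : t * t = 1 := by rw [ht]; exact cs.simple_mul_simple_self j
  have haM : (s * t) ^ (2 * m) = 1 := by
    rw [← hM, hs, ht]; exact cs.simple_mul_simple_pow i j
  have hsinv : s⁻¹ = s := inv_eq_of_mul_eq_one_right hs2
  have htinv : t⁻¹ = t := inv_eq_of_mul_eq_one_right ht2
  have hainv : (s * t)⁻¹ = t * s := by rw [mul_inv_rev, hsinv, htinv]
  have hconj : t * (s * t) = (s * t)⁻¹ * t := by rw [hainv]; exact (mul_assoc t s t).symm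
  set a : W := s * t with ha
  have hsat : s = a * t := by rw [ha, mul_assoc, ht2, mul_one]
  have hper : ∀ p q : ℤ, 2 * (m:ℤ) ∣ p - q → a ^ p = a ^ q := by
    intro p q h
    refine zpow_congr_of_pow_eq_one haM ?_
    have h2 : ((2 * m : ℕ) : ℤ) = 2 * (m:ℤ) := by push_cast; ring
    rw [h2]; exact h
  have hEcongr : ∀ p q : ℤ, 2 * (m:ℤ) ∣ p - q → dE a p = dE a q := by
    intro p q h; unfold dE; rw [hper p q h]
  have hFcongr : ∀ p q : ℤ, 2 * (m:ℤ) ∣ p - q → dF a t p = dF a t q := by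
    intro p q h; unfold dF; rw [hper p q h]
  have hNpos : (0:ℤ) < 2 * (m:ℤ) := by omega
  -- rewriting dt and dtbar
  have hdtE : dt = ∑ k ∈ Icc (1:ℤ) ((m:ℤ) - 1), (dE a k + dF a t (1 - k)) := by
    rw [hdt]
    have step1 : ∀ k ∈ Icc 1 (m-1),
        MonoidAlgebra.of ℤ W (a ^ k) + MonoidAlgebra.of ℤ W ((t * s) ^ (k-1) * t)
        = dE a (k:ℤ) + dF a t (1 - (k:ℤ)) := by
      intro k hk
      simp only [mem_Icc] at hk
      congr 1
      · unfold dE; rw [zpow_natCast]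
      · unfold dF
        congr 1
        have h3 : (t * s) ^ (k-1) = a ^ (1 - (k:ℤ)) := by
          rw [← hainv, ← zpow_natCast (a⁻¹) (k-1), inv_zpow']
          congr 1
          omega
        rw [h3]
    rw [Finset.sum_congr rfl step1]
    rw [show (Icc (1:ℤ) ((m:ℤ)-1)) = Icc ((1:ℕ):ℤ) (((m-1:ℕ)):ℤ) by congr 1 <;> omega]
    exact sum_nat_Icc_cast (fun x => dE a x + dF a t (1 - x)) 1 (m-1)
  have hdtbarE : dtbar = ∑ k ∈ Icc (1:ℤ) ((m:ℤ) - 1), (dF a t (k + 1) + dE a (-k)) := by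
    rw [hdtbar]
    have step1 : ∀ k ∈ Icc 1 (m-1),
        MonoidAlgebra.of ℤ W (a ^ k * s) + MonoidAlgebra.of ℤ W ((t * s) ^ k)
        = dF a t ((k:ℤ) + 1) + dE a (-(k:ℤ)) := by
      intro k hk
      simp only [mem_Icc] at hk
      congr 1
      · unfold dF
        congr 1
        rw [hsat, ← mul_assoc, ← pow_succ]
        congr 1
        rw [← zpow_natCast]
        try congr 1
        try omega
      · unfold dE
        congr 1
        rw [← hainv, ← zpow_natCast (a⁻¹) k, inv_zpow']
        try congr 1
        try omega
    rw [Finset.sum_congr rfl step1]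
    rw [show (Icc (1:ℤ) ((m:ℤ)-1)) = Icc ((1:ℕ):ℤ) (((m-1:ℕ)):ℤ) by congr 1 <;> omega]
    exact sum_nat_Icc_cast (fun x => dF a t (x + 1) + dE a (-x)) 1 (m-1)
  -- constants
  have hone : (1 : MonoidAlgebra ℤ W) = dE a 0 := by
    unfold dE; rw [zpow_zero, map_one]
  have hds' : ds = dF a t 1 := by
    have h3 : a ^ (1:ℤ) * t = s := by rw [zpow_one, ha, mul_assoc, ht2, mul_one]
    rw [hds]; unfold dF; rw [h3]
  have hdA' : dA = dE a (m:ℤ) := by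
    rw [hdA, hw₀]; unfold dE; rw [zpow_natCast]
  have hdsbar' : dsbar = dF a t ((m:ℤ) + 1) := by
    rw [hdsbar, hw₀]; unfold dF
    congr 1
    rw [hsat, ← mul_assoc, ← pow_succ]
    congr 1
    rw [← zpow_natCast]
    try congr 1
    try omega
  -- big sums
  have hEshift : ∀ c : ℤ, ∑ n ∈ Icc (0:ℤ) (2*(m:ℤ)-1), dE a (c + n)
      = ∑ n ∈ Icc (0:ℤ) (2*(m:ℤ)-1), dE a n :=
    fun c => sum_period_shift (dE a) (2*(m:ℤ)) hNpos hEcongr c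
  have hFrefl : ∀ c : ℤ, ∑ n ∈ Icc (0:ℤ) (2*(m:ℤ)-1), dF a t (c - n)
      = ∑ n ∈ Icc (0:ℤ) (2*(m:ℤ)-1), dF a t n :=
    fun c => sum_period_reflect (dF a t) (2*(m:ℤ)) hNpos hFcongr c
  have hEZ : ∀ p : ℤ, dE a p * (∑ n ∈ Icc (0:ℤ) (2*(m:ℤ)-1), dE a n)
      = ∑ n ∈ Icc (0:ℤ) (2*(m:ℤ)-1), dE a n := by
    intro p
    rw [Finset.mul_sum]
    simp only [dE_mul_dE]
    exact hEshift p
  have hFZ : ∀ p : ℤ, dF a t p * (∑ n ∈ Icc (0:ℤ) (2*(m:ℤ)-1), dE a n)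
      = ∑ n ∈ Icc (0:ℤ) (2*(m:ℤ)-1), dF a t n := by
    intro p
    rw [Finset.mul_sum]
    simp only [dF_mul_dE ht2 hconj]
    exact hFrefl p
  have hcard : ∀ x : MonoidAlgebra ℤ W, (Icc (1:ℤ) ((m:ℤ)-1)).card • x = ((m:ℤ) - 1) • x := by
    intro x
    rw [Int.card_Icc]
    rw [show ((m:ℤ) - 1 + 1 - 1) = (m:ℤ) - 1 by ring]
    rw [← natCast_zsmul, Int.toNat_of_nonneg (by omega)]
  have hdtZ : dt * (∑ n ∈ Icc (0:ℤ) (2*(m:ℤ)-1), dE a n)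
      = ((m:ℤ) - 1) • ((∑ n ∈ Icc (0:ℤ) (2*(m:ℤ)-1), dE a n)
          + ∑ n ∈ Icc (0:ℤ) (2*(m:ℤ)-1), dF a t n) := by
    rw [hdtE, Finset.sum_mul]
    simp only [add_mul, hEZ, hFZ]
    rw [Finset.sum_const, hcard]
  have hstepA : dt * dE a (m:ℤ) = dtbar := by
    rw [hdtE, Finset.sum_mul, hdtbarE]
    refine Finset.sum_nbij' (fun k => (m:ℤ) - k) (fun k => (m:ℤ) - k) ?_ ?_ ?_ ?_ ?_
    · intro x hx; simp only [mem_Icc] at *; omega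
    · intro x hx; simp only [mem_Icc] at *; omega
    · intro x _; omega
    · intro x _; omega
    · intro k hk
      simp only [mem_Icc] at hk
      rw [add_mul, dE_mul_dE, dF_mul_dE ht2 hconj]
      rw [hEcongr (k + (m:ℤ)) (-((m:ℤ) - k)) ⟨1, by ring⟩,
        hFcongr (1 - k - (m:ℤ)) (((m:ℤ) - k) + 1) ⟨-1, by ring⟩]
      exact add_comm _ _
  -- splitting the full sums
  have hZfull : (∑ n ∈ Icc (0:ℤ) (2*(m:ℤ)-1), dE a n)
      = (∑ k ∈ Icc (1:ℤ) ((m:ℤ)-1), dE a (-k)) + dE a 0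
        + (∑ k ∈ Icc (1:ℤ) ((m:ℤ)-1), dE a k) + dE a (m:ℤ) := by
    rw [← sum_window (dE a) (2*(m:ℤ)) hNpos hEcongr (1 - (m:ℤ))]
    rw [show (1 - (m:ℤ) + 2*(m:ℤ) - 1) = (m:ℤ) by ring]
    rw [intIcc_split' (dE a) (1-(m:ℤ)) (-1) 0 (m:ℤ) (by ring) (by omega) (by omega)]
    rw [intIcc_split' (dE a) 0 0 1 (m:ℤ) (by ring) (by omega) (by omega)]
    rw [intIcc_split' (dE a) 1 ((m:ℤ)-1) (m:ℤ) (m:ℤ) (by ring) (by omega) (by omega)]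
    rw [Finset.Icc_self, Finset.sum_singleton, Finset.Icc_self, Finset.sum_singleton]
    have hneg : (∑ n ∈ Icc (1-(m:ℤ)) (-1:ℤ), dE a n)
        = ∑ k ∈ Icc (1:ℤ) ((m:ℤ)-1), dE a (-k) := by
      refine Finset.sum_nbij' (fun n => -n) (fun n => -n) ?_ ?_ ?_ ?_ ?_
      · intro x hx; simp only [mem_Icc] at *; omega
      · intro x hx; simp only [mem_Icc] at *; omega
      · intro x _; omega
      · intro x _; omega
      · intro x _; rw [neg_neg]
    rw [hneg]
    abel
  have hZtfull : (∑ n ∈ Icc (0:ℤ) (2*(m:ℤ)-1), dF a t n)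
      = (∑ k ∈ Icc (1:ℤ) ((m:ℤ)-1), dF a t (1 - k)) + dF a t 1
        + (∑ k ∈ Icc (1:ℤ) ((m:ℤ)-1), dF a t (k + 1)) + dF a t ((m:ℤ)+1) := by
    rw [← sum_window (dF a t) (2*(m:ℤ)) hNpos hFcongr (2 - (m:ℤ))]
    rw [show (2 - (m:ℤ) + 2*(m:ℤ) - 1) = (m:ℤ) + 1 by ring]
    rw [intIcc_split' (dF a t) (2-(m:ℤ)) 0 1 ((m:ℤ)+1) (by ring) (by omega) (by omega)]
    rw [intIcc_split' (dF a t) 1 1 2 ((m:ℤ)+1) (by ring) (by omega) (by omega)]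
    rw [intIcc_split' (dF a t) 2 (m:ℤ) ((m:ℤ)+1) ((m:ℤ)+1) (by ring) (by omega) (by omega)]
    rw [Finset.Icc_self, Finset.sum_singleton, Finset.Icc_self, Finset.sum_singleton]
    have h1 : (∑ n ∈ Icc (2-(m:ℤ)) (0:ℤ), dF a t n)
        = ∑ k ∈ Icc (1:ℤ) ((m:ℤ)-1), dF a t (1 - k) := by
      refine Finset.sum_nbij' (fun n => 1 - n) (fun n => 1 - n) ?_ ?_ ?_ ?_ ?_
      · intro x hx; simp only [mem_Icc] at *; omega
      · intro x hx; simp only [mem_Icc] at *; omega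
      · intro x _; omega
      · intro x _; omega
      · intro x _; congr 1; ring
    have h2 : (∑ n ∈ Icc (2:ℤ) (m:ℤ), dF a t n)
        = ∑ k ∈ Icc (1:ℤ) ((m:ℤ)-1), dF a t (k + 1) := by
      refine Finset.sum_nbij' (fun n => n - 1) (fun n => n + 1) ?_ ?_ ?_ ?_ ?_
      · intro x hx; simp only [mem_Icc] at *; omega
      · intro x hx; simp only [mem_Icc] at *; omega
      · intro x _; omega
      · intro x _; omega
      · intro x _; congr 1; ring
    rw [h1, h2]
    abel
  -- step D : dt * dt = dt * (P + P')
  have hswapF : (∑ k ∈ Icc (1:ℤ) ((m:ℤ)-1), ∑ l ∈ Icc (1:ℤ) ((m:ℤ)-1), dF a t (k + (1 - l)))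
      = ∑ k ∈ Icc (1:ℤ) ((m:ℤ)-1), ∑ l ∈ Icc (1:ℤ) ((m:ℤ)-1), dF a t (1 - k - -l) := by
    rw [Finset.sum_comm]
    refine Finset.sum_congr rfl fun k _ => Finset.sum_congr rfl fun l _ => ?_
    congr 1; ring
  have hswapE : (∑ k ∈ Icc (1:ℤ) ((m:ℤ)-1), ∑ l ∈ Icc (1:ℤ) ((m:ℤ)-1), dE a (1 - k - (1 - l)))
      = ∑ k ∈ Icc (1:ℤ) ((m:ℤ)-1), ∑ l ∈ Icc (1:ℤ) ((m:ℤ)-1), dE a (k + -l) := by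
    rw [Finset.sum_comm]
    refine Finset.sum_congr rfl fun k _ => Finset.sum_congr rfl fun l _ => ?_
    congr 1; ring
  have hstepD : dt * dt = dt * ((∑ k ∈ Icc (1:ℤ) ((m:ℤ)-1), dE a k)
      + ∑ k ∈ Icc (1:ℤ) ((m:ℤ)-1), dE a (-k)) := by
    rw [hdtE]
    rw [mul_add, Finset.sum_mul_sum, Finset.sum_mul_sum, Finset.sum_mul_sum]
    simp only [add_mul, mul_add, dE_mul_dE, dE_mul_dF, dF_mul_dE ht2 hconj,
      dF_mul_dF ht2 hconj, Finset.sum_add_distrib]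
    rw [hswapF, hswapE]
    abel
  -- assembly
  have hKZ : (∑ k ∈ Icc (1:ℤ) ((m:ℤ)-1), dE a k) + (∑ k ∈ Icc (1:ℤ) ((m:ℤ)-1), dE a (-k))
      = (∑ n ∈ Icc (0:ℤ) (2*(m:ℤ)-1), dE a n) - dE a 0 - dE a (m:ℤ) := by
    rw [hZfull]; abel
  have hdt_split : dt = (∑ k ∈ Icc (1:ℤ) ((m:ℤ)-1), dE a k)
      + ∑ k ∈ Icc (1:ℤ) ((m:ℤ)-1), dF a t (1 - k) := by
    rw [hdtE, Finset.sum_add_distrib]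
  have hdtbar_split : dtbar = (∑ k ∈ Icc (1:ℤ) ((m:ℤ)-1), dF a t (k + 1))
      + ∑ k ∈ Icc (1:ℤ) ((m:ℤ)-1), dE a (-k) := by
    rw [hdtbarE, Finset.sum_add_distrib]
  have hZZt : (∑ n ∈ Icc (0:ℤ) (2*(m:ℤ)-1), dE a n) + (∑ n ∈ Icc (0:ℤ) (2*(m:ℤ)-1), dF a t n)
      = (dE a 0 + dE a (m:ℤ) + dF a t 1 + dF a t ((m:ℤ)+1)) + (dt + dtbar) := by
    rw [hZfull, hZtfull, hdt_split, hdtbar_split]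
    abel
  calc dt * dt
      = dt * ((∑ k ∈ Icc (1:ℤ) ((m:ℤ)-1), dE a k)
          + ∑ k ∈ Icc (1:ℤ) ((m:ℤ)-1), dE a (-k)) := hstepD
    _ = dt * ((∑ n ∈ Icc (0:ℤ) (2*(m:ℤ)-1), dE a n) - dE a 0 - dE a (m:ℤ)) := by rw [hKZ]
    _ = dt * (∑ n ∈ Icc (0:ℤ) (2*(m:ℤ)-1), dE a n) - dt * dE a 0 - dt * dE a (m:ℤ) := by
        rw [mul_sub, mul_sub]
    _ = ((m:ℤ) - 1) • ((∑ n ∈ Icc (0:ℤ) (2*(m:ℤ)-1), dE a n)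
          + ∑ n ∈ Icc (0:ℤ) (2*(m:ℤ)-1), dF a t n) - dt - dtbar := by
        rw [hdtZ, hstepA, ← hone, mul_one]
    _ = ((m:ℤ) - 1) • ((dE a 0 + dE a (m:ℤ) + dF a t 1 + dF a t ((m:ℤ)+1)) + (dt + dtbar))
          - (dt + dtbar) := by
        rw [hZZt]; abel
    _ = ((m:ℤ) - 1) • (dE a 0 + dE a (m:ℤ) + dF a t 1 + dF a t ((m:ℤ)+1))
          + ((m:ℤ) - 2) • (dt + dtbar) := by
        module
    _ = ((m : ℤ) - 1) • (1 + dA + ds + dsbar) + ((m : ℤ) - 2) • (dt + dtbar) := by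
        rw [hone, hdA', hds', hdsbar']
end
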